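/- arXiv:2502.11391 — 3 statements merged into one kernel-verified Lean document; each statement's English description precedes it below -/
import Mathlib

section
/- Let G be a matching covered bipartite graph with at least four vertices. If G does not contain a conformal odd theta subgraph, then G has a Hamiltonian cycle. -/
/-- `M` is a perfect matching of `G`, regarded as a set of edges: every edge of `M` is an
edge of `G` and every vertex lies in exactly one edge of `M`. -/
def IsPM {V : Type*} (G : SimpleGraph V) (M : Set (Sym2 V)) : Prop :=
  M ⊆ G.edgeSet ∧ ∀ w : V, ∃! e, e ∈ M ∧ w ∈ e

/-- A graph is matchable if it has a perfect matching. -/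
def Matchable {V : Type*} (G : SimpleGraph V) : Prop :=
  ∃ M, IsPM G M

/-- A global forcing set of `G`: a set `S` of edges of `G` distinguishing all
perfect matchings of `G`. -/
def IsGlobalForcingSet {V : Type*} (G : SimpleGraph V) (S : Set (Sym2 V)) : Prop :=
  S ⊆ G.edgeSet ∧
    ∀ M₁ M₂, IsPM G M₁ → IsPM G M₂ → M₁ ≠ M₂ → S ∩ M₁ ≠ S ∩ M₂

/-- The global forcing number: the minimum cardinality of a global forcing set. -/
noncomputable def gf {V : Type*} (G : SimpleGraph V) : ℕ :=
  sInf {n | ∃ S, IsGlobalForcingSet G S ∧ S.ncard = n}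

/-- An anti-forcing set of a perfect matching `M` of `G`: a set `S` of edges of `G`
disjoint from `M` such that `M` is the unique perfect matching of `G - S`. -/
def IsAntiForcingSet {V : Type*} (G : SimpleGraph V) (M S : Set (Sym2 V)) : Prop :=
  S ⊆ G.edgeSet ∧ S ∩ M = ∅ ∧ IsPM (G.deleteEdges S) M ∧
    ∀ M', IsPM (G.deleteEdges S) M' → M' = M

/-- The anti-forcing number of a perfect matching `M` of `G`. -/
noncomputable def af {V : Type*} (G : SimpleGraph V) (M : Set (Sym2 V)) : ℕ :=
  sInf {n | ∃ S, IsAntiForcingSet G M S ∧ S.ncard = n}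

/-- The maximum anti-forcing number of `G`. -/
noncomputable def Af {V : Type*} (G : SimpleGraph V) : ℕ :=
  sSup {n | ∃ M, IsPM G M ∧ af G M = n}

/-- A connected graph with at least one edge is matching covered if every edge lies
in some perfect matching. -/
def MatchingCovered {V : Type*} (G : SimpleGraph V) : Prop :=
  G.Connected ∧ G.edgeSet.Nonempty ∧ ∀ e ∈ G.edgeSet, ∃ M, IsPM G M ∧ e ∈ M

/-- `G` contains a conformal odd theta subgraph: a conformal subgraph consisting of two
vertices joined by three pairwise internally vertex-disjoint paths, each of odd length
at least `3`. -/
def HasConformalOddTheta {V : Type*} (G : SimpleGraph V) : Prop :=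
  ∃ (u v : V) (P₁ P₂ P₃ : G.Walk u v),
    P₁.IsPath ∧ P₂.IsPath ∧ P₃.IsPath ∧
    Odd P₁.length ∧ Odd P₂.length ∧ Odd P₃.length ∧
    3 ≤ P₁.length ∧ 3 ≤ P₂.length ∧ 3 ≤ P₃.length ∧
    (∀ w, w ∈ P₁.support → w ∈ P₂.support → w = u ∨ w = v) ∧
    (∀ w, w ∈ P₁.support → w ∈ P₃.support → w = u ∨ w = v) ∧
    (∀ w, w ∈ P₂.support → w ∈ P₃.support → w = u ∨ w = v) ∧
    Matchable (SimpleGraph.induce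
      {x : V | x ∉ P₁.support ∧ x ∉ P₂.support ∧ x ∉ P₃.support} G)



section Aux
variable {V : Type*} {G : SimpleGraph V}

/-- Partner function of a perfect matching. -/
lemma thm14_partner {M : Set (Sym2 V)} (hM : IsPM G M) :
    ∃ p : V → V, (∀ v, s(v, p v) ∈ M) ∧ (∀ v, p (p v) = v) ∧ (∀ v, p v ≠ v) ∧
      (∀ v e, e ∈ M → v ∈ e → e = s(v, p v)) := by
  classical
  have h := fun v => hM.2 v
  choose e hP hU using h
  refine ⟨fun v => Sym2.Mem.other (hP v).2, ?_, ?_, ?_, ?_⟩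
  · intro v
    have := Sym2.other_spec (hP v).2
    rw [this]; exact (hP v).1
  · intro v
    set p : V → V := fun v => Sym2.Mem.other (hP v).2 with hp
    have h1 : s(v, p v) ∈ M := by
      have := Sym2.other_spec (hP v).2
      rw [this]; exact (hP v).1
    have hpv : p v ∈ s(v, p v) := Sym2.mem_mk_right _ _
    have h2 : s(v, p v) = e (p v) := hU (p v) _ ⟨h1, hpv⟩
    have h3 : s(p v, p (p v)) = e (p v) := Sym2.other_spec (hP (p v)).2
    have h4 : s(p v, p (p v)) = s(v, p v) := by rw [h3, ← h2]
    rw [Sym2.eq_iff] at h4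
    rcases h4 with ⟨h5, h6⟩ | ⟨h5, h6⟩
    · -- p v = v : contradiction with edge being non-diagonal
      exfalso
      have hedge : s(v, p v) ∈ G.edgeSet := hM.1 h1
      rw [G.mem_edgeSet] at hedge
      exact hedge.ne' h5
    · exact h6
  · intro v
    intro hv
    have h1 : s(v, Sym2.Mem.other (hP v).2) ∈ M := by
      have := Sym2.other_spec (hP v).2
      rw [this]; exact (hP v).1
    have hedge : s(v, Sym2.Mem.other (hP v).2) ∈ G.edgeSet := hM.1 h1
    rw [G.mem_edgeSet] at hedge
    exact hedge.ne' hv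
  · intro v e' he' hve'
    have h2 : e' = e v := hU v e' ⟨he', hve'⟩
    rw [h2, ← Sym2.other_spec (hP v).2]

/-- An alternating sequence: apply `f` at even steps, `g` at odd steps. -/
def thm14_altSeq (f g : V → V) (v : V) : ℕ → V
  | 0 => v
  | i + 1 => (if Even i then f else g) (thm14_altSeq f g v i)

lemma thm14_altSeq_step (f g : V → V) (v : V) (i : ℕ) :
    thm14_altSeq f g v (i + 1) = (if Even i then f else g) (thm14_altSeq f g v i) := rfl

section AltSeq
variable {f g : V → V} (hf : Function.Involutive f) (hg : Function.Involutive g)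

include hf hg in
lemma thm14_altSeq_back {v : V} {i : ℕ} :
    thm14_altSeq f g v i = (if Even i then f else g) (thm14_altSeq f g v (i + 1)) := by
  rw [thm14_altSeq_step]
  by_cases h : Even i <;> simp [h, hf _, hg _]

include hf hg in
lemma thm14_altSeq_desc {v : V} {d : ℕ} (hd : Even d) :
    ∀ a, thm14_altSeq f g v a = thm14_altSeq f g v (a + d) →
      thm14_altSeq f g v 0 = thm14_altSeq f g v d := by
  intro a
  induction a with
  | zero => intro h; simpa using h
  | succ a ih =>
    intro h
    apply ih
    have h1 : thm14_altSeq f g v a = (if Even a then f else g) (thm14_altSeq f g v (a + 1)) :=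
      thm14_altSeq_back hf hg
    have h2 : thm14_altSeq f g v (a + d) =
        (if Even (a + d) then f else g) (thm14_altSeq f g v (a + d + 1)) :=
      thm14_altSeq_back hf hg
    have hpar : Even (a + d) ↔ Even a := by
      simp [Nat.even_add, hd]
    have h3 : (if Even (a + d) then f else g) = (if Even a then f else g) := by
      by_cases hc : Even a
      · rw [if_pos hc, if_pos (hpar.mpr hc)]
      · rw [if_neg hc, if_neg (fun hh => hc (hpar.mp hh))]
    rw [h1, h2, h3]
    have h4 : a + d + 1 = a + 1 + d := by omega
    rw [h4, h]

include hf hg in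
lemma thm14_altSeq_inj_odd (hf' : ∀ x, f x ≠ x) (hg' : ∀ x, g x ≠ x) {v : V} :
    ∀ d, Odd d → ∀ a, thm14_altSeq f g v a ≠ thm14_altSeq f g v (a + d) := by
  intro d
  induction d using Nat.strong_induction_on with
  | _ d ih =>
    intro hd a heq
    rcases Nat.lt_or_ge d 3 with h3 | h3
    · interval_cases d
      · exact absurd hd (by simp)
      · rw [thm14_altSeq_step] at heq
        by_cases hc : Even a
        · rw [if_pos hc] at heq; exact hf' _ heq.symm
        · rw [if_neg hc] at heq; exact hg' _ heq.symm
      · exact absurd hd (by simp [Nat.odd_iff])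
    · -- move inward
      have h1 : thm14_altSeq f g v (a + 1) = thm14_altSeq f g v (a + d - 1) := by
        have ha1 : thm14_altSeq f g v (a + 1)
            = (if Even a then f else g) (thm14_altSeq f g v a) := thm14_altSeq_step f g v a
        have hb : thm14_altSeq f g v (a + d - 1)
            = (if Even (a + d - 1) then f else g) (thm14_altSeq f g v (a + d)) := by
          have : a + d - 1 + 1 = a + d := by omega
          have hb' := thm14_altSeq_back hf hg (v := v) (i := a + d - 1)
          rw [this] at hb'
          exact hb'
        have hpar : Even (a + d - 1) ↔ Even a := by
          rcases hd with ⟨k, hk⟩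
          subst hk
          have : a + (2 * k + 1) - 1 = a + 2 * k := by omega
          rw [this]
          simp [Nat.even_add]
        have h3' : (if Even (a + d - 1) then f else g) = (if Even a then f else g) := by
          by_cases hc : Even a
          · rw [if_pos hc, if_pos (hpar.mpr hc)]
          · rw [if_neg hc, if_neg (fun hh => hc (hpar.mp hh))]
        rw [ha1, hb, h3', heq]
      have h2 : a + d - 1 = (a + 1) + (d - 2) := by omega
      rw [h2] at h1
      exact ih (d - 2) (by omega) (by rcases hd with ⟨k, hk⟩; exact ⟨k - 1, by omega⟩) (a + 1) h1
end AltSeq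
end Aux

section Aux2
variable {V : Type*} {G : SimpleGraph V}

/-- Build a walk from a vertex sequence. -/
def thm14_walkOf (G : SimpleGraph V) (f : ℕ → V) :
    ∀ n, (∀ i, i < n → G.Adj (f i) (f (i + 1))) → G.Walk (f 0) (f n)
  | 0, _ => SimpleGraph.Walk.nil
  | n + 1, h =>
    (thm14_walkOf G f n (fun i hi => h i (Nat.lt_succ_of_lt hi))).concat
      (h n (Nat.lt_succ_self n))

lemma thm14_walkOf_length (f : ℕ → V) (n : ℕ) (h : ∀ i, i < n → G.Adj (f i) (f (i + 1))) :
    (thm14_walkOf G f n h).length = n := by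
  induction n with
  | zero => rfl
  | succ n ih =>
    rw [thm14_walkOf, SimpleGraph.Walk.length_concat, ih]

lemma thm14_walkOf_support (f : ℕ → V) (n : ℕ) (h : ∀ i, i < n → G.Adj (f i) (f (i + 1))) :
    (thm14_walkOf G f n h).support = (List.range (n + 1)).map f := by
  induction n with
  | zero => rfl
  | succ n ih =>
    rw [thm14_walkOf, SimpleGraph.Walk.support_concat, ih,
      List.range_succ (n := n + 1), List.map_append]
    simp

lemma thm14_walkOf_edges (f : ℕ → V) (n : ℕ) (h : ∀ i, i < n → G.Adj (f i) (f (i + 1))) :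
    (thm14_walkOf G f n h).edges = (List.range n).map (fun i => s(f i, f (i + 1))) := by
  induction n with
  | zero => rfl
  | succ n ih =>
    rw [thm14_walkOf, SimpleGraph.Walk.edges_concat, ih, List.concat_eq_append,
      List.range_succ (n := n), List.map_append]
    simp

lemma thm14_walkOf_mem_support (f : ℕ → V) (n : ℕ) (h : ∀ i, i < n → G.Adj (f i) (f (i + 1)))
    (x : V) : x ∈ (thm14_walkOf G f n h).support ↔ ∃ i, i ≤ n ∧ f i = x := by
  rw [thm14_walkOf_support]
  simp only [List.mem_map, List.mem_range]
  constructor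
  · rintro ⟨i, hi, rfl⟩; exact ⟨i, by omega, rfl⟩
  · rintro ⟨i, hi, rfl⟩; exact ⟨i, by omega, rfl⟩

lemma thm14_walkOf_isPath (f : ℕ → V) (n : ℕ) (h : ∀ i, i < n → G.Adj (f i) (f (i + 1)))
    (hinj : ∀ i ≤ n, ∀ j ≤ n, f i = f j → i = j) : (thm14_walkOf G f n h).IsPath := by
  rw [SimpleGraph.Walk.isPath_def, thm14_walkOf_support]
  refine List.Nodup.map_on ?_ List.nodup_range
  intro i hi j hj hij
  exact hinj i (by simpa using Nat.lt_succ_iff.mp (List.mem_range.mp hi))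
    j (by simpa using Nat.lt_succ_iff.mp (List.mem_range.mp hj)) hij

lemma thm14_walkOf_isCycle (f : ℕ → V) (n : ℕ) (h : ∀ i, i < n → G.Adj (f i) (f (i + 1)))
    (h3 : 3 ≤ n) (hcl : f n = f 0)
    (hinj : ∀ i < n, ∀ j < n, f i = f j → i = j) :
    ((thm14_walkOf G f n h).copy rfl hcl).IsCycle := by
  have key : ∀ i j, i < j → j < n → s(f i, f (i + 1)) = s(f j, f (j + 1)) → False := by
    intro i j hij hjn heq
    rw [Sym2.eq_iff] at heq
    rcases heq with ⟨h1, _⟩ | ⟨h1, h2⟩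
    · exact absurd (hinj i (by omega) j hjn h1) (by omega)
    · have hi1 : i + 1 = j := hinj (i + 1) (by omega) j hjn h2
      by_cases hc : j + 1 < n
      · have : i = j + 1 := hinj i (by omega) (j + 1) hc h1
        omega
      · have hj1 : j + 1 = n := by omega
        rw [hj1, hcl] at h1
        have : i = 0 := hinj i (by omega) 0 (by omega) h1
        omega
  rw [SimpleGraph.Walk.isCycle_def]
  refine ⟨?_, ?_, ?_⟩
  · rw [SimpleGraph.Walk.isTrail_def, SimpleGraph.Walk.edges_copy, thm14_walkOf_edges]
    refine List.Nodup.map_on ?_ List.nodup_range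
    intro i hi j hj hij
    rw [List.mem_range] at hi hj
    rcases Nat.lt_trichotomy i j with hlt | heq | hlt
    · exact absurd (key i j hlt hj hij) (by simp)
    · exact heq
    · exact absurd (key j i hlt hi hij.symm) (by simp)
  · intro hnil
    have := congrArg SimpleGraph.Walk.length hnil
    rw [SimpleGraph.Walk.length_copy, thm14_walkOf_length] at this
    simp at this
    omega
  · rw [SimpleGraph.Walk.support_copy, thm14_walkOf_support, List.range_succ_eq_map,
      List.map_cons, List.tail_cons, List.map_map]
    refine List.Nodup.map_on ?_ List.nodup_range
    intro i hi j hj hij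
    rw [List.mem_range] at hi hj
    simp only [Function.comp, Nat.succ_eq_add_one] at hij
    by_cases hc1 : i + 1 < n
    · by_cases hc2 : j + 1 < n
      · exact Nat.succ_injective (hinj _ hc1 _ hc2 hij)
      · have hj1 : j + 1 = n := by omega
        rw [hj1, hcl] at hij
        have : i + 1 = 0 := hinj _ hc1 0 (by omega) hij
        omega
    · by_cases hc2 : j + 1 < n
      · have hi1 : i + 1 = n := by omega
        rw [hi1, hcl] at hij
        have : j + 1 = 0 := (hinj 0 (by omega) _ hc2 hij).symm
        omega
      · omega
end Aux2


section Aux3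
variable {V : Type*} {G : SimpleGraph V}

/-- An `N`-alternating cycle of length `n` presented as a periodic sequence. -/
def thm14_IsACycle (G : SimpleGraph V) (N : Set (Sym2 V)) (n : ℕ) (c : ℕ → V) : Prop :=
  IsPM G N ∧ 4 ≤ n ∧ Even n ∧ (∀ i, c (i + n) = c i) ∧
    (∀ i, i < n → ∀ j, j < n → c i = c j → i = j) ∧
    (∀ i, G.Adj (c i) (c (i + 1))) ∧ (∀ i, Even i → s(c i, c (i + 1)) ∈ N)

lemma thm14_period_mul {c : ℕ → V} {n : ℕ} (hper : ∀ i, c (i + n) = c i) (i q : ℕ) :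
    c (i + n * q) = c i := by
  induction q with
  | zero => simp
  | succ q ih =>
    have : i + n * (q + 1) = (i + n * q) + n := by ring
    rw [this, hper, ih]

lemma thm14_cmod {c : ℕ → V} {n : ℕ} (hn : 0 < n) (hper : ∀ i, c (i + n) = c i) (i : ℕ) :
    c i = c (i % n) := by
  conv_lhs => rw [← Nat.mod_add_div i n]
  exact thm14_period_mul hper _ _

lemma thm14_cmod_iff {c : ℕ → V} {n : ℕ} (hn : 0 < n) (hper : ∀ i, c (i + n) = c i)
    (hinj : ∀ i, i < n → ∀ j, j < n → c i = c j → i = j) (i j : ℕ) :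
    c i = c j ↔ i % n = j % n := by
  constructor
  · intro h
    rw [thm14_cmod hn hper i, thm14_cmod hn hper j] at h
    exact hinj _ (Nat.mod_lt _ hn) _ (Nat.mod_lt _ hn) h
  · intro h
    rw [thm14_cmod hn hper i, thm14_cmod hn hper j, h]

lemma thm14_build {N : Set (Sym2 V)} (hN : IsPM G N) {n : ℕ} (h4 : 4 ≤ n) (heven : Even n)
    (z : ℕ → V) (hcl : z n = z 0)
    (hadj : ∀ i, i < n → G.Adj (z i) (z (i + 1)))
    (hinj : ∀ i, i < n → ∀ j, j < n → z i = z j → i = j)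
    (hmatch : ∀ i, i < n → Even i → s(z i, z (i + 1)) ∈ N) :
    thm14_IsACycle G N n (fun i => z (i % n)) := by
  have hn : 0 < n := by omega
  have hsucc : ∀ i : ℕ, i % n + 1 < n → (i + 1) % n = i % n + 1 := by
    intro i hi
    conv_lhs => rw [← Nat.mod_add_div i n]
    rw [Nat.add_right_comm, Nat.add_mul_mod_self_left]
    exact Nat.mod_eq_of_lt hi
  have hsucc' : ∀ i : ℕ, i % n = n - 1 → (i + 1) % n = 0 := by
    intro i hi
    conv_lhs => rw [← Nat.mod_add_div i n]
    rw [Nat.add_right_comm, Nat.add_mul_mod_self_left, hi]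
    have : n - 1 + 1 = n := by omega
    rw [this, Nat.mod_self]
  refine ⟨hN, h4, heven, ?_, ?_, ?_, ?_⟩
  · intro i; simp [Nat.add_mod_right]
  · intro i hi j hj h
    simp only [Nat.mod_eq_of_lt hi, Nat.mod_eq_of_lt hj] at h
    exact hinj i hi j hj h
  · intro i
    simp only []
    by_cases hc : i % n + 1 < n
    · rw [hsucc i hc]
      exact hadj _ (by omega)
    · have he : i % n = n - 1 := by have := Nat.mod_lt i hn; omega
      rw [hsucc' i he, he, ← hcl]
      have : n - 1 + 1 = n := by omega
      rw [← this]
      exact hadj _ (by omega)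
  · intro i hie
    simp only []
    obtain ⟨k, hk⟩ := heven
    have h2n : 2 ∣ n := ⟨k, by omega⟩
    have hpar : i % n % 2 = i % 2 := Nat.mod_mod_of_dvd i h2n
    have hie2 : i % 2 = 0 := Nat.even_iff.mp hie
    have hne : i % n % 2 = 0 := by omega
    have hlt : i % n < n := Nat.mod_lt i hn
    have hc : i % n + 1 < n := by
      rcases Nat.lt_or_ge (i % n + 1) n with h | h
      · exact h
      · exfalso
        have : i % n = n - 1 := by omega
        omega
    rw [hsucc i hc]
    exact hmatch _ (by omega) (Nat.even_iff.mpr hne)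

lemma thm14_crossing {S : Set V} :
    ∀ {a b : V}, G.Walk a b → a ∈ S → b ∉ S → ∃ x y, x ∈ S ∧ y ∉ S ∧ G.Adj x y := by
  intro a b w
  induction w with
  | nil => intro ha hb; exact absurd ha hb
  | @cons a c b hadj w ih =>
    intro ha hb
    by_cases hc : c ∈ S
    · exact ih hc hb
    · exact ⟨a, c, ha, hc, hadj⟩
end Aux3
section Aux4x
variable {V : Type*} {G : SimpleGraph V}

lemma thm14_reindex {N : Set (Sym2 V)} {n : ℕ} {c : ℕ → V}
    (hA : thm14_IsACycle G N n c) (j : ℕ) (hj : j < n) :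
    ∃ c', thm14_IsACycle G N n c' ∧ c' 0 = c j ∧
      (∀ i, c' i ∈ Set.range c) ∧ (∀ i, c i ∈ Set.range c') := by
  obtain ⟨hN, h4, heven, hper, hinj, hadj, hmatch⟩ := hA
  have hn : 0 < n := by omega
  have hmodiff := thm14_cmod_iff hn hper hinj
  by_cases hjpar : Even j
  · -- rotation
    refine ⟨fun i => c (j + i), ⟨hN, h4, heven, ?_, ?_, ?_, ?_⟩, by simp, ?_, ?_⟩
    · intro i
      show c (j + (i + n)) = c (j + i)
      have e : j + (i + n) = (j + i) + n := by ring
      rw [e, hper]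
    · intro a ha b hb h
      have h' : c (j + a) = c (j + b) := h
      rw [hmodiff] at h'
      have h'' : a ≡ b [MOD n] := Nat.ModEq.add_left_cancel' j h'
      have : a % n = b % n := h''
      rwa [Nat.mod_eq_of_lt ha, Nat.mod_eq_of_lt hb] at this
    · intro i
      show G.Adj (c (j + i)) (c (j + (i + 1)))
      have e : j + (i + 1) = (j + i) + 1 := by ring
      rw [e]
      exact hadj _
    · intro i hie
      show s(c (j + i), c (j + (i + 1))) ∈ N
      have e : j + (i + 1) = (j + i) + 1 := by ring
      rw [e]
      exact hmatch _ (Nat.even_add.mpr (by simp [hjpar, hie]))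
    · intro i; exact ⟨j + i, rfl⟩
    · intro i
      refine ⟨i % n + n - j, ?_⟩
      show c (j + (i % n + n - j)) = c i
      have h1 : j + (i % n + n - j) = i % n + n := by
        have := Nat.mod_lt i hn
        omega
      rw [h1, hper, ← thm14_cmod hn hper]
  · -- reflection
    obtain ⟨m, rfl⟩ : ∃ m, n = m + 1 := ⟨n - 1, by omega⟩
    set n := m + 1 with hnm
    have hj1 : 1 ≤ j := by
      rcases Nat.eq_zero_or_pos j with h | h
      · exfalso; exact hjpar (by simp [h])
      · exact h
    refine ⟨fun i => c (j + i * m), ⟨hN, h4, heven, ?_, ?_, ?_, ?_⟩, by simp, ?_, ?_⟩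
    · intro i
      show c (j + (i + n) * m) = c (j + i * m)
      have e : j + (i + n) * m = (j + i * m) + n * m := by rw [hnm]; ring
      rw [e, thm14_period_mul hper]
    · intro a ha b hb h
      have h0 : c (j + a * m) = c (j + b * m) := h
      rw [hmodiff] at h0
      have h' : (j + a * m) + (a + b) ≡ (j + b * m) + (a + b) [MOD n] :=
        Nat.ModEq.add_right _ h0
      have e1 : (j + a * m) + (a + b) = (b + a * n) + j := by rw [hnm]; ring
      have e2 : (j + b * m) + (a + b) = (a + b * n) + j := by rw [hnm]; ring
      rw [e1, e2] at h'
      have hx1 : b + a * n ≡ b [MOD n] := by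
        unfold Nat.ModEq
        simp [Nat.add_mul_mod_self_right]
      have hx2 : a + b * n ≡ a [MOD n] := by
        unfold Nat.ModEq
        simp [Nat.add_mul_mod_self_right]
      have h'' : b + j ≡ a + j [MOD n] :=
        (((Nat.ModEq.add_right j hx1).symm.trans h').trans (Nat.ModEq.add_right j hx2))
      have h3 : b ≡ a [MOD n] := Nat.ModEq.add_right_cancel' j h''
      have : b % n = a % n := h3
      rw [Nat.mod_eq_of_lt ha, Nat.mod_eq_of_lt hb] at this
      omega
    · intro i
      show G.Adj (c (j + i * m)) (c (j + (i + 1) * m))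
      have hX : 1 ≤ j + i * m := by omega
      have him : (i + 1) * m = i * m + m := by ring
      have e1 : j + (i + 1) * m = (j + i * m - 1) + n := by omega
      rw [e1, hper]
      have e2 : j + i * m = (j + i * m - 1) + 1 := by omega
      rw [e2]
      exact (hadj _).symm
    · intro i hie
      show s(c (j + i * m), c (j + (i + 1) * m)) ∈ N
      have hX : 1 ≤ j + i * m := by omega
      have hXodd : ¬ Even (j + i * m) := by
        intro h
        have hm : Even (i * m) := hie.mul_right m
        rcases h with ⟨s, hs⟩; rcases hm with ⟨t, ht⟩
        exact hjpar ⟨s - t, by omega⟩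
      have him : (i + 1) * m = i * m + m := by ring
      have e1 : j + (i + 1) * m = (j + i * m - 1) + n := by omega
      rw [e1, hper]
      have e2 : j + i * m = (j + i * m - 1) + 1 := by omega
      have hpar : Even (j + i * m - 1) := by
        rcases Nat.even_or_odd (j + i * m - 1) with h | h
        · exact h
        · exfalso
          apply hXodd
          rcases h with ⟨t, ht⟩
          exact ⟨t + 1, by omega⟩
      have hm := hmatch (j + i * m - 1) hpar
      rw [← e2] at hm
      rw [Sym2.eq_swap]
      exact hm
    · intro i; exact ⟨j + i * m, rfl⟩
    · intro i
      refine ⟨j + n - i % n, ?_⟩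
      show c (j + (j + n - i % n) * m) = c i
      have hi' := Nat.mod_lt i hn
      have hdm := Nat.mod_add_mod i n
      have hdm2 := Nat.mod_add_div i n
      set t := j + n - i % n with ht
      have x1 : ((j + t * m) + t) % n = j % n := by
        have e : (j + t * m) + t = j + t * n := by rw [hnm]; ring
        rw [e, Nat.add_mul_mod_self_right]
      have x2 : (i + t) % n = j % n := by
        have e : i + t = (j + n) + n * (i / n) := by omega
        rw [e, Nat.add_mul_mod_self_left, Nat.add_mod_right]
      have key : (j + t * m) % n = i % n := by
        have hmeq : (j + t * m) + t ≡ i + t [MOD n] := x1.trans x2.symm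
        exact Nat.ModEq.add_right_cancel' t hmeq
      rw [thm14_cmod hn hper (j + t * m), key, ← thm14_cmod hn hper]
end Aux4x
section Aux5
variable {V : Type*} {G : SimpleGraph V}

lemma thm14_newPM {N : Set (Sym2 V)} (hN : IsPM G N) (p : V → V)
    (hpN : ∀ v, s(v, p v) ∈ N) (hpu : ∀ v e, e ∈ N → v ∈ e → e = s(v, p v))
    {n₁ : ℕ} (h4 : 4 ≤ n₁) (heven : Even n₁) (z : ℕ → V) (hcl : z n₁ = z 0)
    (hadj : ∀ i, i < n₁ → G.Adj (z i) (z (i + 1)))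
    (hinj : ∀ i, i < n₁ → ∀ j, j < n₁ → z i = z j → i = j)
    (hclosed : ∀ x, (∀ i, i < n₁ → z i ≠ x) → ∀ i, i < n₁ → z i ≠ p x) :
    ∃ N', thm14_IsACycle G N' n₁ (fun i => z (i % n₁)) := by
  classical
  set N' : Set (Sym2 V) :=
    {E | ∃ i, i < n₁ ∧ Even i ∧ E = s(z i, z (i + 1))} ∪
    {E | E ∈ N ∧ ∀ x ∈ E, ∀ i, i < n₁ → z i ≠ x} with hN'
  have hsub2 : ∀ a, a < n₁ → Even a → a + 1 < n₁ := by
    intro a ha hae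
    rcases Nat.lt_or_ge (a + 1) n₁ with h | h
    · exact h
    · exfalso
      have : a = n₁ - 1 := by omega
      obtain ⟨k, hk⟩ := heven
      obtain ⟨t, htt⟩ := hae
      omega
  have hpm : IsPM G N' := by
    constructor
    · intro E hE
      rcases hE with ⟨i, hi, _, rfl⟩ | ⟨hEN, _⟩
      · exact (G.mem_edgeSet).mpr (hadj i hi)
      · exact hN.1 hEN
    · intro x
      by_cases hx : ∃ i, i < n₁ ∧ z i = x
      · obtain ⟨i, hi, hzi⟩ := hx
        by_cases hie : Even i
        · refine ⟨s(z i, z (i + 1)), ⟨Or.inl ⟨i, hi, hie, rfl⟩, by rw [hzi]  ; exact Sym2.mem_mk_left _ _⟩, ?_⟩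
          rintro e' ⟨he', hxe'⟩
          rcases he' with ⟨a, ha, hae, rfl⟩ | ⟨heN, hfar⟩
          · rcases Sym2.mem_iff.mp hxe' with h | h
            · rw [← hzi] at h
              have : a = i := hinj a ha i hi h.symm
              rw [this]
            · exfalso
              rw [← hzi] at h
              have : a + 1 = i := hinj (a + 1) (hsub2 a ha hae) i hi h.symm
              rcases hae with ⟨t, ht⟩; rcases hie with ⟨s', hs⟩; omega
          · exact absurd hzi (hfar x hxe' i hi)
        · have hi1 : 1 ≤ i := by
            rcases Nat.eq_zero_or_pos i with h | h
            · exact absurd (h ▸ (⟨0, rfl⟩ : Even (0:ℕ))) (h ▸ hie)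
            · exact h
          have hie' : Even (i - 1) := by
            rcases Nat.even_or_odd (i - 1) with h | h
            · exact h
            · exfalso; rcases h with ⟨t, ht⟩; exact hie ⟨t + 1, by omega⟩
          have hi1n : i - 1 < n₁ := by omega
          have hieq : (i - 1) + 1 = i := by omega
          refine ⟨s(z (i - 1), z i), ⟨Or.inl ⟨i - 1, hi1n, hie', by rw [hieq]⟩,
            by rw [hzi]; exact Sym2.mem_mk_right _ _⟩, ?_⟩
          rintro e' ⟨he', hxe'⟩
          rcases he' with ⟨a, ha, hae, rfl⟩ | ⟨heN, hfar⟩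
          · rcases Sym2.mem_iff.mp hxe' with h | h
            · exfalso
              rw [← hzi] at h
              have : a = i := hinj a ha i hi h.symm
              rw [this] at hae
              exact hie hae
            · rw [← hzi] at h
              have : a + 1 = i := hinj (a + 1) (hsub2 a ha hae) i hi h.symm
              have : a = i - 1 := by omega
              rw [this, hieq]
          · exact absurd hzi (hfar x hxe' i hi)
      · push_neg at hx
        have hxfar : ∀ i, i < n₁ → z i ≠ x := fun i hi => hx i hi
        have hpxfar : ∀ i, i < n₁ → z i ≠ p x := hclosed x hxfar
        refine ⟨s(x, p x), ⟨Or.inr ⟨hpN x, ?_⟩, Sym2.mem_mk_left _ _⟩, ?_⟩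
        · intro y hy i hi
          rcases Sym2.mem_iff.mp hy with h | h
          · rw [h]; exact hxfar i hi
          · rw [h]; exact hpxfar i hi
        · rintro e' ⟨he', hxe'⟩
          rcases he' with ⟨a, ha, hae, rfl⟩ | ⟨heN, _⟩
          · exfalso
            rcases Sym2.mem_iff.mp hxe' with h | h
            · exact hxfar a ha h.symm
            · exact hxfar (a + 1) (hsub2 a ha hae) h.symm
          · exact hpu x e' heN hxe'
  exact ⟨N', thm14_build hpm h4 heven z hcl hadj hinj
    (fun i hi hie => Or.inl ⟨i, hi, hie, rfl⟩)⟩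
end Aux5
section Aux6
variable {V : Type*} {G : SimpleGraph V}

lemma thm14_colpar (C : G.Coloring (Fin 2)) (z : ℕ → V)
    (hadj : ∀ i, G.Adj (z i) (z (i + 1))) :
    ∀ i, (C (z i) = C (z 0)) ↔ Even i := by
  have key : ∀ x y cc : Fin 2, x ≠ y → ((y = cc) ↔ ¬ (x = cc)) := by decide
  intro i
  induction i with
  | zero => simp
  | succ i ih =>
    have hne : C (z i) ≠ C (z (i + 1)) := C.valid (hadj i)
    rw [key _ _ _ hne, ih, Nat.even_add_one]


lemma thm14_exists_acycle [Fintype V] (hmc : MatchingCovered G)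
    (hcard : 4 ≤ Fintype.card V) : ∃ N n c, thm14_IsACycle G N n c := by
  classical
  obtain ⟨hconn, ⟨e₀, he₀⟩, hcov⟩ := hmc
  obtain ⟨M, hM, -⟩ := hcov e₀ he₀
  obtain ⟨p₁, hp₁N, hp₁i, hp₁f, hp₁u⟩ := thm14_partner hM
  have hne : Nonempty V := Fintype.card_pos_iff.mp (by omega)
  obtain ⟨v⟩ := hne
  have hbex : ∃ b : V, b ≠ v ∧ b ≠ p₁ v := by
    by_contra hcon
    push_neg at hcon
    have hsub : (Finset.univ : Finset V) ⊆ {v, p₁ v} := by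
      intro x _
      simp only [Finset.mem_insert, Finset.mem_singleton]
      by_cases h : x = v
      · exact Or.inl h
      · exact Or.inr (hcon x h)
    have hle := Finset.card_le_card hsub
    have h2 : ({v, p₁ v} : Finset V).card ≤ 2 :=
      (Finset.card_insert_le _ _).trans (by simp)
    rw [Finset.card_univ] at hle
    omega
  obtain ⟨b, hbv, hbpv⟩ := hbex
  have hSb : b ∉ {x : V | x = v ∨ x = p₁ v} := by
    intro h; rcases h with h | h
    · exact hbv h
    · exact hbpv h
  obtain ⟨wk⟩ := hconn.preconnected v b
  obtain ⟨x, y, hxS, hyS, hxy⟩ := thm14_crossing wk (Or.inl rfl) hSb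
  have hxyM : s(x, y) ∉ M := by
    intro hmem
    have := hp₁u x s(x, y) hmem (Sym2.mem_mk_left _ _)
    have hy : y = p₁ x := (Sym2.congr_right.mp this.symm).symm
    rcases hxS with h | h
    · exact hyS (Or.inr (by rw [hy, h]))
    · exact hyS (Or.inl (by rw [hy, h, hp₁i v]))
  obtain ⟨M₂, hM₂, hxyM₂⟩ := hcov s(x, y) (G.mem_edgeSet.mpr hxy)
  obtain ⟨p₂, hp₂N, hp₂i, hp₂f, hp₂u⟩ := thm14_partner hM₂
  have hp2y : p₂ y = x := by
    have := hp₂u y s(x, y) hxyM₂ (Sym2.mem_mk_right _ _)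
    rw [Sym2.eq_iff] at this
    rcases this with ⟨h1, h2⟩ | ⟨h1, h2⟩
    · exact absurd h1 hxy.ne
    · exact h1.symm
  set w : ℕ → V := thm14_altSeq p₂ p₁ y with hw
  have hinvf : Function.Involutive p₂ := hp₂i
  have hinvg : Function.Involutive p₁ := hp₁i
  have hstep : ∀ i, w (i + 1) = (if Even i then p₂ else p₁) (w i) :=
    fun i => thm14_altSeq_step p₂ p₁ y i
  have hw0 : w 0 = y := rfl
  have hw1 : w 1 = x := by rw [hstep 0, if_pos (by simp), hw0, hp2y]
  have hadjw : ∀ i, G.Adj (w i) (w (i + 1)) := by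
    intro i
    rw [hstep i]
    by_cases hc : Even i
    · rw [if_pos hc]
      exact G.mem_edgeSet.mp (hM₂.1 (hp₂N (w i)))
    · rw [if_neg hc]
      exact G.mem_edgeSet.mp (hM.1 (hp₁N (w i)))
  -- return set
  set R : Set ℕ := {q | 0 < q ∧ w (2 * q) = y} with hR
  have hRne : R.Nonempty := by
    obtain ⟨i, j, hij, hfij⟩ :=
      Fintype.exists_ne_map_eq_of_card_lt
        (fun i : Fin (Fintype.card V + 1) => w (2 * i)) (by simp)
    rcases Nat.lt_or_ge (i : ℕ) (j : ℕ) with h | h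
    · refine ⟨(j : ℕ) - (i : ℕ), by omega, ?_⟩
      have hd : Even (2 * ((j : ℕ) - (i : ℕ))) := ⟨_, by ring⟩
      have heq : w (2 * (i : ℕ)) = w (2 * (i : ℕ) + 2 * ((j : ℕ) - (i : ℕ))) := by
        rw [show 2 * (i : ℕ) + 2 * ((j : ℕ) - (i : ℕ)) = 2 * (j : ℕ) by omega]
        exact hfij
      exact (thm14_altSeq_desc hinvf hinvg hd _ heq).symm
    · have h' : (j : ℕ) < (i : ℕ) := by
        rcases Nat.lt_or_ge (j : ℕ) (i : ℕ) with h' | h'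
        · exact h'
        · exact absurd (Fin.ext (by omega)) hij
      refine ⟨(i : ℕ) - (j : ℕ), by omega, ?_⟩
      have hd : Even (2 * ((i : ℕ) - (j : ℕ))) := ⟨_, by ring⟩
      have heq : w (2 * (j : ℕ)) = w (2 * (j : ℕ) + 2 * ((i : ℕ) - (j : ℕ))) := by
        rw [show 2 * (j : ℕ) + 2 * ((i : ℕ) - (j : ℕ)) = 2 * (i : ℕ) by omega]
        exact hfij.symm
      exact (thm14_altSeq_desc hinvf hinvg hd _ heq).symm
  set m := sInf R with hm
  have hmR : m ∈ R := Nat.sInf_mem hRne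
  obtain ⟨hm0, hmret⟩ := hmR
  have hm2 : 2 ≤ m := by
    rcases Nat.lt_or_ge m 2 with h | h
    · exfalso
      have hm1 : m = 1 := by omega
      have hret : w 2 = y := by
        have h2' := hmret
        rw [hm1] at h2'
        exact h2'
      have h2 : w 2 = p₁ x := by
        rw [hstep 1, if_neg (by simp), hw1]
      have hpxy : p₁ x = y := by rw [← h2, hret]
      exact hxyM (by rw [← hpxy]; exact hp₁N x)
    · exact h
  have hminj : ∀ A B, 1 ≤ A → A < B → B ≤ 2 * m → w A ≠ w B := by
    intro A B hA hAB hB heq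
    by_cases hpar : A % 2 = B % 2
    · have hd : Even (B - A) := Nat.even_iff.mpr (by omega)
      have hw0' : w 0 = w (B - A) :=
        thm14_altSeq_desc hinvf hinvg hd A
          (by rw [show A + (B - A) = B by omega]; exact heq)
      have hq : (B - A) / 2 ∈ R := by
        refine ⟨by omega, ?_⟩
        rw [show 2 * ((B - A) / 2) = B - A by
          rcases hd with ⟨t, ht⟩; omega]
        exact hw0'.symm
      have hle := Nat.sInf_le hq
      rcases hd with ⟨t, ht⟩
      omega
    · have hd : Odd (B - A) := Nat.odd_iff.mpr (by omega)
      exact thm14_altSeq_inj_odd hinvf hinvg hp₂f hp₁f (B - A) hd A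
        (by rw [show A + (B - A) = B by omega]; exact heq)
  refine ⟨M, 2 * m, ?_⟩
  set z : ℕ → V := fun t => w (1 + t) with hz
  have hcl : z (2 * m) = z 0 := by
    show w (1 + 2 * m) = w (1 + 0)
    have h1 : w (2 * m + 1) = p₂ (w (2 * m)) := by
      rw [hstep (2 * m), if_pos ⟨m, by ring⟩]
    rw [show 1 + 2 * m = 2 * m + 1 by omega, h1, hmret, hp2y]
    show x = w 1
    rw [hw1]
  have hadjz : ∀ i, i < 2 * m → G.Adj (z i) (z (i + 1)) := by
    intro i _
    show G.Adj (w (1 + i)) (w (1 + (i + 1)))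
    rw [show 1 + (i + 1) = (1 + i) + 1 by omega]
    exact hadjw (1 + i)
  have hinjz : ∀ i, i < 2 * m → ∀ j, j < 2 * m → z i = z j → i = j := by
    intro i hi j hj h
    rcases Nat.lt_trichotomy i j with h' | h' | h'
    · exact absurd h (hminj (1 + i) (1 + j) (by omega) (by omega) (by omega))
    · exact h'
    · exact absurd h.symm (hminj (1 + j) (1 + i) (by omega) (by omega) (by omega))
  have hmatchz : ∀ i, i < 2 * m → Even i → s(z i, z (i + 1)) ∈ M := by
    intro i _ hie
    show s(w (1 + i), w (1 + (i + 1))) ∈ M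
    have hodd : ¬ Even (1 + i) := by
      rcases hie with ⟨t, ht⟩
      intro hh; rcases hh with ⟨s', hs⟩; omega
    have hx1 : w ((1 + i) + 1) = p₁ (w (1 + i)) := by rw [hstep (1 + i), if_neg hodd]
    rw [show 1 + (i + 1) = (1 + i) + 1 by omega, hx1]
    exact hp₁N (w (1 + i))
  exact ⟨_, thm14_build hM (by omega) ⟨m, by ring⟩ z hcl hadjz hinjz hmatchz⟩
end Aux6

section Aux7
variable {V : Type*} {G : SimpleGraph V}

lemma thm14_ear [Fintype V] {N : Set (Sym2 V)} {n : ℕ} {c : ℕ → V}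
    (hbip : G.Colorable 2)
    (htheta : ¬ HasConformalOddTheta G)
    (hcov : ∀ e ∈ G.edgeSet, ∃ M, IsPM G M ∧ e ∈ M)
    (hA : thm14_IsACycle G N n c)
    (hmax : ∀ (N' : Set (Sym2 V)) (n' : ℕ) (c' : ℕ → V),
      thm14_IsACycle G N' n' c' → n' ≤ n)
    {y : V} (hy : y ∉ Set.range c) (hadjy : G.Adj (c 0) y) : False := by
  classical
  obtain ⟨hN, h4, heven, hper, hinj, hadjc, hmatch⟩ := hA
  have hn : 0 < n := by omega
  obtain ⟨g, hgN, hgi, hgf, hgu⟩ := thm14_partner hN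
  obtain ⟨Me, hMe, heMe⟩ := hcov s(c 0, y) (G.mem_edgeSet.mpr hadjy)
  obtain ⟨f, hfN, hfi, hff, hfu⟩ := thm14_partner hMe
  have hfy : f (c 0) = y := by
    have h := hfu (c 0) s(c 0, y) heMe (Sym2.mem_mk_left _ _)
    exact (Sym2.congr_right.mp h).symm
  set S : Set V := Set.range c with hS
  -- the N-partner of a cycle vertex is a cycle vertex
  have hgS : ∀ x ∈ S, g x ∈ S := by
    rintro x ⟨i, rfl⟩
    have hmod : c i = c (i % n) := thm14_cmod hn hper i
    set s' := i % n with hs'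
    have hs'n : s' < n := Nat.mod_lt i hn
    by_cases hse : Even s'
    · have hm := hmatch s' hse
      have h := hgu (c s') s(c s', c (s' + 1)) hm (Sym2.mem_mk_left _ _)
      have : c (s' + 1) = g (c s') := Sym2.congr_right.mp h
      rw [hmod, ← this]
      exact ⟨s' + 1, rfl⟩
    · have hs1 : 1 ≤ s' := by
        rcases Nat.eq_zero_or_pos s' with h | h
        · exact absurd (h ▸ (Even.zero)) (h ▸ hse)
        · exact h
      have hs1e : Even (s' - 1) := by
        rcases Nat.even_or_odd (s' - 1) with h | h
        · exact h
        · exfalso; rcases h with ⟨t, ht⟩; exact hse ⟨t + 1, by omega⟩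
      have hm := hmatch (s' - 1) hs1e
      rw [show s' - 1 + 1 = s' by omega] at hm
      have h := hgu (c s') s(c (s' - 1), c s') hm (Sym2.mem_mk_right _ _)
      have h2 : s(c (s' - 1), c s') = s(c s', c (s' - 1)) := Sym2.eq_swap
      rw [h2] at h
      have : c (s' - 1) = g (c s') := Sym2.congr_right.mp h
      rw [hmod, ← this]
      exact ⟨s' - 1, rfl⟩
  set w : ℕ → V := thm14_altSeq f g (c 0) with hw
  have hinvf : Function.Involutive f := hfi
  have hinvg : Function.Involutive g := hgi
  have hstep : ∀ i, w (i + 1) = (if Even i then f else g) (w i) :=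
    fun i => thm14_altSeq_step f g (c 0) i
  have hw0 : w 0 = c 0 := rfl
  have hw1 : w 1 = y := by rw [hstep 0, if_pos Even.zero, hw0, hfy]
  have hadjw : ∀ i, G.Adj (w i) (w (i + 1)) := by
    intro i
    rw [hstep i]
    by_cases hc : Even i
    · rw [if_pos hc]; exact G.mem_edgeSet.mp (hMe.1 (hfN (w i)))
    · rw [if_neg hc]; exact G.mem_edgeSet.mp (hN.1 (hgN (w i)))
  -- first return to the cycle
  set R : Set ℕ := {i | 0 < i ∧ w i ∈ S} with hR
  have hRne : R.Nonempty := by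
    obtain ⟨i, j, hij, hfij⟩ :=
      Fintype.exists_ne_map_eq_of_card_lt
        (fun i : Fin (Fintype.card V + 1) => w (2 * i)) (by simp)
    have key : ∀ a b : Fin (Fintype.card V + 1), (a : ℕ) < (b : ℕ) →
        w (2 * a) = w (2 * b) → R.Nonempty := by
      intro a b hab heq
      refine ⟨2 * ((b : ℕ) - (a : ℕ)), by omega, ?_⟩
      have hd : Even (2 * ((b : ℕ) - (a : ℕ))) := ⟨_, by ring⟩
      have heq2 : w (2 * (a : ℕ)) = w (2 * (a : ℕ) + 2 * ((b : ℕ) - (a : ℕ))) := by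
        rw [show 2 * (a : ℕ) + 2 * ((b : ℕ) - (a : ℕ)) = 2 * (b : ℕ) by omega]
        exact heq
      have hret : w (2 * ((b : ℕ) - (a : ℕ))) = w 0 :=
        (thm14_altSeq_desc hinvf hinvg hd _ heq2).symm
      show w _ ∈ S
      rw [hret, hw0]
      exact ⟨0, rfl⟩
    rcases Nat.lt_or_ge (i : ℕ) (j : ℕ) with h | h
    · exact key i j h hfij
    · have h' : (j : ℕ) < (i : ℕ) := by
        rcases Nat.lt_or_ge (j : ℕ) (i : ℕ) with h' | h'
        · exact h'
        · exact absurd (Fin.ext (by omega)) hij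
      exact key j i h' hfij.symm
  set r := sInf R with hrdef
  have hrmem : r ∈ R := Nat.sInf_mem hRne
  have hr0 : 0 < r := hrmem.1
  have hrS : w r ∈ S := hrmem.2
  have hmid : ∀ i, 0 < i → i < r → w i ∉ S := by
    intro i h1 h2 hiS
    have : r ≤ i := Nat.sInf_le ⟨h1, hiS⟩
    omega
  have hr2 : 2 ≤ r := by
    rcases Nat.lt_or_ge r 2 with h | h
    · exfalso
      have hr1 : r = 1 := by omega
      rw [hr1, hw1] at hrS
      exact hy hrS
    · exact h
  have hrodd : ¬ Even r := by
    intro hre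
    have hro : ¬ Even (r - 1) := by
      rcases hre with ⟨t, ht⟩
      intro hh; rcases hh with ⟨s', hs⟩; omega
    have h1 : w r = g (w (r - 1)) := by
      have h1' : w ((r - 1) + 1) = g (w (r - 1)) := by rw [hstep (r - 1), if_neg hro]
      rw [show (r - 1) + 1 = r by omega] at h1'
      exact h1'
    have h2 : w (r - 1) = g (w r) := by rw [h1, hgi]
    have : w (r - 1) ∈ S := by rw [h2]; exact hgS _ hrS
    exact hmid (r - 1) (by omega) (by omega) this
  have hwinj : ∀ A B, A < B → B ≤ r → w A ≠ w B := by
    intro A B hAB hB heq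
    by_cases hpar : A % 2 = B % 2
    · have hd : Even (B - A) := Nat.even_iff.mpr (by omega)
      have hw0' : w 0 = w (B - A) :=
        thm14_altSeq_desc hinvf hinvg hd A
          (by rw [show A + (B - A) = B by omega]; exact heq)
      have hmem : (B - A) ∈ R := by
        refine ⟨by omega, ?_⟩
        rw [← hw0', hw0]
        exact ⟨0, rfl⟩
      have hle := Nat.sInf_le hmem
      have : B - A = r := by omega
      rcases hd with ⟨t, ht⟩
      rw [Nat.even_iff] at hrodd
      omega
    · have hd : Odd (B - A) := Nat.odd_iff.mpr (by omega)
      exact thm14_altSeq_inj_odd hinvf hinvg hff hgf (B - A) hd A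
        (by rw [show A + (B - A) = B by omega]; exact heq)
  -- position of the return vertex
  obtain ⟨i₀, hi₀⟩ := id hrS
  set l := i₀ % n with hldef
  have hln : l < n := Nat.mod_lt i₀ hn
  have hlv : c l = w r := by rw [← thm14_cmod hn hper, hi₀]
  have hl0 : l ≠ 0 := by
    intro h
    have : w 0 = w (0 + r) := by
      rw [Nat.zero_add, ← hlv, h]
      exact hw0
    exact thm14_altSeq_inj_odd hinvf hinvg hff hgf r (Nat.odd_iff.mpr (by
      rw [Nat.even_iff] at hrodd; omega)) 0 this
  have hlodd : ¬ Even l := by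
    obtain ⟨C⟩ := hbip
    have hcp_w := thm14_colpar C w hadjw
    have hcp_c := thm14_colpar C c hadjc
    intro hle
    have h1 : C (c l) = C (c 0) := (hcp_c l).mpr hle
    have h2 : ¬ (C (w r) = C (w 0)) := by
      intro hh
      have := (hcp_w r).mp hh
      exact hrodd this
    rw [hlv] at h1
    rw [hw0] at h2
    exact h2 h1
  by_cases hlcase : l = 1 ∨ l = n - 1
  · -- we can build a longer alternating cycle: contradiction with maximality
    have key : ∀ a : ℕ → ℕ, a 0 = l → c (a (n - 1)) = c 0 →
        (∀ s, s < n - 1 → G.Adj (c (a s)) (c (a (s + 1)))) →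
        (∀ s, s < n - 1 → 1 ≤ a s ∧ a s ≤ n - 1) →
        (∀ s s', s < n - 1 → s' < n - 1 → a s = a s' → s = s') →
        (∀ i, 1 ≤ i → i < n → ∃ s, s < n - 1 ∧ a s = i) → False := by
      intro a ha0 haend hadja hrangea hainj hasurj
      set len := r + (n - 1) with hlen
      set z : ℕ → V := fun t => if t < r then w t else c (a (t - r)) with hz
      have hzw : ∀ t, t ≤ r → z t = w t := by
        intro t ht
        by_cases hc : t < r
        · simp [hz, hc]
        · have hteq : t = r := by omega
          rw [hteq]
          show (if r < r then w r else c (a (r - r))) = w r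
          rw [if_neg (by omega)]
          simp only [Nat.sub_self, ha0]
          exact hlv
      have hzc : ∀ t, r ≤ t → z t = c (a (t - r)) := by
        intro t ht
        simp [hz, show ¬ (t < r) by omega]
      have hcl : z len = z 0 := by
        rw [hzc len (by omega), hzw 0 (by omega), hw0, hlen]
        rw [show r + (n - 1) - r = n - 1 by omega]
        exact haend
      have hadjz : ∀ t, t < len → G.Adj (z t) (z (t + 1)) := by
        intro t ht
        by_cases hc : t + 1 ≤ r
        · rw [hzw t (by omega), hzw (t + 1) hc]
          exact hadjw t
        · have hrt : r ≤ t := by omega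
          rw [hzc t hrt, hzc (t + 1) (by omega),
            show t + 1 - r = (t - r) + 1 by omega]
          exact hadja (t - r) (by omega)
      have hinjz : ∀ t, t < len → ∀ t', t' < len → z t = z t' → t = t' := by
        have hcross : ∀ t t', t < r → r ≤ t' → t' < len → z t ≠ z t' := by
          intro t t' ht ht' ht'len heq
          rw [hzw t (by omega), hzc t' ht'] at heq
          have hs : t' - r < n - 1 := by omega
          obtain ⟨hs1, hs2⟩ := hrangea (t' - r) hs
          by_cases h0 : t = 0
          · rw [h0, hw0] at heq
            have := hinj 0 (by omega) (a (t' - r)) (by omega) heq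
            omega
          · apply hmid t (by omega) ht
            rw [heq]
            exact ⟨a (t' - r), rfl⟩
        intro t ht t' ht' heq
        by_cases hc : t < r
        · by_cases hc' : t' < r
          · rw [hzw t (by omega), hzw t' (by omega)] at heq
            rcases Nat.lt_trichotomy t t' with h | h | h
            · exact absurd heq (hwinj t t' h (by omega))
            · exact h
            · exact absurd heq.symm (hwinj t' t h (by omega))
          · exact absurd heq (hcross t t' hc (by omega) ht')
        · by_cases hc' : t' < r
          · exact absurd heq.symm (hcross t' t hc' (by omega) ht)
          · rw [hzc t (by omega), hzc t' (by omega)] at heq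
            have hs : t - r < n - 1 := by omega
            have hs' : t' - r < n - 1 := by omega
            obtain ⟨hb1, hb2⟩ := hrangea (t - r) hs
            obtain ⟨hb1', hb2'⟩ := hrangea (t' - r) hs'
            have h1 := hinj (a (t - r)) (by omega) (a (t' - r)) (by omega) heq
            have := hainj (t - r) (t' - r) hs hs' h1
            omega
      have hrpar : r % 2 = 1 := by rw [Nat.even_iff] at hrodd; omega
      have hnpar : n % 2 = 0 := Nat.even_iff.mp heven
      have heven' : Even len := Nat.even_iff.mpr (by omega)
      have h4' : 4 ≤ len := by omega
      have himgS : ∀ i, ∃ t', t' < len ∧ z t' = c i := by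
        intro i
        have hmod : c i = c (i % n) := thm14_cmod hn hper i
        by_cases h0 : i % n = 0
        · refine ⟨0, by omega, ?_⟩
          rw [hzw 0 (by omega), hw0, hmod, h0]
        · obtain ⟨s, hs, has⟩ := hasurj (i % n) (by omega) (Nat.mod_lt i hn)
          refine ⟨r + s, by omega, ?_⟩
          rw [hzc (r + s) (by omega), show r + s - r = s by omega, has, ← hmod]
      have hginz : ∀ t, t < len → ∃ t', t' < len ∧ z t' = g (z t) := by
        intro t ht
        by_cases htS : z t ∈ S
        · obtain ⟨i, hi⟩ := hgS _ htS
          obtain ⟨t', ht', hzt'⟩ := himgS i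
          exact ⟨t', ht', by rw [hzt', hi]⟩
        · have htr : t < r := by
            by_contra hc
            exact htS (by rw [hzc t (by omega)]; exact ⟨a (t - r), rfl⟩)
          have ht0 : 0 < t := by
            rcases Nat.eq_zero_or_pos t with h | h
            · exfalso
              refine htS ?_
              rw [h, hzw 0 (by omega), hw0]
              exact ⟨0, rfl⟩
            · exact h
          rw [hzw t (by omega)]
          by_cases hte : Even t
          · have hto : ¬ Even (t - 1) := by
              rcases hte with ⟨q, hq⟩; intro hh; rcases hh with ⟨q', hq'⟩; omega
            have h1 : w t = g (w (t - 1)) := by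
              have hh := hstep (t - 1)
              rw [if_neg hto] at hh
              rw [show (t - 1) + 1 = t by omega] at hh
              exact hh
            refine ⟨t - 1, by omega, ?_⟩
            rw [hzw (t - 1) (by omega), h1, hgi]
          · have h1 : w (t + 1) = g (w t) := by
              have hh := hstep t
              rwa [if_neg hte] at hh
            exact ⟨t + 1, by omega, by rw [hzw (t + 1) (by omega), h1]⟩
      have hclosed : ∀ x, (∀ t, t < len → z t ≠ x) → ∀ t, t < len → z t ≠ g x := by
        intro x hx t ht heq
        have hxg : x = g (z t) := by rw [heq, hgi]
        obtain ⟨t', ht', hzt'⟩ := hginz t ht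
        exact hx t' ht' (by rw [hzt', ← hxg])
      obtain ⟨N', hN'⟩ := thm14_newPM hN g hgN hgu h4' heven' z hcl hadjz hinjz hclosed
      have := hmax N' len _ hN'
      omega
    rcases hlcase with hl1 | hln1
    · apply key (fun s => 1 + s)
      · rw [hl1]
      · rw [show 1 + (n - 1) = 0 + n by omega]
        exact hper 0
      · intro s hs
        show G.Adj (c (1 + s)) (c (1 + (s + 1)))
        rw [show 1 + (s + 1) = (1 + s) + 1 by omega]
        exact hadjc (1 + s)
      · intro s hs; omega
      · intro s s' _ _ h; omega
      · intro i h1 h2; exact ⟨i - 1, by omega, by omega⟩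
    · apply key (fun s => n - 1 - s)
      · show n - 1 - 0 = l
        omega
      · show c (n - 1 - (n - 1)) = c 0
        rw [show n - 1 - (n - 1) = 0 by omega]
      · intro s hs
        show G.Adj (c (n - 1 - s)) (c (n - 1 - (s + 1)))
        have hh := (hadjc (n - 2 - s)).symm
        rw [show n - 2 - s + 1 = n - 1 - s by omega] at hh
        rw [show n - 1 - (s + 1) = n - 2 - s by omega]
        exact hh
      · intro s hs; omega
      · intro s s' h1 h2 h; omega
      · intro i h1 h2; exact ⟨n - 1 - i, by omega, by omega⟩
  · -- theta case: 3 ≤ l ≤ n - 3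
    push_neg at hlcase
    obtain ⟨hl1, hln1⟩ := hlcase
    have hrpar : r % 2 = 1 := by rw [Nat.even_iff] at hrodd; omega
    have hnpar : n % 2 = 0 := Nat.even_iff.mp heven
    have hlpar : l % 2 = 1 := by rw [Nat.even_iff] at hlodd; omega
    have hl3 : 3 ≤ l := by omega
    have hln3 : l ≤ n - 3 := by omega
    have hr3 : 3 ≤ r := by omega
    have hadjw' : ∀ i, i < r → G.Adj (w i) (w (i + 1)) := fun i _ => hadjw i
    have hadjc2 : ∀ i, i < l → G.Adj (c i) (c (i + 1)) := fun i _ => hadjc i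
    have harc : ∀ t, t < n - l → G.Adj (c (n - t)) (c (n - (t + 1))) := by
      intro t ht
      have hh := (hadjc (n - t - 1)).symm
      rw [show n - t - 1 + 1 = n - t by omega] at hh
      rw [show n - (t + 1) = n - t - 1 by omega]
      exact hh
    have hcn : w 0 = c 0 := hw0
    have hstart₃ : (fun t => c (n - t)) 0 = c 0 := by
      show c (n - 0) = c 0
      rw [Nat.sub_zero, show n = 0 + n by omega]
      exact hper 0
    have hend₃ : (fun t => c (n - t)) (n - l) = w r := by
      show c (n - (n - l)) = w r
      rw [show n - (n - l) = l by omega]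
      exact hlv
    set P₁ : G.Walk (c 0) (w r) := (thm14_walkOf G w r hadjw').copy hcn rfl with hP₁
    set P₂ : G.Walk (c 0) (w r) := (thm14_walkOf G c l hadjc2).copy rfl hlv with hP₂
    set P₃ : G.Walk (c 0) (w r) :=
      (thm14_walkOf G (fun t => c (n - t)) (n - l) harc).copy hstart₃ hend₃ with hP₃
    have hmem₁ : ∀ x, x ∈ P₁.support ↔ ∃ i, i ≤ r ∧ w i = x := by
      intro x
      rw [hP₁, SimpleGraph.Walk.support_copy]
      exact thm14_walkOf_mem_support w r hadjw' x
    have hmem₂ : ∀ x, x ∈ P₂.support ↔ ∃ i, i ≤ l ∧ c i = x := by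
      intro x
      rw [hP₂, SimpleGraph.Walk.support_copy]
      exact thm14_walkOf_mem_support c l hadjc2 x
    have hmem₃ : ∀ x, x ∈ P₃.support ↔ ∃ t, t ≤ n - l ∧ c (n - t) = x := by
      intro x
      rw [hP₃, SimpleGraph.Walk.support_copy]
      exact thm14_walkOf_mem_support (fun t => c (n - t)) (n - l) harc x
    have hlen₁ : P₁.length = r := by rw [hP₁]; simp [thm14_walkOf_length]
    have hlen₂ : P₂.length = l := by rw [hP₂]; simp [thm14_walkOf_length]
    have hlen₃ : P₃.length = n - l := by rw [hP₃]; simp [thm14_walkOf_length]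
    have hpath₁ : P₁.IsPath := by
      rw [hP₁, SimpleGraph.Walk.isPath_copy]
      apply thm14_walkOf_isPath
      intro i hi j hj heq
      rcases Nat.lt_trichotomy i j with h | h | h
      · exact absurd heq (hwinj i j h hj)
      · exact h
      · exact absurd heq.symm (hwinj j i h hi)
    have hpath₂ : P₂.IsPath := by
      rw [hP₂, SimpleGraph.Walk.isPath_copy]
      apply thm14_walkOf_isPath
      intro i hi j hj heq
      exact hinj i (by omega) j (by omega) heq
    have hpath₃ : P₃.IsPath := by
      rw [hP₃, SimpleGraph.Walk.isPath_copy]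
      apply thm14_walkOf_isPath
      intro i hi j hj heq
      have hmm := (thm14_cmod_iff hn hper hinj _ _).mp heq
      by_cases hi0 : i = 0
      · by_cases hj0 : j = 0
        · omega
        · exfalso
          rw [hi0, Nat.sub_zero, Nat.mod_self, Nat.mod_eq_of_lt (by omega)] at hmm
          omega
      · by_cases hj0 : j = 0
        · exfalso
          rw [hj0, Nat.sub_zero, Nat.mod_self, Nat.mod_eq_of_lt (by omega)] at hmm
          omega
        · rw [Nat.mod_eq_of_lt (by omega), Nat.mod_eq_of_lt (by omega)] at hmm
          omega
    -- disjointness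
    have hD12 : ∀ x, x ∈ P₁.support → x ∈ P₂.support → x = c 0 ∨ x = w r := by
      intro x h1 h2
      obtain ⟨i, hi, rfl⟩ := (hmem₁ x).mp h1
      obtain ⟨j, hj, hj2⟩ := (hmem₂ _).mp h2
      by_cases h0 : i = 0
      · left; rw [h0, hw0]
      · by_cases hir : i = r
        · right; rw [hir]
        · exfalso
          exact hmid i (by omega) (by omega) ⟨j, hj2⟩
    have hD13 : ∀ x, x ∈ P₁.support → x ∈ P₃.support → x = c 0 ∨ x = w r := by
      intro x h1 h3
      obtain ⟨i, hi, rfl⟩ := (hmem₁ x).mp h1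
      obtain ⟨t, ht, ht2⟩ := (hmem₃ _).mp h3
      by_cases h0 : i = 0
      · left; rw [h0, hw0]
      · by_cases hir : i = r
        · right; rw [hir]
        · exfalso
          exact hmid i (by omega) (by omega) ⟨n - t, ht2⟩
    have hD23 : ∀ x, x ∈ P₂.support → x ∈ P₃.support → x = c 0 ∨ x = w r := by
      intro x h2 h3
      obtain ⟨i, hi, rfl⟩ := (hmem₂ x).mp h2
      obtain ⟨t, ht, ht2⟩ := (hmem₃ _).mp h3
      have hmm := (thm14_cmod_iff hn hper hinj _ _).mp ht2
      by_cases ht0 : t = 0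
      · left
        rw [ht0, Nat.sub_zero, Nat.mod_self, Nat.mod_eq_of_lt (by omega)] at hmm
        rw [hmm]
      · rw [Nat.mod_eq_of_lt (by omega), Nat.mod_eq_of_lt (by omega)] at hmm
        have : i = l := by omega
        right
        rw [← hlv, this]
    -- conformality
    set T'' : Set V := {x : V | x ∉ P₁.support ∧ x ∉ P₂.support ∧ x ∉ P₃.support} with hT''
    have hT'key : ∀ x ∈ T'', x ∉ S ∧ ∀ i, i ≤ r → w i ≠ x := by
      intro x hx
      obtain ⟨hx1, hx2, hx3⟩ := hx
      constructor
      · rintro ⟨i, rfl⟩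
        have hmod : c i = c (i % n) := thm14_cmod hn hper i
        by_cases hc : i % n ≤ l
        · exact hx2 ((hmem₂ _).mpr ⟨i % n, hc, hmod.symm⟩)
        · refine hx3 ((hmem₃ _).mpr ⟨n - i % n, by omega, ?_⟩)
          rw [show n - (n - i % n) = i % n by
            have := Nat.mod_lt i hn; omega]
          exact hmod.symm
      · intro i hi heq
        exact hx1 ((hmem₁ _).mpr ⟨i, hi, heq⟩)
    have hT'cl : ∀ x, x ∈ T'' → g x ∈ T'' := by
      intro x hx
      obtain ⟨hxS, hxw⟩ := hT'key x hx
      have hgxS : g x ∉ S := by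
        intro h
        apply hxS
        have := hgS _ h
        rwa [hgi] at this
      have hgxw : ∀ i, i ≤ r → w i ≠ g x := by
        intro i hi heq
        have hxg : x = g (w i) := by rw [heq, hgi]
        by_cases h0 : i = 0
        · apply hxS
          rw [hxg, h0, hw0]
          exact hgS _ ⟨0, rfl⟩
        · by_cases hir : i = r
          · apply hxS
            rw [hxg, hir]
            exact hgS _ hrS
          · by_cases hie : Even i
            · have hto : ¬ Even (i - 1) := by
                rcases hie with ⟨q, hq⟩; intro hh; rcases hh with ⟨q', hq'⟩; omega
              have h1 : w i = g (w (i - 1)) := by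
                have hh := hstep (i - 1)
                rw [if_neg hto] at hh
                rw [show (i - 1) + 1 = i by omega] at hh
                exact hh
              have : x = w (i - 1) := by rw [hxg, h1, hgi]
              exact hxw (i - 1) (by omega) this.symm
            · have h1 : w (i + 1) = g (w i) := by
                have hh := hstep i
                rwa [if_neg hie] at hh
              have : x = w (i + 1) := by rw [hxg, ← h1]
              exact hxw (i + 1) (by omega) this.symm
      refine ⟨?_, ?_, ?_⟩
      · intro h
        obtain ⟨i, hi, heq⟩ := (hmem₁ _).mp h
        exact hgxw i hi heq
      · intro h
        obtain ⟨i, hi, heq⟩ := (hmem₂ _).mp h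
        exact hgxS (heq ▸ ⟨i, rfl⟩)
      · intro h
        obtain ⟨t, ht, heq⟩ := (hmem₃ _).mp h
        exact hgxS (heq ▸ ⟨n - t, rfl⟩)
    apply htheta
    refine ⟨c 0, w r, P₁, P₂, P₃, hpath₁, hpath₂, hpath₃,
      by rw [hlen₁]; exact Nat.odd_iff.mpr hrpar,
      by rw [hlen₂]; exact Nat.odd_iff.mpr hlpar,
      by rw [hlen₃]; exact Nat.odd_iff.mpr (by omega),
      by omega, by omega, by omega, hD12, hD13, hD23, ?_⟩
    -- Matchable
    set q : T'' → T'' := fun x => ⟨g x.1, hT'cl x.1 x.2⟩ with hq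
    have hqq : ∀ x : T'', q (q x) = x := by
      intro x
      apply Subtype.ext
      show g (g x.1) = x.1
      exact hgi x.1
    refine ⟨Set.range (fun x : T'' => s(x, q x)), ?_, ?_⟩
    · rintro e ⟨x, rfl⟩
      rw [SimpleGraph.mem_edgeSet]
      have hadjx : G.Adj x.1 (g x.1) := G.mem_edgeSet.mp (hN.1 (hgN x.1))
      show (SimpleGraph.induce T'' G).Adj x (q x)
      simp only [SimpleGraph.comap_adj, Function.Embedding.coe_subtype]
      exact hadjx
    · intro t
      refine ⟨s(t, q t), ⟨⟨t, rfl⟩, Sym2.mem_mk_left _ _⟩, ?_⟩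
      rintro e' ⟨⟨x, rfl⟩, hte'⟩
      rcases Sym2.mem_iff.mp hte' with h | h
      · rw [h]
      · rw [h, hqq, Sym2.eq_swap]
end Aux7
section Aux8
variable {V : Type*}

theorem thm14_main [Fintype V] (G : SimpleGraph V)
    (hmc : MatchingCovered G) (hbip : G.Colorable 2) (hcard : 4 ≤ Fintype.card V)
    (htheta : ¬ HasConformalOddTheta G) :
    ∃ (a : V) (C : G.Walk a a), C.IsCycle ∧ ∀ v : V, v ∈ C.support := by
  classical
  obtain ⟨hconn, hene, hcov⟩ := hmc
  set K : Set ℕ := {m | ∃ N c, thm14_IsACycle G N m c} with hK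
  have hKne : K.Nonempty := by
    obtain ⟨N, m, c, h⟩ := thm14_exists_acycle ⟨hconn, hene, hcov⟩ hcard
    exact ⟨m, N, c, h⟩
  have hKbdd : BddAbove K := by
    refine ⟨Fintype.card V, ?_⟩
    rintro m ⟨N, c, hA⟩
    obtain ⟨-, h4, -, -, hinj, -, -⟩ := hA
    have hinjF : Function.Injective (fun i : Fin m => c i) := by
      intro i j h
      exact Fin.ext (hinj i i.2 j j.2 h)
    simpa using Fintype.card_le_of_injective _ hinjF
  set n₀ := sSup K with hn₀
  have hn₀K : n₀ ∈ K := Nat.sSup_mem hKne hKbdd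
  obtain ⟨N, c, hA⟩ := hn₀K
  have hmax : ∀ (N' : Set (Sym2 V)) (m : ℕ) (c' : ℕ → V),
      thm14_IsACycle G N' m c' → m ≤ n₀ :=
    fun N' m c' h => le_csSup hKbdd ⟨N', c', h⟩
  obtain ⟨hN, h4, heven, hper, hinj, hadjc, hmatch⟩ := hA
  have hAfull : thm14_IsACycle G N n₀ c := ⟨hN, h4, heven, hper, hinj, hadjc, hmatch⟩
  have hn : 0 < n₀ := by omega
  by_cases hspan : ∀ x : V, x ∈ Set.range c
  · -- Hamiltonian
    have hcl : c n₀ = c 0 := by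
      rw [show n₀ = 0 + n₀ by omega]
      exact hper 0
    refine ⟨c 0, (thm14_walkOf G c n₀ (fun i _ => hadjc i)).copy rfl hcl, ?_, ?_⟩
    · exact thm14_walkOf_isCycle c n₀ _ (by omega) hcl hinj
    · intro v
      obtain ⟨i, hi⟩ := hspan v
      rw [SimpleGraph.Walk.support_copy, thm14_walkOf_mem_support]
      refine ⟨i % n₀, by have := Nat.mod_lt i hn; omega, ?_⟩
      rw [← thm14_cmod hn hper]
      exact hi
  · push_neg at hspan
    obtain ⟨x, hx⟩ := hspan
    obtain ⟨wk⟩ := hconn.preconnected (c 0) x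
    obtain ⟨u', y, hu'S, hyS, hadj⟩ := thm14_crossing (S := Set.range c) wk ⟨0, rfl⟩ hx
    obtain ⟨i₁, hi₁⟩ := hu'S
    have hj : c (i₁ % n₀) = u' := by
      rw [← thm14_cmod hn hper]
      exact hi₁
    obtain ⟨c', hA', hc'0, hc'in, hc'sur⟩ :=
      thm14_reindex hAfull (i₁ % n₀) (Nat.mod_lt i₁ hn)
    have hy' : y ∉ Set.range c' := by
      rintro ⟨i, rfl⟩
      exact hyS (hc'in i)
    have hadjy' : G.Adj (c' 0) y := by
      rw [hc'0, hj]
      exact hadj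
    exact absurd (trivial) (fun _ =>
      thm14_ear hbip htheta hcov hA' hmax hy' hadjy')
end Aux8

/-- A matching covered bipartite graph with at least four vertices containing no
conformal odd theta subgraph has a Hamiltonian cycle. -/
theorem statement_14 {V : Type*} [Fintype V] (G : SimpleGraph V)
    (hmc : MatchingCovered G) (hbip : G.Colorable 2) (hcard : 4 ≤ Fintype.card V)
    (htheta : ¬ HasConformalOddTheta G) :
    ∃ (a : V) (C : G.Walk a a), C.IsCycle ∧ ∀ v : V, v ∈ C.support := by
  exact thm14_main G hmc hbip hcard htheta
end

section
/- Let G be a matching covered bipartite graph with a Hamiltonian cycle C, and suppose G does not contain a conformal odd theta subgraph. Then every pair of crossed chords of C is strongly crossed. -/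
/-- `a, b, c, d` occur in this cyclic order on a cycle of length `m` (positions taken
in `ZMod m`): starting from `a` and walking around the cycle we meet `b`, then `c`,
then `d`. -/
def CyclicOrder4 (m : ℕ) (a b c d : ZMod m) : Prop :=
  0 < (b - a).val ∧ (b - a).val < (c - a).val ∧ (c - a).val < (d - a).val

/-- The position of a vertex `v` along the closed walk `C`, as an element of
`ZMod C.length`. -/
noncomputable def cpos {V : Type*} [DecidableEq V] {G : SimpleGraph V} {a : V}
    (C : G.Walk a a) (v : V) : ZMod C.length :=
  (C.support.idxOf v : ZMod C.length)

/-- `v` is black in the proper 2-coloring of the (even) cycle `C`. -/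
def blackOn {V : Type*} [DecidableEq V] {G : SimpleGraph V} {a : V}
    (C : G.Walk a a) (v : V) : Prop :=
  C.support.idxOf v % 2 = 0

/-- `e` is a chord of the Hamiltonian cycle `C` of `G`: an edge of `G` joining two
vertices of `C` that is not an edge of `C`. -/
def IsChordOfWalk {V : Type*} {G : SimpleGraph V} {a : V}
    (C : G.Walk a a) (e : Sym2 V) : Prop :=
  e ∈ G.edgeSet ∧ e ∉ C.edges

/-- Two (vertex-disjoint) chords `e = x₁x₂`, `f = y₁y₂` of the cycle `C`, with `x₁, y₁`
of the same color, are crossed: their ends occur in the cyclic order `x₁, y₁, x₂, y₂`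
along `C`. -/
def CrossedOn {V : Type*} [DecidableEq V] {G : SimpleGraph V} {a : V}
    (C : G.Walk a a) (e f : Sym2 V) : Prop :=
  ∃ x₁ x₂ y₁ y₂ : V, e = s(x₁, x₂) ∧ f = s(y₁, y₂) ∧
    (blackOn C x₁ ↔ blackOn C y₁) ∧
    CyclicOrder4 C.length (cpos C x₁) (cpos C y₁) (cpos C x₂) (cpos C y₂)

/-- Two crossed chords `e = x₁x₂`, `f = y₁y₂` of the cycle `C` are strongly crossed:
moreover both `x₁y₂` and `x₂y₁` are edges of `C`. -/
def StronglyCrossedOn {V : Type*} [DecidableEq V] {G : SimpleGraph V} {a : V}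
    (C : G.Walk a a) (e f : Sym2 V) : Prop :=
  ∃ x₁ x₂ y₁ y₂ : V, e = s(x₁, x₂) ∧ f = s(y₁, y₂) ∧
    (blackOn C x₁ ↔ blackOn C y₁) ∧
    CyclicOrder4 C.length (cpos C x₁) (cpos C y₁) (cpos C x₂) (cpos C y₂) ∧
    s(x₁, y₂) ∈ C.edges ∧ s(x₂, y₁) ∈ C.edges


open SimpleGraph


namespace ThetaAux

variable {V : Type*} {G : SimpleGraph V}

lemma walk_support_get {u v : V} (w : G.Walk u v) :
    ∀ (k : ℕ) (hk : k < w.support.length), w.support.get ⟨k, hk⟩ = w.getVert k := by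
  induction w with
  | nil =>
    intro k hk
    simp only [SimpleGraph.Walk.support_nil, List.length_cons, List.length_nil] at hk
    cases k with
    | zero => simp
    | succ k => omega
  | cons h p ih =>
    intro k hk
    cases k with
    | zero => simp [SimpleGraph.Walk.support_cons, SimpleGraph.Walk.getVert_zero]
    | succ k =>
      simp only [SimpleGraph.Walk.support_cons, List.get_cons_succ,
        SimpleGraph.Walk.getVert_cons_succ]
      exact ih k (by simpa [SimpleGraph.Walk.support_cons] using hk)

lemma walk_edge_getVert_mem {u v : V} (w : G.Walk u v) {i : ℕ} (hi : i < w.length) :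
    s(w.getVert i, w.getVert (i+1)) ∈ w.edges := by
  induction w generalizing i with
  | nil => simp at hi
  | cons h p ih =>
    cases i with
    | zero =>
      simp [SimpleGraph.Walk.edges_cons, SimpleGraph.Walk.getVert_zero,
        SimpleGraph.Walk.getVert_cons_succ]
    | succ i =>
      simp only [SimpleGraph.Walk.edges_cons, SimpleGraph.Walk.getVert_cons_succ]
      right
      exact ih (by simpa [SimpleGraph.Walk.length_cons] using hi)






def arcWalk (g : ℕ → V) (hadj : ∀ k, G.Adj (g k) (g (k+1))) (i : ℕ) :
    (len : ℕ) → G.Walk (g i) (g (i + len))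
  | 0 => Walk.nil
  | (len+1) => (arcWalk g hadj i len).append (Walk.cons (hadj (i+len)) Walk.nil)

@[simp] lemma arcWalk_length (g : ℕ → V) (hadj : ∀ k, G.Adj (g k) (g (k+1))) (i len : ℕ) :
    (arcWalk (G := G) g hadj i len).length = len := by
  induction len with
  | zero => rfl
  | succ len ih => simp [arcWalk, ih]

lemma arcWalk_support (g : ℕ → V) (hadj : ∀ k, G.Adj (g k) (g (k+1))) (i len : ℕ) :
    (arcWalk (G := G) g hadj i len).support
      = (List.range (len+1)).map (fun t => g (i + t)) := by
  induction len with
  | zero => show [g i] = _; rw [List.range_succ]; simp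
  | succ len ih =>
    rw [arcWalk, Walk.support_append, ih, List.range_succ]
    simp [List.range_succ, Nat.add_assoc]

lemma mem_arcWalk_support (g : ℕ → V) (hadj : ∀ k, G.Adj (g k) (g (k+1))) (i len : ℕ)
    (v : V) : v ∈ (arcWalk (G := G) g hadj i len).support ↔ ∃ t, t ≤ len ∧ g (i + t) = v := by
  rw [arcWalk_support]
  simp only [List.mem_map, List.mem_range]
  constructor
  · rintro ⟨t, ht, rfl⟩; exact ⟨t, by omega, rfl⟩
  · rintro ⟨t, ht, rfl⟩; exact ⟨t, by omega, rfl⟩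

lemma arcWalk_isPath (g : ℕ → V) (hadj : ∀ k, G.Adj (g k) (g (k+1))) (i len : ℕ)
    (hinj : ∀ t₁ t₂, t₁ ≤ len → t₂ ≤ len → g (i + t₁) = g (i + t₂) → t₁ = t₂) :
    (arcWalk (G := G) g hadj i len).IsPath := by
  apply Walk.IsPath.mk'
  rw [arcWalk_support]
  apply List.Nodup.map_on
  · intro t₁ h₁ t₂ h₂ h
    simp only [List.mem_range] at h₁ h₂
    exact hinj t₁ t₂ (by omega) (by omega) h
  · exact List.nodup_range

lemma matchable_pairs (S : Set V) (m : ℕ) (h : ℕ → V)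
    (hmem : ∀ i, i < 2*m → h i ∈ S)
    (hS : ∀ v ∈ S, ∃ i, i < 2*m ∧ h i = v)
    (hinj : ∀ i j, i < 2*m → j < 2*m → h i = h j → i = j)
    (hadj : ∀ i, 2*i+1 < 2*m → G.Adj (h (2*i)) (h (2*i+1))) :
    Matchable (SimpleGraph.induce S G) := by
  classical
  refine ⟨{e | ∃ (i : ℕ) (hi : 2*i+1 < 2*m),
      e = s(⟨h (2*i), hmem _ (by omega)⟩, ⟨h (2*i+1), hmem _ hi⟩)}, ?_, ?_⟩
  · rintro e ⟨i, hi, rfl⟩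
    rw [SimpleGraph.mem_edgeSet]
    simpa using hadj i hi
  · rintro ⟨v, hv⟩
    obtain ⟨j, hj, rfl⟩ := hS v hv
    have hj2 : 2*(j/2)+1 < 2*m := by omega
    refine ⟨s(⟨h (2*(j/2)), hmem _ (by omega)⟩, ⟨h (2*(j/2)+1), hmem _ hj2⟩),
      ⟨⟨j/2, hj2, rfl⟩, ?_⟩, ?_⟩
    · rw [Sym2.mem_iff]
      rcases Nat.even_or_odd j with he | ho
      · left; exact Subtype.ext (congrArg h (by rcases he with ⟨c, hc⟩; omega))
      · right; exact Subtype.ext (congrArg h (by rcases ho with ⟨c, hc⟩; omega))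
    · rintro e' ⟨⟨i', hi', rfl⟩, hw⟩
      rw [Sym2.mem_iff] at hw
      have hval : h j = h (2*i') ∨ h j = h (2*i'+1) := by
        rcases hw with hw | hw
        · left; exact congrArg Subtype.val hw
        · right; exact congrArg Subtype.val hw
      have : i' = j / 2 := by
        rcases hval with hw | hw
        · have := hinj j (2*i') hj (by omega) hw; omega
        · have := hinj j (2*i'+1) hj (by omega) hw; omega
      subst this
      rfl

lemma theta_of_config (g : ℕ → V) (n α β γ : ℕ)
    (hadj : ∀ t, G.Adj (g t) (g (t+1)))
    (hgeq : ∀ t₁ t₂ : ℕ, g t₁ = g t₂ ↔ (t₁ : ZMod n) = (t₂ : ZMod n))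
    (hsurj : ∀ v, ∃ t, t < n ∧ g t = v)
    (hc1 : G.Adj (g 0) (g β)) (hc2 : G.Adj (g α) (g γ))
    (h0α : 0 < α) (hαβ : α < β) (hβγ : β < γ) (hγn : γ + 3 ≤ n)
    (hα : α % 2 = 0) (hβ : β % 2 = 1) (hγ : γ % 2 = 1) (hn : n % 2 = 0) :
    HasConformalOddTheta G := by
  have hα2 : 2 ≤ α := by omega
  have hβ3 : 3 ≤ β := by omega
  have hγ5 : 5 ≤ γ := by omega
  have hn8 : 8 ≤ n := by omega
  have hne : ∀ t₁ t₂ : ℕ, t₁ < t₂ → t₂ < t₁ + n → g t₁ ≠ g t₂ := by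
    intro t₁ t₂ h1 h2 hg
    rw [hgeq, ZMod.natCast_eq_natCast_iff] at hg
    have hd := (Nat.modEq_iff_dvd' (le_of_lt h1)).1 hg
    have := Nat.le_of_dvd (by omega) hd
    omega
  have hgn : g n = g 0 := by
    rw [hgeq, ZMod.natCast_self]; exact (Nat.cast_zero).symm
  -- the three paths
  let P₁ : G.Walk (g 0) (g γ) :=
    ((arcWalk g hadj γ (n-γ)).copy rfl
      ((congrArg g (by omega : γ + (n-γ) = n)).trans hgn)).reverse
  let P₂ : G.Walk (g 0) (g γ) :=
    Walk.cons hc1 ((arcWalk g hadj β (γ-β)).copy rfl (congrArg g (by omega : β + (γ-β) = γ)))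
  let A3 : G.Walk (g 0) (g α) := (arcWalk g hadj 0 α).copy rfl (congrArg g (Nat.zero_add α))
  let P₃ : G.Walk (g 0) (g γ) := (Walk.cons (hc2.symm) A3.reverse).reverse
  -- support characterizations
  have hS1 : ∀ w, w ∈ P₁.support ↔ ∃ t, γ ≤ t ∧ t ≤ n ∧ g t = w := by
    intro w
    simp only [P₁, Walk.support_reverse, List.mem_reverse, Walk.support_copy,
      mem_arcWalk_support]
    constructor
    · rintro ⟨t, ht, rfl⟩; exact ⟨γ + t, by omega, by omega, rfl⟩
    · rintro ⟨t, h1, h2, rfl⟩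
      exact ⟨t - γ, by omega, congrArg g (by omega)⟩
  have hS2 : ∀ w, w ∈ P₂.support ↔ w = g 0 ∨ ∃ t, β ≤ t ∧ t ≤ γ ∧ g t = w := by
    intro w
    simp only [P₂, Walk.support_cons, List.mem_cons, Walk.support_copy, mem_arcWalk_support]
    constructor
    · rintro (rfl | ⟨t, ht, rfl⟩)
      · exact Or.inl rfl
      · exact Or.inr ⟨β + t, by omega, by omega, rfl⟩
    · rintro (rfl | ⟨t, h1, h2, rfl⟩)
      · exact Or.inl rfl
      · exact Or.inr ⟨t - β, by omega, congrArg g (by omega)⟩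
  have hS3 : ∀ w, w ∈ P₃.support ↔ w = g γ ∨ ∃ t, t ≤ α ∧ g t = w := by
    intro w
    simp only [P₃, A3, Walk.support_reverse, List.mem_reverse, Walk.support_cons,
      List.mem_cons, Walk.support_copy, mem_arcWalk_support]
    constructor
    · rintro (rfl | ⟨t, ht, rfl⟩)
      · exact Or.inl rfl
      · exact Or.inr ⟨t, ht, congrArg g (by omega)⟩
    · rintro (rfl | ⟨t, h1, rfl⟩)
      · exact Or.inl rfl
      · exact Or.inr ⟨t, h1, congrArg g (by omega)⟩
  -- paths
  have hip1 : P₁.IsPath := by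
    apply Walk.IsPath.reverse
    rw [Walk.isPath_copy]
    apply arcWalk_isPath
    intro t₁ t₂ h1 h2 hgg
    by_contra hne'
    rcases Nat.lt_or_ge t₁ t₂ with h | h
    · exact hne (γ+t₁) (γ+t₂) (by omega) (by omega) hgg
    · exact hne (γ+t₂) (γ+t₁) (by omega) (by omega) hgg.symm
  have hip2 : P₂.IsPath := by
    apply Walk.IsPath.cons
    · rw [Walk.isPath_copy]
      apply arcWalk_isPath
      intro t₁ t₂ h1 h2 hgg
      by_contra hne'
      rcases Nat.lt_or_ge t₁ t₂ with h | h
      · exact hne (β+t₁) (β+t₂) (by omega) (by omega) hgg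
      · exact hne (β+t₂) (β+t₁) (by omega) (by omega) hgg.symm
    · rw [Walk.support_copy, mem_arcWalk_support]
      rintro ⟨t, ht, hgg⟩
      exact hne 0 (β+t) (by omega) (by omega) hgg.symm
  have hip3 : P₃.IsPath := by
    apply Walk.IsPath.reverse
    apply Walk.IsPath.cons
    · apply Walk.IsPath.reverse
      simp only [A3]
      rw [Walk.isPath_copy]
      apply arcWalk_isPath
      intro t₁ t₂ h1 h2 hgg
      by_contra hne'
      rcases Nat.lt_or_ge t₁ t₂ with h | h
      · exact hne (0+t₁) (0+t₂) (by omega) (by omega) hgg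
      · exact hne (0+t₂) (0+t₁) (by omega) (by omega) hgg.symm
    · simp only [A3, Walk.support_reverse, List.mem_reverse, Walk.support_copy,
        mem_arcWalk_support]
      rintro ⟨t, ht, hgg⟩
      exact hne (0+t) γ (by omega) (by omega) hgg
  -- lengths
  have hl1 : P₁.length = n - γ := by simp [P₁]
  have hl2 : P₂.length = (γ - β) + 1 := by simp [P₂]
  have hl3 : P₃.length = α + 1 := by simp [P₃, A3]
  -- intersections
  have hI12 : ∀ w, w ∈ P₁.support → w ∈ P₂.support → w = g 0 ∨ w = g γ := by
    intro w h1 h2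
    rw [hS1] at h1; rw [hS2] at h2
    obtain ⟨t, ht1, ht2, rfl⟩ := h1
    rcases h2 with h2 | ⟨t', ht1', ht2', he⟩
    · exact Or.inl h2
    · rcases Nat.lt_or_ge t' t with h | h
      · exact absurd he (hne t' t h (by omega))
      · have : t = γ := by omega
        right; exact congrArg g this
  have hI13 : ∀ w, w ∈ P₁.support → w ∈ P₃.support → w = g 0 ∨ w = g γ := by
    intro w h1 h3
    rw [hS1] at h1; rw [hS3] at h3
    obtain ⟨t, ht1, ht2, rfl⟩ := h1
    rcases h3 with h3 | ⟨t', ht', he⟩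
    · exact Or.inr h3
    · -- g t' = g t with t' ≤ α < γ ≤ t ≤ n
      rcases Nat.lt_or_ge t (t' + n) with h | h
      · exact absurd he (hne t' t (by omega) h)
      · -- t = n and t' = 0
        have ht : t = n := by omega
        have ht'0 : t' = 0 := by omega
        left
        rw [ht, hgn]
  have hI23 : ∀ w, w ∈ P₂.support → w ∈ P₃.support → w = g 0 ∨ w = g γ := by
    intro w h2 h3
    rw [hS2] at h2; rw [hS3] at h3
    rcases h2 with h2 | ⟨t, ht1, ht2, rfl⟩
    · exact Or.inl h2
    · rcases h3 with h3 | ⟨t', ht', he⟩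
      · exact Or.inr h3
      · exact absurd he (hne t' t (by omega) (by omega))
  refine ⟨g 0, g γ, P₁, P₂, P₃, hip1, hip2, hip3, ?_, ?_, ?_, ?_, ?_, ?_, hI12, hI13, hI23, ?_⟩
  · rw [hl1, Nat.odd_iff]; omega
  · rw [hl2, Nat.odd_iff]; omega
  · rw [hl3, Nat.odd_iff]; omega
  · omega
  · omega
  · omega
  -- matchable leftover
  · have h2m : 2 * ((β - α - 1)/2) = β - α - 1 := by omega
    apply matchable_pairs _ ((β - α - 1)/2) (fun i => g (α + 1 + i))
    · intro i hi
      rw [h2m] at hi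
      refine ⟨?_, ?_, ?_⟩
      · rw [hS1]; rintro ⟨t', d1, d2, he⟩
        exact hne (α+1+i) t' (by omega) (by omega) he.symm
      · rw [hS2]
        rintro (he | ⟨t', d1, d2, he⟩)
        · exact hne 0 (α+1+i) (by omega) (by omega) he.symm
        · exact hne (α+1+i) t' (by omega) (by omega) he.symm
      · rw [hS3]
        rintro (he | ⟨t', d1, he⟩)
        · exact hne (α+1+i) γ (by omega) (by omega) he
        · exact hne t' (α+1+i) (by omega) (by omega) he
    · intro v hv
      obtain ⟨hv1, hv2, hv3⟩ := hv
      obtain ⟨t, htn, rfl⟩ := hsurj v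
      have htα : α < t := by
        by_contra hle
        exact hv3 ((hS3 _).2 (Or.inr ⟨t, by omega, rfl⟩))
      have htβ : t < β := by
        by_contra hge
        rcases le_or_gt t γ with h | h
        · exact hv2 ((hS2 _).2 (Or.inr ⟨t, by omega, h, rfl⟩))
        · exact hv1 ((hS1 _).2 ⟨t, by omega, by omega, rfl⟩)
      exact ⟨t - α - 1, by omega, congrArg g (by omega)⟩
    · intro i j hi hj he
      rw [h2m] at hi hj
      by_contra hne'
      rcases Nat.lt_or_ge i j with h | h
      · exact hne (α+1+i) (α+1+j) (by omega) (by omega) he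
      · exact hne (α+1+j) (α+1+i) (by omega) (by omega) he.symm
    · intro i hi
      exact hadj (α+1+2*i)

end ThetaAux


/-- Let `G` be a matching covered bipartite graph with a Hamiltonian cycle `C`
containing no conformal odd theta subgraph. Then every pair of crossed chords of `C`
is strongly crossed. -/
theorem statement_15 {V : Type*} [Fintype V] [DecidableEq V] (G : SimpleGraph V)
    (hmc : MatchingCovered G) (hbip : G.Colorable 2)
    (a : V) (C : G.Walk a a) (hC : C.IsCycle) (hham : ∀ v : V, v ∈ C.support)
    (htheta : ¬ HasConformalOddTheta G) :
    ∀ e f : Sym2 V, IsChordOfWalk C e → IsChordOfWalk C f →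
      CrossedOn C e f → StronglyCrossedOn C e f := by
  classical
  intro e f he hf hcross
  obtain ⟨x₁, x₂, y₁, y₂, hee, hff, hblack, hcyc⟩ := hcross
  obtain ⟨h1cyc, h2cyc, h3cyc⟩ := hcyc
  set n := C.length with hnC
  have hn3 : 3 ≤ n := hC.three_le_length
  haveI : NeZero n := ⟨by omega⟩
  have hsuplen : C.support.length = n + 1 := C.length_support
  -- index facts
  have hidxa : C.support.idxOf a = 0 := by
    rw [C.support_eq_cons]; exact List.idxOf_cons_self
  have hFidx : ∀ v : V, C.getVert (C.support.idxOf v) = v := by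
    intro v
    have hlt : C.support.idxOf v < C.support.length :=
      List.idxOf_lt_length_iff.2 (hham v)
    rw [← ThetaAux.walk_support_get C _ hlt]
    exact List.idxOf_get hlt
  have hidx_lt : ∀ v : V, C.support.idxOf v < n := by
    intro v
    have hlt : C.support.idxOf v < C.support.length :=
      List.idxOf_lt_length_iff.2 (hham v)
    rw [hsuplen] at hlt
    rcases Nat.lt_or_ge (C.support.idxOf v) n with h | h
    · exact h
    · exfalso
      have hveq : C.support.idxOf v = n := by omega
      have : v = a := by
        have := hFidx v
        rw [hveq] at this
        rw [← this]
        exact (C.getVert_length).symm ▸ rfl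
      rw [this, hidxa] at hveq; omega
  -- injectivity of getVert on [0, n)
  have htail := hC.support_nodup
  have hFinj : ∀ k l, k < n → l < n → C.getVert k = C.getVert l → k = l := by
    have htl : C.support.tail.length = n := by
      rw [C.support_eq_cons] at hsuplen
      simpa using hsuplen
    have hgetT : ∀ (k : ℕ) (hk : k < n), C.support.tail.get ⟨k, by omega⟩ = C.getVert (k+1) := by
      intro k hk
      have h2 : k + 1 < C.support.length := by omega
      rw [← ThetaAux.walk_support_get C (k+1) h2]
      exact List.get_tail _ _ _ _
    have hlast : C.support.tail.get ⟨n - 1, by omega⟩ = a := by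
      rw [hgetT (n-1) (by omega), show n - 1 + 1 = n by omega]
      exact C.getVert_length
    intro k l hk hl hkl
    rcases Nat.eq_zero_or_pos k with hk0 | hkp
    · rcases Nat.eq_zero_or_pos l with hl0 | hlp
      · omega
      · exfalso
        subst hk0
        have hgl : C.support.tail.get ⟨l - 1, by omega⟩ = a := by
          rw [hgetT (l-1) (by omega), show l - 1 + 1 = l by omega, ← hkl]
          exact C.getVert_zero
        have := (htail.get_inj_iff).1 (hgl.trans hlast.symm)
        have := Fin.mk.injEq .. ▸ this
        omega
    · rcases Nat.eq_zero_or_pos l with hl0 | hlp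
      · exfalso
        subst hl0
        have hgk : C.support.tail.get ⟨k - 1, by omega⟩ = a := by
          rw [hgetT (k-1) (by omega), show k - 1 + 1 = k by omega, hkl]
          exact C.getVert_zero
        have := (htail.get_inj_iff).1 (hgk.trans hlast.symm)
        simp only [Fin.mk.injEq] at this
        omega
      · have hgk : C.support.tail.get ⟨k - 1, by omega⟩ = C.support.tail.get ⟨l - 1, by omega⟩ := by
          rw [hgetT (k-1) (by omega), hgetT (l-1) (by omega),
            show k - 1 + 1 = k by omega, show l - 1 + 1 = l by omega]
          exact hkl
        have := (htail.get_inj_iff).1 hgk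
        simp only [Fin.mk.injEq] at this
        omega
  -- positions of the four vertices
  set p := C.support.idxOf x₁ with hp
  set q := C.support.idxOf y₁ with hq
  set r := C.support.idxOf x₂ with hr
  set s := C.support.idxOf y₂ with hs
  have hpn : p < n := hidx_lt x₁
  have hqn : q < n := hidx_lt y₁
  have hrn : r < n := hidx_lt x₂
  have hsn : s < n := hidx_lt y₂
  have hvalcast : ∀ x : ZMod n, ((x.val : ℕ) : ZMod n) = x := fun x => by
    rw [ZMod.natCast_val, ZMod.cast_id]
  -- relative positions
  set α := ((q : ZMod n) - (p : ZMod n)).val with hα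
  set β := ((r : ZMod n) - (p : ZMod n)).val with hβ
  set γ := ((s : ZMod n) - (p : ZMod n)).val with hγ
  have hcposx₁ : cpos C x₁ = ((p : ℕ) : ZMod n) := rfl
  have h0α : 0 < α := h1cyc
  have hαβ : α < β := h2cyc
  have hβγ : β < γ := h3cyc
  have hγn : γ < n := ZMod.val_lt _
  -- the cyclic parametrization
  set g : ℕ → V := fun t => C.getVert ((p + t) % n) with hg
  have hmodlt : ∀ t : ℕ, (p + t) % n < n := fun t => Nat.mod_lt _ (by omega)
  have hg_eq : ∀ t₁ t₂ : ℕ, g t₁ = g t₂ ↔ ((t₁ : ZMod n) = (t₂ : ZMod n)) := by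
    intro t₁ t₂
    constructor
    · intro h
      have := hFinj _ _ (hmodlt t₁) (hmodlt t₂) h
      have h2 : ((p + t₁ : ℕ) : ZMod n) = ((p + t₂ : ℕ) : ZMod n) :=
        (ZMod.natCast_eq_natCast_iff' _ _ _).2 this
      push_cast at h2
      exact add_left_cancel h2
    · intro h
      have h2 : ((p + t₁ : ℕ) : ZMod n) = ((p + t₂ : ℕ) : ZMod n) := by
        push_cast
        rw [h]
      have := (ZMod.natCast_eq_natCast_iff' _ _ _).1 h2
      show C.getVert _ = C.getVert _
      rw [this]
  have hgn0 : g n = g 0 := by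
    rw [hg_eq, ZMod.natCast_self, Nat.cast_zero]
  have hadjg : ∀ t, G.Adj (g t) (g (t+1)) := by
    intro t
    have hsplit : (p + (t+1)) % n = ((p + t) % n + 1) % n := by
      rw [show p + (t+1) = (p + t) + 1 by omega, Nat.add_mod (p+t) 1 n,
        Nat.mod_eq_of_lt (show 1 < n by omega)]
    rcases Nat.lt_or_ge ((p + t) % n + 1) n with hlt | hge
    · have : (p + (t+1)) % n = (p + t) % n + 1 := by
        rw [hsplit, Nat.mod_eq_of_lt hlt]
      show G.Adj (C.getVert ((p + t) % n)) (C.getVert ((p + (t+1)) % n))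
      rw [this]
      exact C.adj_getVert_succ (by omega)
    · have heq : (p + t) % n + 1 = n := by have := hmodlt t; omega
      have h0 : (p + (t+1)) % n = 0 := by
        rw [hsplit, heq, Nat.mod_self]
      show G.Adj (C.getVert ((p + t) % n)) (C.getVert ((p + (t+1)) % n))
      rw [h0]
      have := C.adj_getVert_succ (show (p+t) % n < C.length by omega)
      rw [heq] at this
      rwa [show C.getVert n = C.getVert 0 by rw [C.getVert_length, C.getVert_zero]] at this
  have hedgeg : ∀ t, s(g t, g (t+1)) ∈ C.edges := by
    intro t
    have hsplit : (p + (t+1)) % n = ((p + t) % n + 1) % n := by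
      rw [show p + (t+1) = (p + t) + 1 by omega, Nat.add_mod (p+t) 1 n,
        Nat.mod_eq_of_lt (show 1 < n by omega)]
    rcases Nat.lt_or_ge ((p + t) % n + 1) n with hlt | hge
    · have : (p + (t+1)) % n = (p + t) % n + 1 := by
        rw [hsplit, Nat.mod_eq_of_lt hlt]
      show s(C.getVert ((p + t) % n), C.getVert ((p + (t+1)) % n)) ∈ C.edges
      rw [this]
      exact ThetaAux.walk_edge_getVert_mem C (by omega)
    · have heq : (p + t) % n + 1 = n := by have := hmodlt t; omega
      have h0 : (p + (t+1)) % n = 0 := by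
        rw [hsplit, heq, Nat.mod_self]
      show s(C.getVert ((p + t) % n), C.getVert ((p + (t+1)) % n)) ∈ C.edges
      rw [h0]
      have := ThetaAux.walk_edge_getVert_mem C (show (p+t) % n < C.length by omega)
      rw [heq] at this
      rwa [show C.getVert n = C.getVert 0 by rw [C.getVert_length, C.getVert_zero]] at this
  have hsurjg : ∀ v : V, ∃ t, t < n ∧ g t = v := by
    intro v
    refine ⟨((C.support.idxOf v : ZMod n) - (p : ZMod n)).val, ZMod.val_lt _, ?_⟩
    have h2 : ((p + ((C.support.idxOf v : ZMod n) - (p : ZMod n)).val : ℕ) : ZMod n)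
        = ((C.support.idxOf v : ℕ) : ZMod n) := by
      push_cast [ZMod.natCast_val, ZMod.cast_id]
      ring
    have h3 := (ZMod.natCast_eq_natCast_iff' _ _ _).1 h2
    rw [Nat.mod_eq_of_lt (hidx_lt v)] at h3
    show C.getVert _ = v
    rw [h3]
    exact hFidx v
  -- identities for the four vertices
  have hgp : ∀ (w : V) (hw : C.support.idxOf w < n),
      g (((C.support.idxOf w : ZMod n) - (p : ZMod n)).val) = w := by
    intro w hw
    have h2 : ((p + ((C.support.idxOf w : ZMod n) - (p : ZMod n)).val : ℕ) : ZMod n)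
        = ((C.support.idxOf w : ℕ) : ZMod n) := by
      push_cast [ZMod.natCast_val, ZMod.cast_id]
      ring
    have h3 := (ZMod.natCast_eq_natCast_iff' _ _ _).1 h2
    rw [Nat.mod_eq_of_lt hw] at h3
    show C.getVert _ = w
    rw [h3]
    exact hFidx w
  have hg0 : g 0 = x₁ := by
    show C.getVert ((p + 0) % n) = x₁
    rw [Nat.add_zero, Nat.mod_eq_of_lt hpn]
    exact hFidx x₁
  have hgα : g α = y₁ := hgp y₁ hqn
  have hgβ : g β = x₂ := hgp x₂ hrn
  have hgγ : g γ = y₂ := hgp y₂ hsn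
  -- chord adjacencies
  have hxx : G.Adj x₁ x₂ := (G.mem_edgeSet).1 (hee ▸ he.1)
  have hyy : G.Adj y₁ y₂ := (G.mem_edgeSet).1 (hff ▸ hf.1)
  -- coloring and parities
  obtain ⟨c⟩ := hbip
  have fin2ne : ∀ x y z : Fin 2, x ≠ y → ((y = z) ↔ ¬ (x = z)) := by decide
  have fin2eq : ∀ x y z : Fin 2, ((x = z) ↔ (y = z)) → x = y := by decide
  have hcol : ∀ k, k ≤ n → (c (C.getVert k) = c a ↔ k % 2 = 0) := by
    intro k
    induction k with
    | zero => intro _; rw [C.getVert_zero]; simp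
    | succ k ih =>
      intro hk
      have hadjk : G.Adj (C.getVert k) (C.getVert (k+1)) := C.adj_getVert_succ (by omega)
      have hnec := c.valid hadjk
      rw [fin2ne _ _ _ hnec, ih (by omega)]
      omega
  have hneven : n % 2 = 0 := by
    have := hcol n le_rfl
    rw [C.getVert_length] at this
    exact this.1 rfl
  have hshift : ∀ cc d : ℕ, d = (p + cc) % n → d % 2 = (p + cc) % 2 := by
    intro cc d hd
    have e1 : (p+cc) % n + n * ((p+cc)/n) = p + cc := Nat.mod_add_div _ _
    have e2 : (n * ((p+cc)/n)) % 2 = 0 := by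
      rw [Nat.mul_mod, hneven]
      simp
    omega
  have hqpα : q = (p + α) % n := by
    rw [hα]
    have h2 : ((p + ((q : ZMod n) - (p : ZMod n)).val : ℕ) : ZMod n) = ((q : ℕ) : ZMod n) := by
      push_cast [ZMod.natCast_val, ZMod.cast_id]
      ring
    have h3 := (ZMod.natCast_eq_natCast_iff' _ _ _).1 h2
    rw [Nat.mod_eq_of_lt hqn] at h3
    omega
  have hrpβ : r = (p + β) % n := by
    rw [hβ]
    have h2 : ((p + ((r : ZMod n) - (p : ZMod n)).val : ℕ) : ZMod n) = ((r : ℕ) : ZMod n) := by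
      push_cast [ZMod.natCast_val, ZMod.cast_id]
      ring
    have h3 := (ZMod.natCast_eq_natCast_iff' _ _ _).1 h2
    rw [Nat.mod_eq_of_lt hrn] at h3
    omega
  have hspγ : s = (p + γ) % n := by
    rw [hγ]
    have h2 : ((p + ((s : ZMod n) - (p : ZMod n)).val : ℕ) : ZMod n) = ((s : ℕ) : ZMod n) := by
      push_cast [ZMod.natCast_val, ZMod.cast_id]
      ring
    have h3 := (ZMod.natCast_eq_natCast_iff' _ _ _).1 h2
    rw [Nat.mod_eq_of_lt hsn] at h3
    omega
  have hblack' : (p % 2 = 0) ↔ (q % 2 = 0) := hblack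
  have hpr : p % 2 ≠ r % 2 := by
    intro hh
    have hcx : c x₁ = c x₂ := by
      apply fin2eq _ _ (c a)
      have e1 := hcol p (by omega)
      have e2 := hcol r (by omega)
      rw [hFidx x₁] at e1
      rw [hFidx x₂] at e2
      rw [e1, e2]
      omega
    exact c.valid hxx hcx
  have hqs : q % 2 ≠ s % 2 := by
    intro hh
    have hcy : c y₁ = c y₂ := by
      apply fin2eq _ _ (c a)
      have e1 := hcol q (by omega)
      have e2 := hcol s (by omega)
      rw [hFidx y₁] at e1
      rw [hFidx y₂] at e2
      rw [e1, e2]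
      omega
    exact c.valid hyy hcy
  have hαe : α % 2 = 0 := by
    have := hshift α q hqpα
    omega
  have hβe : β % 2 = 1 := by
    have := hshift β r hrpβ
    omega
  have hγe : γ % 2 = 1 := by
    have := hshift γ s hspγ
    omega
  -- the two chord adjacencies in g-coordinates
  have hc1 : G.Adj (g 0) (g β) := by rw [hg0, hgβ]; exact hxx
  have hc2 : G.Adj (g α) (g γ) := by rw [hgα, hgγ]; exact hyy
  -- conclude
  refine ⟨x₁, x₂, y₁, y₂, hee, hff, hblack, ⟨h1cyc, h2cyc, h3cyc⟩, ?_, ?_⟩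
  · -- s(x₁, y₂) ∈ C.edges
    have hγeq : γ = n - 1 := by
      by_contra hcon
      exact htheta (ThetaAux.theta_of_config g n α β γ hadjg hg_eq hsurjg hc1 hc2
        h0α hαβ hβγ (by omega) hαe hβe hγe hneven)
    have hend : g (γ + 1) = x₁ := by
      rw [show γ + 1 = n by omega, hgn0, hg0]
    have := hedgeg γ
    rw [hend, hgγ] at this
    rwa [Sym2.eq_swap] at this
  · -- s(x₂, y₁) ∈ C.edges
    have hβeq : β = α + 1 := by
      by_contra hcon
      have hαβ3 : α + 3 ≤ β := by omega
      apply htheta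
      refine ThetaAux.theta_of_config (fun t => g (β + t)) n (γ - β) (n - β) (n - β + α)
        (fun t => hadjg (β + t)) ?_ ?_ ?_ ?_ (by omega) (by omega) (by omega) (by omega)
        (by omega) (by omega) (by omega) hneven
      · intro t₁ t₂
        rw [hg_eq]
        push_cast
        exact add_right_inj _
      · intro v
        obtain ⟨t, htn, hgt⟩ := hsurjg v
        refine ⟨((t : ZMod n) - (β : ZMod n)).val, ZMod.val_lt _, ?_⟩
        rw [← hgt]
        rw [hg_eq]
        push_cast [ZMod.natCast_val, ZMod.cast_id]
        ring
      · show G.Adj (g (β + 0)) (g (β + (n - β)))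
        rw [show β + 0 = β by omega, show β + (n - β) = n by omega, hgn0, hg0, hgβ]
        exact hxx.symm
      · show G.Adj (g (β + (γ - β))) (g (β + (n - β + α)))
        rw [show β + (γ - β) = γ by omega, show β + (n - β + α) = n + α by omega]
        have : g (n + α) = g α := by
          rw [hg_eq]
          push_cast
          rw [ZMod.natCast_self]
          ring
        rw [this, hgα, hgγ]
        exact hyy.symm
    have := hedgeg α
    rw [hgα, show g (α+1) = x₂ by rw [← hβeq, hgβ]] at this
    rwa [Sym2.eq_swap] at this
end

section
/- Let G be a bipartite graph consisting of a Hamiltonian cycle C of even length together with exactly two chords, and suppose these two chords are strongly crossed. Then gf(G) = Af(G) = 2, while c(G) = 3. -/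
/-- The cycle graph on `ZMod m` (for `m ≥ 3`): `i` is adjacent to `i ± 1`. -/
def cyc (m : ℕ) : SimpleGraph (ZMod m) where
  Adj i j := i ≠ j ∧ (j - i = 1 ∨ i - j = 1)
  symm := ⟨fun i j h => ⟨h.1.symm, h.2.symm⟩⟩
  loopless := ⟨fun i h => h.1 rfl⟩

/-- The black vertices in the proper 2-coloring of the even cycle on `ZMod m`. -/
def blackV (m : ℕ) (i : ZMod m) : Prop := i.val % 2 = 0

/-- `e` is (suitable as) a chord of the cycle on `ZMod m`: a non-loop pair of vertices
that is not an edge of the cycle. -/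
def IsChordOf (m : ℕ) (e : Sym2 (ZMod m)) : Prop :=
  ¬ e.IsDiag ∧ e ∉ (cyc m).edgeSet

/-- The graph consisting of the cycle on `ZMod m` together with the chords in `F`. -/
def cycleWithChords (m : ℕ) (F : Set (Sym2 (ZMod m))) : SimpleGraph (ZMod m) :=
  cyc m ⊔ SimpleGraph.fromEdgeSet F

/-- Two (vertex-disjoint) chords `e = x₁x₂` and `f = y₁y₂` with `x₁, y₁` of the same
color are parallel: their ends occur in the cyclic order `x₁, x₂, y₁, y₂`. -/
def ParallelChords (m : ℕ) (e f : Sym2 (ZMod m)) : Prop :=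
  ∃ x₁ x₂ y₁ y₂ : ZMod m, e = s(x₁, x₂) ∧ f = s(y₁, y₂) ∧
    (blackV m x₁ ↔ blackV m y₁) ∧ CyclicOrder4 m x₁ x₂ y₁ y₂

/-- Two (vertex-disjoint) chords `e = x₁x₂` and `f = y₁y₂` with `x₁, y₁` of the same
color are crossed: their ends occur in the cyclic order `x₁, y₁, x₂, y₂`. -/
def CrossedChords (m : ℕ) (e f : Sym2 (ZMod m)) : Prop :=
  ∃ x₁ x₂ y₁ y₂ : ZMod m, e = s(x₁, x₂) ∧ f = s(y₁, y₂) ∧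
    (blackV m x₁ ↔ blackV m y₁) ∧ CyclicOrder4 m x₁ y₁ x₂ y₂

/-- Two crossed chords `e = x₁x₂`, `f = y₁y₂` are strongly crossed if moreover both
`x₁y₂` and `x₂y₁` are edges of the cycle. -/
def StronglyCrossedChords (m : ℕ) (e f : Sym2 (ZMod m)) : Prop :=
  ∃ x₁ x₂ y₁ y₂ : ZMod m, e = s(x₁, x₂) ∧ f = s(y₁, y₂) ∧
    (blackV m x₁ ↔ blackV m y₁) ∧ CyclicOrder4 m x₁ y₁ x₂ y₂ ∧
    (cyc m).Adj x₁ y₂ ∧ (cyc m).Adj x₂ y₁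

/-- `G` belongs to the family `B₀` of even cycles. -/
def MemB0 {V : Type*} (G : SimpleGraph V) : Prop :=
  ∃ n : ℕ, 2 ≤ n ∧ Nonempty (G ≃g cyc (2 * n))

/-- `G` belongs to the family `B₁` of bipartite graphs consisting of a Hamiltonian
cycle together with exactly one chord. -/
def MemB1 {V : Type*} (G : SimpleGraph V) : Prop :=
  ∃ (n : ℕ) (e : Sym2 (ZMod (2 * n))), 2 ≤ n ∧ IsChordOf (2 * n) e ∧
    (cycleWithChords (2 * n) {e}).Colorable 2 ∧
    Nonempty (G ≃g cycleWithChords (2 * n) {e})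

/-- `G` belongs to the family `B₂` of graphs consisting of a Hamiltonian cycle
together with exactly two strongly crossed chords. -/
def MemB2 {V : Type*} (G : SimpleGraph V) : Prop :=
  ∃ (n : ℕ) (e f : Sym2 (ZMod (2 * n))), 2 ≤ n ∧ e ≠ f ∧
    IsChordOf (2 * n) e ∧ IsChordOf (2 * n) f ∧
    StronglyCrossedChords (2 * n) e f ∧
    Nonempty (G ≃g cycleWithChords (2 * n) {e, f})

/-- `G` belongs to the family `B₃` of bipartite graphs consisting of a Hamiltonian
cycle together with one or more pairwise parallel chords. -/
def MemB3 {V : Type*} (G : SimpleGraph V) : Prop :=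
  ∃ (n : ℕ) (F : Set (Sym2 (ZMod (2 * n)))), 2 ≤ n ∧ F.Nonempty ∧
    (∀ e ∈ F, IsChordOf (2 * n) e) ∧
    (∀ e ∈ F, ∀ f ∈ F, e ≠ f → ParallelChords (2 * n) e f) ∧
    (cycleWithChords (2 * n) F).Colorable 2 ∧
    Nonempty (G ≃g cycleWithChords (2 * n) F)

/-- A matchable graph `G` is strongly uniform if `gf(H) = Af(H)` for every conformal
matchable subgraph `H` of `G`. -/
def StronglyUniform {V : Type*} (G : SimpleGraph V) : Prop :=
  ∀ H : G.Subgraph, Matchable H.coe →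
    Matchable (SimpleGraph.induce H.vertsᶜ G) → gf H.coe = Af H.coe


section Aux

open Function Set

lemma sym2_map_symm_map {V W : Type*} (σ : V ≃ W) (M : Set (Sym2 V)) :
    Sym2.map ⇑σ.symm '' (Sym2.map ⇑σ '' M) = M := by
  rw [Set.image_image]
  have h : ∀ g : Sym2 V, Sym2.map ⇑σ.symm (Sym2.map ⇑σ g) = g := by
    intro g
    induction g using Sym2.ind with
    | _ a b => simp [Sym2.map_pair_eq]
  simp only [h, Set.image_id']

lemma sym2_map_map_symm {V W : Type*} (σ : V ≃ W) (M : Set (Sym2 W)) :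
    Sym2.map ⇑σ '' (Sym2.map ⇑σ.symm '' M) = M := by
  have := sym2_map_symm_map σ.symm M
  simpa using this

lemma iso_map_symm_map {V W : Type*} {G : SimpleGraph V} {G' : SimpleGraph W} (σ : G ≃g G')
    (M : Set (Sym2 V)) : Sym2.map ⇑σ.symm '' (Sym2.map ⇑σ '' M) = M := by
  rw [Set.image_image]
  have h : ∀ g : Sym2 V, Sym2.map ⇑σ.symm (Sym2.map ⇑σ g) = g := by
    intro g
    induction g using Sym2.ind with
    | _ a b => simp [Sym2.map_pair_eq]
  simp only [h, Set.image_id']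

lemma iso_map_map_symm {V W : Type*} {G : SimpleGraph V} {G' : SimpleGraph W} (σ : G ≃g G')
    (M : Set (Sym2 W)) : Sym2.map ⇑σ '' (Sym2.map ⇑σ.symm '' M) = M := by
  rw [Set.image_image]
  have h : ∀ g : Sym2 W, Sym2.map ⇑σ (Sym2.map ⇑σ.symm g) = g := by
    intro g
    induction g using Sym2.ind with
    | _ a b => simp [Sym2.map_pair_eq]
  simp only [h, Set.image_id']

lemma isPM_map {V W : Type*} {G : SimpleGraph V} {G' : SimpleGraph W} (σ : G ≃g G')
    {M : Set (Sym2 V)} (h : IsPM G M) : IsPM G' (Sym2.map ⇑σ '' M) := by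
  constructor
  · rintro g ⟨g', hg', rfl⟩
    exact σ.toHom.map_mem_edgeSet (h.1 hg')
  · intro w
    obtain ⟨g, ⟨hgM, hgw⟩, hu⟩ := h.2 (σ.symm w)
    refine ⟨Sym2.map ⇑σ g, ⟨⟨g, hgM, rfl⟩, ?_⟩, ?_⟩
    · rw [Sym2.mem_map]
      exact ⟨σ.symm w, hgw, by simp⟩
    · rintro g' ⟨⟨g₀, hg₀, rfl⟩, hw⟩
      rw [Sym2.mem_map] at hw
      obtain ⟨a, ha, hfa⟩ := hw
      have ha' : a = σ.symm w := by
        have := congrArg σ.symm hfa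
        simpa using this
      subst ha'
      rw [hu g₀ ⟨hg₀, ha⟩]

lemma sym2_symm_coe {V W : Type*} {G : SimpleGraph V} {G' : SimpleGraph W} (σ : G ≃g G') :
    ⇑σ.symm = ⇑(σ.toEquiv.symm) := rfl

lemma isPM_map_symm {V W : Type*} {G : SimpleGraph V} {G' : SimpleGraph W} (σ : G ≃g G')
    {M : Set (Sym2 W)} (h : IsPM G' M) : IsPM G (Sym2.map ⇑σ.symm '' M) :=
  isPM_map σ.symm h

lemma image_inter_map {V W : Type*} (σ : V ≃ W) (A B : Set (Sym2 V)) :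
    Sym2.map ⇑σ '' (A ∩ B) = Sym2.map ⇑σ '' A ∩ Sym2.map ⇑σ '' B :=
  Set.image_inter (Sym2.map.injective σ.injective)

lemma isGFS_map {V W : Type*} {G : SimpleGraph V} {G' : SimpleGraph W} (σ : G ≃g G')
    (S : Set (Sym2 V)) (hS : IsGlobalForcingSet G S) :
    IsGlobalForcingSet G' (Sym2.map ⇑σ '' S) := by
  constructor
  · rintro g ⟨g', hg', rfl⟩
    exact σ.toHom.map_mem_edgeSet (hS.1 hg')
  · intro M₁ M₂ h₁ h₂ hne
    have e₁ : Sym2.map ⇑σ '' (Sym2.map ⇑σ.symm '' M₁) = M₁ := by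
      exact iso_map_map_symm σ M₁
    have e₂ : Sym2.map ⇑σ '' (Sym2.map ⇑σ.symm '' M₂) = M₂ := by
      exact iso_map_map_symm σ M₂
    have h₁' := isPM_map_symm σ h₁
    have h₂' := isPM_map_symm σ h₂
    have hne' : Sym2.map ⇑σ.symm '' M₁ ≠ Sym2.map ⇑σ.symm '' M₂ := by
      intro h; apply hne; rw [← e₁, ← e₂, h]
    have hforce := hS.2 _ _ h₁' h₂' hne'
    intro hcontra
    apply hforce
    have inj : Injective (Set.image (Sym2.map ⇑σ)) :=
      Set.image_injective.mpr (Sym2.map.injective σ.injective)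
    apply inj
    rw [Set.image_inter (Sym2.map.injective σ.injective),
      Set.image_inter (Sym2.map.injective σ.injective), e₁, e₂]
    exact hcontra

lemma gf_map {V W : Type*} {G : SimpleGraph V} {G' : SimpleGraph W} (σ : G ≃g G') :
    gf G = gf G' := by
  have hset : {n | ∃ S, IsGlobalForcingSet G S ∧ S.ncard = n}
      = {n | ∃ S, IsGlobalForcingSet G' S ∧ S.ncard = n} := by
    ext n
    constructor
    · rintro ⟨S, hS, rfl⟩
      exact ⟨_, isGFS_map σ S hS, Set.ncard_image_of_injective _ (Sym2.map.injective σ.injective)⟩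
    · rintro ⟨S, hS, rfl⟩
      exact ⟨_, isGFS_map σ.symm S hS, Set.ncard_image_of_injective _
        (Sym2.map.injective σ.symm.injective)⟩
  unfold gf; rw [hset]

def delIso {V W : Type*} {G : SimpleGraph V} {G' : SimpleGraph W} (σ : G ≃g G')
    (S : Set (Sym2 V)) : G.deleteEdges S ≃g G'.deleteEdges (Sym2.map ⇑σ '' S) where
  toEquiv := σ.toEquiv
  map_rel_iff' := by
    intro a b
    simp only [SimpleGraph.deleteEdges_adj]
    constructor
    · rintro ⟨hadj, hmem⟩
      refine ⟨σ.map_rel_iff.mp hadj, fun h => hmem ?_⟩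
      exact ⟨s(a, b), h, by rw [Sym2.map_pair_eq]; rfl⟩
    · rintro ⟨hadj, hmem⟩
      refine ⟨σ.map_rel_iff.mpr hadj, fun h => hmem ?_⟩
      obtain ⟨g, hg, hgeq⟩ := h
      have : g = s(a, b) := by
        apply Sym2.map.injective σ.injective
        rw [hgeq, Sym2.map_pair_eq]; rfl
      rwa [this] at hg

lemma delIso_coe {V W : Type*} {G : SimpleGraph V} {G' : SimpleGraph W} (σ : G ≃g G')
    (S : Set (Sym2 V)) : ⇑(delIso σ S) = ⇑σ := rfl

lemma delIso_symm_coe {V W : Type*} {G : SimpleGraph V} {G' : SimpleGraph W} (σ : G ≃g G')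
    (S : Set (Sym2 V)) : ⇑(delIso σ S).symm = ⇑σ.symm := rfl

lemma isAFS_map {V W : Type*} {G : SimpleGraph V} {G' : SimpleGraph W} (σ : G ≃g G')
    (M S : Set (Sym2 V)) (h : IsAntiForcingSet G M S) :
    IsAntiForcingSet G' (Sym2.map ⇑σ '' M) (Sym2.map ⇑σ '' S) := by
  obtain ⟨hsub, hdisj, hpm, huniq⟩ := h
  refine ⟨?_, ?_, ?_, ?_⟩
  · rintro g ⟨g', hg', rfl⟩
    exact σ.toHom.map_mem_edgeSet (hsub hg')
  · rw [← Set.image_inter (Sym2.map.injective σ.injective), hdisj, Set.image_empty]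
  · have := isPM_map (delIso σ S) hpm
    rwa [delIso_coe] at this
  · intro M' hM'
    have h1 : IsPM (G.deleteEdges S) (Sym2.map ⇑σ.symm '' M') := by
      have := isPM_map (delIso σ S).symm hM'
      rwa [delIso_symm_coe] at this
    have h2 := huniq _ h1
    have : Sym2.map ⇑σ '' (Sym2.map ⇑σ.symm '' M') = Sym2.map ⇑σ '' M := by rw [h2]
    rwa [iso_map_map_symm σ] at this

lemma af_map {V W : Type*} {G : SimpleGraph V} {G' : SimpleGraph W} (σ : G ≃g G')
    (M : Set (Sym2 V)) : af G M = af G' (Sym2.map ⇑σ '' M) := by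
  have hset : {n | ∃ S, IsAntiForcingSet G M S ∧ S.ncard = n}
      = {n | ∃ S, IsAntiForcingSet G' (Sym2.map ⇑σ '' M) S ∧ S.ncard = n} := by
    ext n
    constructor
    · rintro ⟨S, hS, rfl⟩
      exact ⟨_, isAFS_map σ M S hS, Set.ncard_image_of_injective _
        (Sym2.map.injective σ.injective)⟩
    · rintro ⟨S, hS, rfl⟩
      have := isAFS_map σ.symm _ S hS
      rw [iso_map_symm_map σ M] at this
      exact ⟨_, this, Set.ncard_image_of_injective _ (Sym2.map.injective σ.symm.injective)⟩
  unfold af; rw [hset]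

lemma Af_map {V W : Type*} {G : SimpleGraph V} {G' : SimpleGraph W} (σ : G ≃g G') :
    Af G = Af G' := by
  have hset : {n | ∃ M, IsPM G M ∧ af G M = n} = {n | ∃ M, IsPM G' M ∧ af G' M = n} := by
    ext n
    constructor
    · rintro ⟨M, hM, rfl⟩
      exact ⟨_, isPM_map σ hM, (af_map σ M).symm⟩
    · rintro ⟨M, hM, rfl⟩
      refine ⟨_, isPM_map_symm σ hM, ?_⟩
      rw [af_map σ, iso_map_map_symm σ M]
  unfold Af; rw [hset]

lemma edgeSet_ncard_map {V W : Type*} {G : SimpleGraph V} {G' : SimpleGraph W} (σ : G ≃g G') :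
    G.edgeSet.ncard = G'.edgeSet.ncard := by
  have : G'.edgeSet = Sym2.map ⇑σ '' G.edgeSet := by
    ext g
    constructor
    · intro hg
      refine ⟨Sym2.map ⇑σ.symm g, ?_, ?_⟩
      · exact σ.symm.toHom.map_mem_edgeSet hg
      · have := iso_map_map_symm σ {g}
        simp only [Set.image_singleton, Set.singleton_eq_singleton_iff] at this
        exact this
    · rintro ⟨g', hg', rfl⟩
      exact σ.toHom.map_mem_edgeSet hg'
  rw [this, Set.ncard_image_of_injective _ (Sym2.map.injective σ.injective)]


def Mphi {V : Type*} (φ : V → V) : Set (Sym2 V) := {g | ∃ v, g = s(v, φ v)}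

lemma mem_Mphi {V : Type*} {φ : V → V} (hinv : ∀ v, φ (φ v) = v) (a b : V) :
    s(a, b) ∈ Mphi φ ↔ φ a = b ∨ φ b = a := by
  constructor
  · rintro ⟨v, hv⟩
    rw [Sym2.eq_iff] at hv
    rcases hv with ⟨rfl, rfl⟩ | ⟨ha, rfl⟩
    · exact Or.inl rfl
    · exact Or.inr ha.symm
  · rintro (rfl | h)
    · exact ⟨a, rfl⟩
    · exact ⟨b, by rw [← h, Sym2.eq_swap]⟩

lemma isPM_Mphi {V : Type*} {H : SimpleGraph V} {φ : V → V} (hinv : ∀ v, φ (φ v) = v)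
    (hadj : ∀ v, H.Adj v (φ v)) : IsPM H (Mphi φ) := by
  constructor
  · rintro g ⟨v, rfl⟩
    exact (hadj v)
  · intro w
    refine ⟨s(w, φ w), ⟨⟨w, rfl⟩, Sym2.mem_mk_left _ _⟩, ?_⟩
    rintro g ⟨⟨v, rfl⟩, hw⟩
    rw [Sym2.mem_iff] at hw
    rcases hw with rfl | rfl
    · rfl
    · rw [hinv v]
      exact Sym2.eq_swap

lemma eq_Mphi {V : Type*} {H : SimpleGraph V} {M : Set (Sym2 V)} {φ : V → V}
    (hM : IsPM H M) (hsub : ∀ v, s(v, φ v) ∈ M) : M = Mphi φ := by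
  ext g
  induction g using Sym2.ind with
  | _ a b =>
    constructor
    · intro hg
      have := (hM.2 a).unique ⟨hg, Sym2.mem_mk_left _ _⟩ ⟨hsub a, Sym2.mem_mk_left _ _⟩
      rw [this]
      exact ⟨a, rfl⟩
    · rintro ⟨v, hv⟩
      rw [hv]; exact hsub v

lemma isPM_deleteEdges_of {V : Type*} {G : SimpleGraph V} {M S : Set (Sym2 V)}
    (hpm : IsPM G M) (hdisj : S ∩ M = ∅) : IsPM (G.deleteEdges S) M := by
  refine ⟨?_, hpm.2⟩
  intro g hg
  rw [SimpleGraph.edgeSet_deleteEdges]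
  refine ⟨hpm.1 hg, fun hS => ?_⟩
  have : g ∈ S ∩ M := ⟨hS, hg⟩
  rw [hdisj] at this
  exact this

lemma isPM_of_deleteEdges {V : Type*} {G : SimpleGraph V} {M S : Set (Sym2 V)}
    (hpm : IsPM (G.deleteEdges S) M) : IsPM G M := by
  refine ⟨?_, hpm.2⟩
  intro g hg
  have := hpm.1 hg
  rw [SimpleGraph.edgeSet_deleteEdges] at this
  exact this.1

lemma disj_of_isPM_deleteEdges {V : Type*} {G : SimpleGraph V} {M S : Set (Sym2 V)}
    (hpm : IsPM (G.deleteEdges S) M) : M ∩ S = ∅ := by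
  ext g
  simp only [Set.mem_inter_iff, Set.mem_empty_iff_false, iff_false, not_and]
  intro hg
  have := hpm.1 hg
  rw [SimpleGraph.edgeSet_deleteEdges] at this
  exact this.2

namespace Core

variable {m : ℕ}

/-- vertex at offset `i` from the base point `x`. -/
def pp (x : ZMod m) (i : ℕ) : ZMod m := x + i

def E0 (x : ZMod m) (D : ℕ) : Sym2 (ZMod m) := s(pp x 0, pp x (D+1))

def F0 (x : ZMod m) (D : ℕ) : Sym2 (ZMod m) := s(pp x D, pp x (m-1))

def HH (x : ZMod m) (D : ℕ) : SimpleGraph (ZMod m) :=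
  cycleWithChords m {E0 x D, F0 x D}

lemma pp_add_m (x : ZMod m) (a : ℕ) : pp x (a + m) = pp x a := by
  unfold pp; push_cast; simp [ZMod.natCast_self]

lemma pp_inj (hm : 0 < m) (x : ZMod m) {a b : ℕ} (ha : a < m) (hb : b < m) :
    pp x a = pp x b ↔ a = b := by
  unfold pp
  rw [add_right_inj, ZMod.natCast_eq_natCast_iff', Nat.mod_eq_of_lt ha, Nat.mod_eq_of_lt hb]

lemma pp_zero (x : ZMod m) : pp x 0 = x := by simp [pp]

lemma sym2pp (hm : 0 < m) (x : ZMod m) {a b c d : ℕ} (ha : a < m) (hb : b < m)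
    (hc : c < m) (hd : d < m) :
    s(pp x a, pp x b) = s(pp x c, pp x d) ↔ (a = c ∧ b = d) ∨ (a = d ∧ b = c) := by
  rw [Sym2.eq_iff, pp_inj hm x ha hc, pp_inj hm x hb hd, pp_inj hm x ha hd, pp_inj hm x hb hc]

/-- the index of a vertex relative to `x`. -/
def q (x w : ZMod m) : ℕ := (w - x).val

lemma q_lt [NeZero m] (x w : ZMod m) : q x w < m := ZMod.val_lt _

lemma q_pp (x : ZMod m) {J : ℕ} (hJ : J < m) : q x (pp x J) = J := by
  unfold q pp
  rw [add_sub_cancel_left, ZMod.val_natCast, Nat.mod_eq_of_lt hJ]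

lemma pp_q [NeZero m] (x w : ZMod m) : pp x (q x w) = w := by
  unfold q pp
  rw [ZMod.natCast_zmod_val, add_sub_cancel]

lemma padd1 (x : ZMod m) (i : ℕ) : pp x i + 1 = pp x (i + 1) := by
  unfold pp; push_cast; ring

lemma psub1 (hm : 0 < m) (x : ZMod m) (i : ℕ) : pp x i - 1 = pp x (i + (m - 1)) := by
  unfold pp
  have h1 : ((i + (m - 1) : ℕ) : ZMod m) = (i : ZMod m) + ((m - 1 : ℕ) : ZMod m) := by push_cast; ring
  have h2 : ((m - 1 : ℕ) : ZMod m) = -1 := by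
    have : ((m - 1 : ℕ) : ZMod m) = (m : ZMod m) - 1 := by
      rw [Nat.cast_sub (by omega)]; simp
    rw [this, ZMod.natCast_self]; ring
  rw [h1, h2]; ring

lemma one_ne_zero' (hm : 2 ≤ m) : (1 : ZMod m) ≠ 0 := by
  haveI : NeZero m := ⟨by omega⟩
  haveI : Fact (1 < m) := ⟨by omega⟩
  intro h
  have := congrArg ZMod.val h
  rw [ZMod.val_one, ZMod.val_zero] at this
  omega

lemma adj_iff (x : ZMod m) (D : ℕ) (u v : ZMod m) :
    (HH x D).Adj u v ↔
      ((v - u = 1 ∨ u - v = 1) ∨ s(u, v) = E0 x D ∨ s(u, v) = F0 x D) ∧ u ≠ v := by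
  show (cyc m).Adj u v ∨ (SimpleGraph.fromEdgeSet _).Adj u v ↔ _
  rw [SimpleGraph.fromEdgeSet_adj]
  constructor
  · rintro (⟨hne, h⟩ | ⟨hmem, hne⟩)
    · exact ⟨Or.inl h, hne⟩
    · rcases hmem with h | h
      · exact ⟨Or.inr (Or.inl h), hne⟩
      · exact ⟨Or.inr (Or.inr h), hne⟩
  · rintro ⟨(h | h | h), hne⟩
    · exact Or.inl ⟨hne, h⟩
    · exact Or.inr ⟨Or.inl h, hne⟩
    · exact Or.inr ⟨Or.inr h, hne⟩

lemma adj_succ (hm : 2 ≤ m) (x : ZMod m) (D : ℕ) (J : ℕ) :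
    (HH x D).Adj (pp x J) (pp x (J + 1)) := by
  rw [adj_iff]
  constructor
  · left; left
    rw [← padd1]; ring
  · intro h
    rw [← padd1] at h
    exact one_ne_zero' hm (by linear_combination -h)

lemma adj_pred (hm : 2 ≤ m) (x : ZMod m) (D : ℕ) (J : ℕ) :
    (HH x D).Adj (pp x J) (pp x (J + (m - 1))) := by
  rw [adj_iff]
  constructor
  · left; right
    rw [← psub1 (by omega)]; ring
  · intro h
    rw [← psub1 (by omega)] at h
    exact one_ne_zero' hm (by linear_combination h)

lemma adj_E0 (hm : 2 ≤ m) (x : ZMod m) {D : ℕ} (hD : D + 1 < m) :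
    (HH x D).Adj (pp x 0) (pp x (D + 1)) := by
  rw [adj_iff]
  refine ⟨Or.inr (Or.inl rfl), ?_⟩
  intro h
  rw [pp_inj (by omega) x (by omega) hD] at h
  omega

lemma adj_F0 (hm : 2 ≤ m) (x : ZMod m) {D : ℕ} (hD : D < m - 1) :
    (HH x D).Adj (pp x D) (pp x (m - 1)) := by
  rw [adj_iff]
  refine ⟨Or.inr (Or.inr rfl), ?_⟩
  intro h
  rw [pp_inj (by omega) x (by omega) (by omega)] at h
  omega


def Good (m D : ℕ) : Prop := 6 ≤ m ∧ m % 2 = 0 ∧ 2 ≤ D ∧ D + 4 ≤ m ∧ D % 2 = 0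

def ph1 (x : ZMod m) (w : ZMod m) : ZMod m := if q x w % 2 = 0 then w + 1 else w - 1

def ph2 (x : ZMod m) (w : ZMod m) : ZMod m := if q x w % 2 = 0 then w - 1 else w + 1

def ph3 (x : ZMod m) (D : ℕ) (w : ZMod m) : ZMod m :=
  if q x w = 0 then pp x (D+1) else if q x w = D+1 then pp x 0 else
  if q x w ≤ D then (if q x w % 2 = 1 then w + 1 else w - 1)
  else (if q x w % 2 = 0 then w + 1 else w - 1)

def ph4 (x : ZMod m) (D : ℕ) (w : ZMod m) : ZMod m :=
  if q x w = D then pp x (m-1) else if q x w = m-1 then pp x D else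
  if q x w < D then (if q x w % 2 = 0 then w + 1 else w - 1)
  else (if q x w % 2 = 1 then w + 1 else w - 1)

lemma pp_norm (x : ZMod m) {a b : ℕ} (h : a = b + m) : pp x a = pp x b := by
  rw [h, pp_add_m]

variable {x : ZMod m} {D J : ℕ}

lemma ph1_ev (hJ : J < m) (h : J % 2 = 0) : ph1 x (pp x J) = pp x (J+1) := by
  unfold ph1; rw [q_pp x hJ, if_pos h, padd1]

lemma ph1_od (hJ : J < m) (h : J % 2 = 1) : ph1 x (pp x J) = pp x (J + (m-1)) := by
  unfold ph1; rw [q_pp x hJ, if_neg (by omega), psub1 (by omega)]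

lemma ph2_ev (hJ : J < m) (h : J % 2 = 1) : ph2 x (pp x J) = pp x (J+1) := by
  unfold ph2; rw [q_pp x hJ, if_neg (by omega), padd1]

lemma ph2_od (hJ : J < m) (h : J % 2 = 0) : ph2 x (pp x J) = pp x (J + (m-1)) := by
  unfold ph2; rw [q_pp x hJ, if_pos h, psub1 (by omega)]

lemma ph3_zero (h0 : 0 < m) : ph3 x D (pp x 0) = pp x (D+1) := by
  unfold ph3; rw [q_pp x h0, if_pos rfl]

lemma ph3_D1 (h : D + 1 < m) : ph3 x D (pp x (D+1)) = pp x 0 := by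
  unfold ph3; rw [q_pp x h, if_neg (by omega), if_pos rfl]

lemma ph3_lo (hJ : J < m) (h1 : 1 ≤ J) (h2 : J ≤ D) (h3 : J % 2 = 1) :
    ph3 x D (pp x J) = pp x (J+1) := by
  unfold ph3
  rw [q_pp x hJ, if_neg (by omega), if_neg (by omega), if_pos h2, if_pos h3, padd1]

lemma ph3_le (hJ : J < m) (h1 : J ≠ 0) (h2 : J ≤ D) (h3 : J % 2 = 0) :
    ph3 x D (pp x J) = pp x (J + (m-1)) := by
  unfold ph3
  rw [q_pp x hJ, if_neg h1, if_neg (by omega), if_pos h2, if_neg (by omega), psub1 (by omega)]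

lemma ph3_he (hJ : J < m) (h1 : D + 1 < J) (h3 : J % 2 = 0) :
    ph3 x D (pp x J) = pp x (J+1) := by
  unfold ph3
  rw [q_pp x hJ, if_neg (by omega), if_neg (by omega), if_neg (by omega), if_pos h3, padd1]

lemma ph3_ho (hJ : J < m) (h1 : D + 1 < J) (h3 : J % 2 = 1) :
    ph3 x D (pp x J) = pp x (J + (m-1)) := by
  unfold ph3
  rw [q_pp x hJ, if_neg (by omega), if_neg (by omega), if_neg (by omega), if_neg (by omega),
    psub1 (by omega)]

lemma ph4_D (hD : D < m) : ph4 x D (pp x D) = pp x (m-1) := by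
  unfold ph4; rw [q_pp x hD, if_pos rfl]

lemma ph4_l (h0 : 0 < m) (hne : D ≠ m - 1) : ph4 x D (pp x (m-1)) = pp x D := by
  unfold ph4; rw [q_pp x (by omega), if_neg (by omega), if_pos rfl]

lemma ph4_loe (hJ : J < m) (hD : D < m) (h2 : J < D) (h3 : J % 2 = 0) :
    ph4 x D (pp x J) = pp x (J+1) := by
  unfold ph4
  rw [q_pp x hJ, if_neg (by omega), if_neg (by omega), if_pos h2, if_pos h3, padd1]

lemma ph4_loo (hJ : J < m) (hD : D < m) (h2 : J < D) (h3 : J % 2 = 1) :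
    ph4 x D (pp x J) = pp x (J + (m-1)) := by
  unfold ph4
  rw [q_pp x hJ, if_neg (by omega), if_neg (by omega), if_pos h2, if_neg (by omega),
    psub1 (by omega)]

lemma ph4_hio (hJ : J < m - 1) (h2 : D < J) (h3 : J % 2 = 1) :
    ph4 x D (pp x J) = pp x (J+1) := by
  unfold ph4
  rw [q_pp x (by omega), if_neg (by omega), if_neg (by omega), if_neg (by omega), if_pos h3, padd1]

lemma ph4_hie (hJ : J < m - 1) (h2 : D < J) (h3 : J % 2 = 0) :
    ph4 x D (pp x J) = pp x (J + (m-1)) := by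
  unfold ph4
  rw [q_pp x (by omega), if_neg (by omega), if_neg (by omega), if_neg (by omega),
    if_neg (by omega), psub1 (by omega)]

lemma ph1_inv (hm2 : 2 ≤ m) (hme : m % 2 = 0) : ∀ w, ph1 x (ph1 x w) = w := by
  haveI : NeZero m := ⟨by omega⟩
  intro w
  have hJ : q x w < m := q_lt x w
  have hw : pp x (q x w) = w := pp_q x w
  set J := q x w with hJd
  by_cases h : J % 2 = 0
  · rw [← hw, ph1_ev hJ h, ph1_od (by omega) (by omega),
      pp_norm x (show J + 1 + (m-1) = J + m by omega)]
  · rw [← hw, ph1_od hJ (by omega),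
      pp_norm x (show J + (m-1) = (J-1) + m by omega), ph1_ev (by omega) (by omega),
      show J - 1 + 1 = J by omega]

lemma ph2_inv (hm2 : 2 ≤ m) (hme : m % 2 = 0) : ∀ w, ph2 x (ph2 x w) = w := by
  haveI : NeZero m := ⟨by omega⟩
  intro w
  have hJ : q x w < m := q_lt x w
  have hw : pp x (q x w) = w := pp_q x w
  set J := q x w with hJd
  by_cases h : J % 2 = 0
  · by_cases h0 : J = 0
    · rw [← hw, h0, ph2_od (by omega) (by omega),
        show (0:ℕ) + (m-1) = m - 1 by omega, ph2_ev (by omega) (by omega),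
        pp_norm x (show m - 1 + 1 = 0 + m by omega)]
    · rw [← hw, ph2_od hJ h,
        pp_norm x (show J + (m-1) = (J-1) + m by omega), ph2_ev (by omega) (by omega),
        show J - 1 + 1 = J by omega]
  · by_cases hlast : J = m - 1
    · rw [← hw, hlast, ph2_ev (by omega) (by omega),
        pp_norm x (show m - 1 + 1 = 0 + m by omega), ph2_od (by omega) (by omega),
        show (0:ℕ) + (m-1) = m - 1 by omega]
    · rw [← hw, ph2_ev hJ (by omega), ph2_od (by omega) (by omega),
        pp_norm x (show J + 1 + (m-1) = J + m by omega)]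

lemma ph3_inv (hg : Good m D) : ∀ w, ph3 x D (ph3 x D (w)) = w := by
  obtain ⟨hm6, hme, hD2, hDm, hDe⟩ := hg
  haveI : NeZero m := ⟨by omega⟩
  intro w
  have hJ : q x w < m := q_lt x w
  have hw : pp x (q x w) = w := pp_q x w
  set J := q x w with hJd
  by_cases h0 : J = 0
  · rw [← hw, h0, ph3_zero (by omega), ph3_D1 (by omega)]
  by_cases hD1 : J = D + 1
  · rw [← hw, hD1, ph3_D1 (by omega), ph3_zero (by omega)]
  by_cases hle : J ≤ D
  · by_cases h : J % 2 = 1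
    · rw [← hw, ph3_lo hJ (by omega) hle h, ph3_le (by omega) (by omega) (by omega) (by omega),
        pp_norm x (show J + 1 + (m-1) = J + m by omega)]
    · rw [← hw, ph3_le hJ h0 hle (by omega),
        pp_norm x (show J + (m-1) = (J-1) + m by omega),
        ph3_lo (by omega) (by omega) (by omega) (by omega), show J - 1 + 1 = J by omega]
  · by_cases h : J % 2 = 0
    · rw [← hw, ph3_he hJ (by omega) h, ph3_ho (by omega) (by omega) (by omega),
        pp_norm x (show J + 1 + (m-1) = J + m by omega)]
    · rw [← hw, ph3_ho hJ (by omega) (by omega),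
        pp_norm x (show J + (m-1) = (J-1) + m by omega),
        ph3_he (by omega) (by omega) (by omega), show J - 1 + 1 = J by omega]

lemma ph4_inv (hg : Good m D) : ∀ w, ph4 x D (ph4 x D (w)) = w := by
  obtain ⟨hm6, hme, hD2, hDm, hDe⟩ := hg
  haveI : NeZero m := ⟨by omega⟩
  intro w
  have hJ : q x w < m := q_lt x w
  have hw : pp x (q x w) = w := pp_q x w
  set J := q x w with hJd
  by_cases hD0 : J = D
  · rw [← hw, hD0, ph4_D (by omega), ph4_l (by omega) (by omega)]
  by_cases hlast : J = m - 1
  · rw [← hw, hlast, ph4_l (by omega) (by omega), ph4_D (by omega)]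
  by_cases hlt : J < D
  · by_cases h : J % 2 = 0
    · rw [← hw, ph4_loe hJ (by omega) hlt h, ph4_loo (by omega) (by omega) (by omega) (by omega),
        pp_norm x (show J + 1 + (m-1) = J + m by omega)]
    · rw [← hw, ph4_loo hJ (by omega) hlt (by omega),
        pp_norm x (show J + (m-1) = (J-1) + m by omega),
        ph4_loe (by omega) (by omega) (by omega) (by omega), show J - 1 + 1 = J by omega]
  · by_cases h : J % 2 = 1
    · rw [← hw, ph4_hio (by omega) (by omega) h, ph4_hie (by omega) (by omega) (by omega),
        pp_norm x (show J + 1 + (m-1) = J + m by omega)]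
    · rw [← hw, ph4_hie (by omega) (by omega) (by omega),
        pp_norm x (show J + (m-1) = (J-1) + m by omega),
        ph4_hio (by omega) (by omega) (by omega), show J - 1 + 1 = J by omega]


lemma ph1_adj (hg : Good m D) : ∀ w, (HH x D).Adj w (ph1 x w) := by
  obtain ⟨hm6, hme, hD2, hDm, hDe⟩ := hg
  haveI : NeZero m := ⟨by omega⟩
  intro w
  have hJ : q x w < m := q_lt x w
  have hw : pp x (q x w) = w := pp_q x w
  set J := q x w with hJd
  by_cases h : J % 2 = 0
  · rw [← hw, ph1_ev hJ h]; exact adj_succ (by omega) x D J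
  · rw [← hw, ph1_od hJ (by omega)]; exact adj_pred (by omega) x D J

lemma ph2_adj (hg : Good m D) : ∀ w, (HH x D).Adj w (ph2 x w) := by
  obtain ⟨hm6, hme, hD2, hDm, hDe⟩ := hg
  haveI : NeZero m := ⟨by omega⟩
  intro w
  have hJ : q x w < m := q_lt x w
  have hw : pp x (q x w) = w := pp_q x w
  set J := q x w with hJd
  by_cases h : J % 2 = 0
  · rw [← hw, ph2_od hJ h]; exact adj_pred (by omega) x D J
  · rw [← hw, ph2_ev hJ (by omega)]; exact adj_succ (by omega) x D J

lemma ph3_adj (hg : Good m D) : ∀ w, (HH x D).Adj w (ph3 x D w) := by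
  obtain ⟨hm6, hme, hD2, hDm, hDe⟩ := hg
  haveI : NeZero m := ⟨by omega⟩
  intro w
  have hJ : q x w < m := q_lt x w
  have hw : pp x (q x w) = w := pp_q x w
  set J := q x w with hJd
  by_cases h0 : J = 0
  · rw [← hw, h0, ph3_zero (by omega)]; exact adj_E0 (by omega) x (by omega)
  by_cases hD1 : J = D + 1
  · rw [← hw, hD1, ph3_D1 (by omega)]; exact (adj_E0 (by omega) x (by omega)).symm
  by_cases hle : J ≤ D
  · by_cases h : J % 2 = 1
    · rw [← hw, ph3_lo hJ (by omega) hle h]; exact adj_succ (by omega) x D J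
    · rw [← hw, ph3_le hJ h0 hle (by omega)]; exact adj_pred (by omega) x D J
  · by_cases h : J % 2 = 0
    · rw [← hw, ph3_he hJ (by omega) h]; exact adj_succ (by omega) x D J
    · rw [← hw, ph3_ho hJ (by omega) (by omega)]; exact adj_pred (by omega) x D J

lemma ph4_adj (hg : Good m D) : ∀ w, (HH x D).Adj w (ph4 x D w) := by
  obtain ⟨hm6, hme, hD2, hDm, hDe⟩ := hg
  haveI : NeZero m := ⟨by omega⟩
  intro w
  have hJ : q x w < m := q_lt x w
  have hw : pp x (q x w) = w := pp_q x w
  set J := q x w with hJd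
  by_cases hD0 : J = D
  · rw [← hw, hD0, ph4_D (by omega)]; exact adj_F0 (by omega) x (by omega)
  by_cases hlast : J = m - 1
  · rw [← hw, hlast, ph4_l (by omega) (by omega)]; exact (adj_F0 (by omega) x (by omega)).symm
  by_cases hlt : J < D
  · by_cases h : J % 2 = 0
    · rw [← hw, ph4_loe hJ (by omega) hlt h]; exact adj_succ (by omega) x D J
    · rw [← hw, ph4_loo hJ (by omega) hlt (by omega)]; exact adj_pred (by omega) x D J
  · by_cases h : J % 2 = 1
    · rw [← hw, ph4_hio (by omega) (by omega) h]; exact adj_succ (by omega) x D J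
    · rw [← hw, ph4_hie (by omega) (by omega) (by omega)]; exact adj_pred (by omega) x D J


def MM1 (x : ZMod m) : Set (Sym2 (ZMod m)) := Mphi (ph1 x)
def MM2 (x : ZMod m) : Set (Sym2 (ZMod m)) := Mphi (ph2 x)
def MM3 (x : ZMod m) (D : ℕ) : Set (Sym2 (ZMod m)) := Mphi (ph3 x D)
def MM4 (x : ZMod m) (D : ℕ) : Set (Sym2 (ZMod m)) := Mphi (ph4 x D)

lemma isPM_MM1 (hg : Good m D) : IsPM (HH x D) (MM1 x) :=
  isPM_Mphi (ph1_inv (by have := hg.1; omega) hg.2.1) (ph1_adj hg)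

lemma isPM_MM2 (hg : Good m D) : IsPM (HH x D) (MM2 x) :=
  isPM_Mphi (ph2_inv (by have := hg.1; omega) hg.2.1) (ph2_adj hg)

lemma isPM_MM3 (hg : Good m D) : IsPM (HH x D) (MM3 x D) :=
  isPM_Mphi (ph3_inv hg) (ph3_adj hg)

lemma isPM_MM4 (hg : Good m D) : IsPM (HH x D) (MM4 x D) :=
  isPM_Mphi (ph4_inv hg) (ph4_adj hg)

lemma mem_MM1 (hg : Good m D) (a b : ZMod m) :
    s(a, b) ∈ MM1 x ↔ ph1 x a = b ∨ ph1 x b = a :=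
  mem_Mphi (ph1_inv (by have := hg.1; omega) hg.2.1) a b

lemma mem_MM2 (hg : Good m D) (a b : ZMod m) :
    s(a, b) ∈ MM2 x ↔ ph2 x a = b ∨ ph2 x b = a :=
  mem_Mphi (ph2_inv (by have := hg.1; omega) hg.2.1) a b

lemma mem_MM3 (hg : Good m D) (a b : ZMod m) :
    s(a, b) ∈ MM3 x D ↔ ph3 x D a = b ∨ ph3 x D b = a :=
  mem_Mphi (ph3_inv hg) a b

lemma mem_MM4 (hg : Good m D) (a b : ZMod m) :
    s(a, b) ∈ MM4 x D ↔ ph4 x D a = b ∨ ph4 x D b = a :=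
  mem_Mphi (ph4_inv hg) a b


lemma pp_ne (hm : 0 < m) (x : ZMod m) {a b : ℕ} (ha : a < m) (hb : b < m) (h : a ≠ b) :
    pp x a ≠ pp x b := fun hEq => h ((pp_inj hm x ha hb).mp hEq)

lemma ne_sets {α : Type*} {A B : Set α} {a : α} (ha : a ∈ A) (hb : a ∉ B) : A ≠ B :=
  fun h => hb (h ▸ ha)

section MemTable

variable (hg : Good m D)
include hg

lemma E01_mem1 : s(pp x 0, pp x 1) ∈ MM1 x := by
  rw [mem_MM1 hg]
  obtain ⟨hm6, hme, hD2, hDm, hDe⟩ := hg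
  exact Or.inl (by rw [ph1_ev (J := 0) (by omega) (by omega)])

lemma E01_nmem2 : s(pp x 0, pp x 1) ∉ MM2 x := by
  rw [mem_MM2 hg]
  obtain ⟨hm6, hme, hD2, hDm, hDe⟩ := hg
  push_neg
  constructor
  · rw [ph2_od (J := 0) (by omega) (by omega)]
    exact pp_ne (by omega) x (by omega) (by omega) (by omega)
  · rw [ph2_ev (J := 1) (by omega) (by omega)]
    exact pp_ne (by omega) x (by omega) (by omega) (by omega)

lemma E01_nmem3 : s(pp x 0, pp x 1) ∉ MM3 x D := by
  rw [mem_MM3 hg]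
  obtain ⟨hm6, hme, hD2, hDm, hDe⟩ := hg
  push_neg
  constructor
  · rw [ph3_zero (by omega)]
    exact pp_ne (by omega) x (by omega) (by omega) (by omega)
  · rw [ph3_lo (J := 1) (by omega) (by omega) (by omega) (by omega)]
    exact pp_ne (by omega) x (by omega) (by omega) (by omega)

lemma E01_mem4 : s(pp x 0, pp x 1) ∈ MM4 x D := by
  rw [mem_MM4 hg]
  obtain ⟨hm6, hme, hD2, hDm, hDe⟩ := hg
  exact Or.inl (by rw [ph4_loe (J := 0) (by omega) (by omega) (by omega) (by omega)])

lemma g1_nmem1 : s(pp x 1, pp x 2) ∉ MM1 x := by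
  rw [mem_MM1 hg]
  obtain ⟨hm6, hme, hD2, hDm, hDe⟩ := hg
  push_neg
  constructor
  · rw [ph1_od (J := 1) (by omega) (by omega), pp_norm x (show 1 + (m-1) = 0 + m by omega)]
    exact pp_ne (by omega) x (by omega) (by omega) (by omega)
  · rw [ph1_ev (J := 2) (by omega) (by omega)]
    exact pp_ne (by omega) x (by omega) (by omega) (by omega)

lemma g1_mem2 : s(pp x 1, pp x 2) ∈ MM2 x := by
  rw [mem_MM2 hg]
  obtain ⟨hm6, hme, hD2, hDm, hDe⟩ := hg
  exact Or.inl (by rw [ph2_ev (J := 1) (by omega) (by omega)])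

lemma g1_mem3 : s(pp x 1, pp x 2) ∈ MM3 x D := by
  rw [mem_MM3 hg]
  obtain ⟨hm6, hme, hD2, hDm, hDe⟩ := hg
  exact Or.inl (by rw [ph3_lo (J := 1) (by omega) (by omega) (by omega) (by omega)])

lemma g1_nmem4 : s(pp x 1, pp x 2) ∉ MM4 x D := by
  rw [mem_MM4 hg]
  obtain ⟨hm6, hme, hD2, hDm, hDe⟩ := hg
  push_neg
  constructor
  · rw [ph4_loo (J := 1) (by omega) (by omega) (by omega) (by omega),
      pp_norm x (show 1 + (m-1) = 0 + m by omega)]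
    exact pp_ne (by omega) x (by omega) (by omega) (by omega)
  · by_cases hD : D = 2
    · rw [show (2:ℕ) = D by omega, ph4_D (by omega)]
      exact pp_ne (by omega) x (by omega) (by omega) (by omega)
    · rw [ph4_loe (J := 2) (by omega) (by omega) (by omega) (by omega)]
      exact pp_ne (by omega) x (by omega) (by omega) (by omega)

lemma h2_nmem1 : s(pp x (D+1), pp x (D+2)) ∉ MM1 x := by
  rw [mem_MM1 hg]
  obtain ⟨hm6, hme, hD2, hDm, hDe⟩ := hg
  push_neg
  constructor
  · rw [ph1_od (J := D+1) (by omega) (by omega),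
      pp_norm x (show D + 1 + (m-1) = D + m by omega)]
    exact pp_ne (by omega) x (by omega) (by omega) (by omega)
  · rw [ph1_ev (J := D+2) (by omega) (by omega)]
    exact pp_ne (by omega) x (by omega) (by omega) (by omega)

lemma h2_mem2 : s(pp x (D+1), pp x (D+2)) ∈ MM2 x := by
  rw [mem_MM2 hg]
  obtain ⟨hm6, hme, hD2, hDm, hDe⟩ := hg
  exact Or.inl (by rw [ph2_ev (J := D+1) (by omega) (by omega)])

lemma h2_nmem3 : s(pp x (D+1), pp x (D+2)) ∉ MM3 x D := by
  rw [mem_MM3 hg]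
  obtain ⟨hm6, hme, hD2, hDm, hDe⟩ := hg
  push_neg
  constructor
  · rw [ph3_D1 (by omega)]
    exact pp_ne (by omega) x (by omega) (by omega) (by omega)
  · rw [ph3_he (J := D+2) (by omega) (by omega) (by omega)]
    exact pp_ne (by omega) x (by omega) (by omega) (by omega)

lemma h2_mem4 : s(pp x (D+1), pp x (D+2)) ∈ MM4 x D := by
  rw [mem_MM4 hg]
  obtain ⟨hm6, hme, hD2, hDm, hDe⟩ := hg
  exact Or.inl (by rw [ph4_hio (J := D+1) (by omega) (by omega) (by omega)])

lemma g2_mem1 : s(pp x (D+2), pp x (D+3)) ∈ MM1 x := by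
  rw [mem_MM1 hg]
  obtain ⟨hm6, hme, hD2, hDm, hDe⟩ := hg
  exact Or.inl (by rw [ph1_ev (J := D+2) (by omega) (by omega)])

lemma g2_nmem2 : s(pp x (D+2), pp x (D+3)) ∉ MM2 x := by
  rw [mem_MM2 hg]
  obtain ⟨hm6, hme, hD2, hDm, hDe⟩ := hg
  push_neg
  constructor
  · rw [ph2_od (J := D+2) (by omega) (by omega),
      pp_norm x (show D + 2 + (m-1) = (D+1) + m by omega)]
    exact pp_ne (by omega) x (by omega) (by omega) (by omega)
  · rw [ph2_ev (J := D+3) (by omega) (by omega)]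
    by_cases hDm4 : D + 4 = m
    · rw [pp_norm x (show D + 3 + 1 = 0 + m by omega)]
      exact pp_ne (by omega) x (by omega) (by omega) (by omega)
    · exact pp_ne (by omega) x (by omega) (by omega) (by omega)

lemma g2_mem3 : s(pp x (D+2), pp x (D+3)) ∈ MM3 x D := by
  rw [mem_MM3 hg]
  obtain ⟨hm6, hme, hD2, hDm, hDe⟩ := hg
  exact Or.inl (by rw [ph3_he (J := D+2) (by omega) (by omega) (by omega)])

lemma g2_nmem4 : s(pp x (D+2), pp x (D+3)) ∉ MM4 x D := by
  rw [mem_MM4 hg]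
  obtain ⟨hm6, hme, hD2, hDm, hDe⟩ := hg
  push_neg
  constructor
  · rw [ph4_hie (J := D+2) (by omega) (by omega) (by omega),
      pp_norm x (show D + 2 + (m-1) = (D+1) + m by omega)]
    exact pp_ne (by omega) x (by omega) (by omega) (by omega)
  · by_cases hl : D + 3 = m - 1
    · rw [show D + 3 = m - 1 by omega, ph4_l (by omega) (by omega)]
      exact pp_ne (by omega) x (by omega) (by omega) (by omega)
    · rw [ph4_hio (J := D+3) (by omega) (by omega) (by omega)]
      exact pp_ne (by omega) x (by omega) (by omega) (by omega)

end MemTable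


lemma ph12_ne (hg : Good m D) (v : ZMod m) : ph1 x v ≠ ph2 x v := by
  obtain ⟨hm6, hme, hD2, hDm, hDe⟩ := hg
  haveI : NeZero m := ⟨by omega⟩
  have hJ : q x v < m := q_lt x v
  have hw : pp x (q x v) = v := pp_q x v
  set J := q x v with hJd
  rw [← hw]
  by_cases h : J % 2 = 0
  · rw [ph1_ev hJ h, ph2_od hJ h]
    by_cases h0 : J = 0
    · rw [h0]
      exact pp_ne (by omega) x (by omega) (by omega) (by omega)
    · rw [pp_norm x (show J + (m-1) = (J-1) + m by omega)]
      exact pp_ne (by omega) x (by omega) (by omega) (by omega)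
  · rw [ph1_od hJ (by omega), ph2_ev hJ (by omega)]
    by_cases hlast : J = m - 1
    · rw [hlast]
      rw [pp_norm x (show m - 1 + (m-1) = (m-2) + m by omega),
        pp_norm x (show m - 1 + 1 = 0 + m by omega)]
      exact pp_ne (by omega) x (by omega) (by omega) (by omega)
    · rw [pp_norm x (show J + (m-1) = (J-1) + m by omega)]
      exact pp_ne (by omega) x (by omega) (by omega) (by omega)

lemma ph34_ne (hg : Good m D) (v : ZMod m) : ph3 x D v ≠ ph4 x D v := by
  obtain ⟨hm6, hme, hD2, hDm, hDe⟩ := hg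
  haveI : NeZero m := ⟨by omega⟩
  have hJ : q x v < m := q_lt x v
  have hw : pp x (q x v) = v := pp_q x v
  set J := q x v with hJd
  rw [← hw]
  by_cases h0 : J = 0
  · rw [h0]
    rw [ph3_zero (by omega), ph4_loe (J := 0) (by omega) (by omega) (by omega) (by omega)]
    exact pp_ne (by omega) x (by omega) (by omega) (by omega)
  by_cases hD0 : J = D
  · rw [hD0]
    rw [ph3_le (J := D) (by omega) (by omega) (by omega) (by omega), ph4_D (by omega),
      pp_norm x (show D + (m-1) = (D-1) + m by omega)]
    exact pp_ne (by omega) x (by omega) (by omega) (by omega)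
  by_cases hD1 : J = D + 1
  · rw [hD1]
    rw [ph3_D1 (by omega), ph4_hio (J := D+1) (by omega) (by omega) (by omega)]
    exact pp_ne (by omega) x (by omega) (by omega) (by omega)
  by_cases hlast : J = m - 1
  · rw [hlast]
    rw [ph3_ho (J := m-1) (by omega) (by omega) (by omega), ph4_l (by omega) (by omega),
      pp_norm x (show m - 1 + (m-1) = (m-2) + m by omega)]
    exact pp_ne (by omega) x (by omega) (by omega) (by omega)
  by_cases hlt : J < D
  · by_cases h : J % 2 = 0
    · rw [ph3_le hJ h0 (by omega) h, ph4_loe hJ (by omega) hlt h,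
        pp_norm x (show J + (m-1) = (J-1) + m by omega)]
      exact pp_ne (by omega) x (by omega) (by omega) (by omega)
    · rw [ph3_lo hJ (by omega) (by omega) (by omega), ph4_loo hJ (by omega) hlt (by omega),
        pp_norm x (show J + (m-1) = (J-1) + m by omega)]
      exact pp_ne (by omega) x (by omega) (by omega) (by omega)
  · by_cases h : J % 2 = 0
    · rw [ph3_he hJ (by omega) h, ph4_hie (J := J) (by omega) (by omega) h,
        pp_norm x (show J + (m-1) = (J-1) + m by omega)]
      exact pp_ne (by omega) x (by omega) (by omega) (by omega)
    · rw [ph3_ho hJ (by omega) (by omega), ph4_hio (J := J) (by omega) (by omega) (by omega),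
        pp_norm x (show J + (m-1) = (J-1) + m by omega)]
      exact pp_ne (by omega) x (by omega) (by omega) (by omega)

lemma MM12_disj (hg : Good m D) : MM1 (m := m) x ∩ MM2 x = ∅ := by
  have hinv2 := ph2_inv (x := x) (by have := hg.1; omega) hg.2.1
  ext g
  simp only [Set.mem_inter_iff, Set.mem_empty_iff_false, iff_false, not_and]
  rintro ⟨v, rfl⟩ h2
  rw [mem_MM2 hg] at h2
  rcases h2 with h | h
  · exact ph12_ne hg v h.symm
  · have := congrArg (ph2 x) h
    rw [hinv2] at this
    exact ph12_ne hg v this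

lemma MM34_disj (hg : Good m D) : MM3 x D ∩ MM4 x D = ∅ := by
  have hinv4 := ph4_inv (x := x) hg
  ext g
  simp only [Set.mem_inter_iff, Set.mem_empty_iff_false, iff_false, not_and]
  rintro ⟨v, rfl⟩ h2
  rw [mem_MM4 hg] at h2
  rcases h2 with h | h
  · exact ph34_ne hg v h.symm
  · have := congrArg (ph4 x D) h
    rw [hinv4] at this
    exact ph34_ne hg v this


def BB (x : ZMod m) (M : Set (Sym2 (ZMod m))) (i : ℕ) : Prop :=
  s(pp x i, pp x (i+1)) ∈ M

lemma BB_norm (x : ZMod m) {M : Set (Sym2 (ZMod m))} {a b : ℕ} (h : a = b + m) :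
    BB x M a ↔ BB x M b := by
  unfold BB
  rw [pp_norm x h, pp_norm x (show a + 1 = (b+1) + m by omega)]

section Classify

variable (hg : Good m D) {M : Set (Sym2 (ZMod m))} (hM : IsPM (HH x D) M)
include hg hM

lemma vc {J : ℕ} (hJ : J < m) :
    BB x M (J + (m-1)) ∨ BB x M J ∨ ((J = 0 ∨ J = D+1) ∧ E0 x D ∈ M) ∨
      ((J = D ∨ J = m-1) ∧ F0 x D ∈ M) := by
  obtain ⟨hm6, hme, hD2, hDm, hDe⟩ := hg
  haveI : NeZero m := ⟨by omega⟩
  obtain ⟨g, ⟨hgM, hgw⟩, -⟩ := hM.2 (pp x J)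
  rw [Sym2.mem_iff_exists] at hgw
  obtain ⟨u, rfl⟩ := hgw
  have hadj := hM.1 hgM
  rw [SimpleGraph.mem_edgeSet, adj_iff] at hadj
  obtain ⟨hc, hne⟩ := hadj
  rcases hc with (h | h) | h | h
  · have hu : u = pp x (J+1) := by rw [← padd1]; exact sub_eq_iff_eq_add'.mp h
    right; left
    show s(pp x J, pp x (J+1)) ∈ M
    rw [← hu]; exact hgM
  · have hu : u = pp x (J + (m-1)) := by
      rw [← psub1 (by omega), eq_sub_iff_add_eq]
      exact (sub_eq_iff_eq_add'.mp h).symm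
    left
    show s(pp x (J + (m-1)), pp x (J + (m-1) + 1)) ∈ M
    rw [pp_norm x (show J + (m-1) + 1 = J + m by omega), Sym2.eq_swap]
    rw [← hu]; exact hgM
  · have hE : E0 x D ∈ M := h ▸ hgM
    rw [show E0 x D = s(pp x 0, pp x (D+1)) from rfl, Sym2.eq_iff] at h
    rcases h with ⟨h1, -⟩ | ⟨h1, -⟩
    · exact Or.inr (Or.inr (Or.inl ⟨Or.inl ((pp_inj (by omega) x hJ (by omega)).mp h1), hE⟩))
    · exact Or.inr (Or.inr (Or.inl ⟨Or.inr ((pp_inj (by omega) x hJ (by omega)).mp h1), hE⟩))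
  · have hF : F0 x D ∈ M := h ▸ hgM
    rw [show F0 x D = s(pp x D, pp x (m-1)) from rfl, Sym2.eq_iff] at h
    rcases h with ⟨h1, -⟩ | ⟨h1, -⟩
    · exact Or.inr (Or.inr (Or.inr ⟨Or.inl ((pp_inj (by omega) x hJ (by omega)).mp h1), hF⟩))
    · exact Or.inr (Or.inr (Or.inr ⟨Or.inr ((pp_inj (by omega) x hJ (by omega)).mp h1), hF⟩))

lemma nbJ {J : ℕ} (h1 : 1 ≤ J) (hJ : J < m) : ¬(BB x M (J-1) ∧ BB x M J) := by
  obtain ⟨hm6, hme, hD2, hDm, hDe⟩ := hg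
  rintro ⟨hb1, hb2⟩
  unfold BB at hb1 hb2
  rw [show J - 1 + 1 = J by omega] at hb1
  by_cases hlast : J = m - 1
  · rw [hlast] at hb1 hb2
    rw [pp_norm x (show m - 1 + 1 = 0 + m by omega)] at hb2
    have := (hM.2 (pp x (m-1))).unique ⟨hb1, Sym2.mem_mk_right _ _⟩ ⟨hb2, Sym2.mem_mk_left _ _⟩
    rw [sym2pp (by omega) x (by omega) (by omega) (by omega) (by omega)] at this
    omega
  · have := (hM.2 (pp x J)).unique ⟨hb1, Sym2.mem_mk_right _ _⟩ ⟨hb2, Sym2.mem_mk_left _ _⟩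
    rw [sym2pp (by omega) x (by omega) (by omega) (by omega) (by omega)] at this
    omega

lemma ce_excl (hce : E0 x D ∈ M) :
    ¬ BB x M (m-1) ∧ ¬ BB x M 0 ∧ ¬ BB x M D ∧ ¬ BB x M (D+1) := by
  obtain ⟨hm6, hme, hD2, hDm, hDe⟩ := hg
  have hE : E0 x D = s(pp x 0, pp x (D+1)) := rfl
  refine ⟨?_, ?_, ?_, ?_⟩
  · intro hb
    unfold BB at hb
    rw [pp_norm x (show m - 1 + 1 = 0 + m by omega)] at hb
    have := (hM.2 (pp x 0)).unique ⟨hb, Sym2.mem_mk_right _ _⟩ ⟨hce, hE ▸ Sym2.mem_mk_left _ _⟩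
    rw [hE, sym2pp (by omega) x (by omega) (by omega) (by omega) (by omega)] at this
    omega
  · intro hb
    unfold BB at hb
    have := (hM.2 (pp x 0)).unique ⟨hb, Sym2.mem_mk_left _ _⟩ ⟨hce, hE ▸ Sym2.mem_mk_left _ _⟩
    rw [hE, sym2pp (by omega) x (by omega) (by omega) (by omega) (by omega)] at this
    omega
  · intro hb
    unfold BB at hb
    have := (hM.2 (pp x (D+1))).unique ⟨hb, Sym2.mem_mk_right _ _⟩
      ⟨hce, hE ▸ Sym2.mem_mk_right _ _⟩
    rw [hE, sym2pp (by omega) x (by omega) (by omega) (by omega) (by omega)] at this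
    omega
  · intro hb
    unfold BB at hb
    have := (hM.2 (pp x (D+1))).unique ⟨hb, Sym2.mem_mk_left _ _⟩
      ⟨hce, hE ▸ Sym2.mem_mk_right _ _⟩
    rw [hE, sym2pp (by omega) x (by omega) (by omega) (by omega) (by omega)] at this
    omega

lemma cf_excl (hcf : F0 x D ∈ M) :
    ¬ BB x M (D-1) ∧ ¬ BB x M D ∧ ¬ BB x M (m-2) ∧ ¬ BB x M (m-1) := by
  obtain ⟨hm6, hme, hD2, hDm, hDe⟩ := hg
  have hF : F0 x D = s(pp x D, pp x (m-1)) := rfl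
  refine ⟨?_, ?_, ?_, ?_⟩
  · intro hb
    unfold BB at hb
    rw [show D - 1 + 1 = D by omega] at hb
    have := (hM.2 (pp x D)).unique ⟨hb, Sym2.mem_mk_right _ _⟩ ⟨hcf, hF ▸ Sym2.mem_mk_left _ _⟩
    rw [hF, sym2pp (by omega) x (by omega) (by omega) (by omega) (by omega)] at this
    omega
  · intro hb
    unfold BB at hb
    have := (hM.2 (pp x D)).unique ⟨hb, Sym2.mem_mk_left _ _⟩ ⟨hcf, hF ▸ Sym2.mem_mk_left _ _⟩
    rw [hF, sym2pp (by omega) x (by omega) (by omega) (by omega) (by omega)] at this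
    omega
  · intro hb
    unfold BB at hb
    rw [show m - 2 + 1 = m - 1 by omega] at hb
    have := (hM.2 (pp x (m-1))).unique ⟨hb, Sym2.mem_mk_right _ _⟩
      ⟨hcf, hF ▸ Sym2.mem_mk_right _ _⟩
    rw [hF, sym2pp (by omega) x (by omega) (by omega) (by omega) (by omega)] at this
    omega
  · intro hb
    unfold BB at hb
    rw [pp_norm x (show m - 1 + 1 = 0 + m by omega)] at hb
    have := (hM.2 (pp x (m-1))).unique ⟨hb, Sym2.mem_mk_left _ _⟩
      ⟨hcf, hF ▸ Sym2.mem_mk_right _ _⟩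
    rw [hF, sym2pp (by omega) x (by omega) (by omega) (by omega) (by omega)] at this
    omega

lemma xor_gen {J : ℕ} (h1 : 1 ≤ J) (hJ : J < m) (hD : J ≠ D) (hD1 : J ≠ D+1)
    (hml : J ≠ m-1) : BB x M (J-1) ↔ ¬ BB x M J := by
  have hvc := vc hg hM hJ
  have hnb := nbJ hg hM h1 hJ
  have hsh : BB x M (J + (m-1)) ↔ BB x M (J-1) := BB_norm x (by omega)
  rw [hsh] at hvc
  rcases hvc with h | h | ⟨hj, -⟩ | ⟨hj, -⟩
  · exact ⟨fun _ hb => hnb ⟨h, hb⟩, fun _ => h⟩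
  · exact ⟨fun hb _ => hnb ⟨hb, h⟩, fun hn => absurd h hn⟩
  · omega
  · omega

lemma xor_nc (hce : E0 x D ∉ M) (hcf : F0 x D ∉ M) {J : ℕ} (h1 : 1 ≤ J) (hJ : J < m) :
    BB x M (J-1) ↔ ¬ BB x M J := by
  have hvc := vc hg hM hJ
  have hnb := nbJ hg hM h1 hJ
  have hsh : BB x M (J + (m-1)) ↔ BB x M (J-1) := BB_norm x (by omega)
  rw [hsh] at hvc
  rcases hvc with h | h | ⟨-, hj⟩ | ⟨-, hj⟩
  · exact ⟨fun _ hb => hnb ⟨h, hb⟩, fun _ => h⟩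
  · exact ⟨fun hb _ => hnb ⟨hb, h⟩, fun hn => absurd h hn⟩
  · exact absurd hj hce
  · exact absurd hj hcf

end Classify

lemma chainF {x : ZMod m} {M : Set (Sym2 (ZMod m))} (a len : ℕ) (hanchor : ¬ BB x M a)
    (hx : ∀ t, 1 ≤ t → t ≤ len → (BB x M (a+t-1) ↔ ¬ BB x M (a+t))) :
    ∀ t, t ≤ len → (BB x M (a+t) ↔ t % 2 = 1) := by
  intro t
  induction t with
  | zero =>
    intro _
    rw [Nat.add_zero]
    constructor
    · intro h; exact absurd h hanchor
    · intro h; exact absurd h (by omega)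
  | succ k ih =>
    intro ht
    have hk := ih (by omega)
    have hx' := hx (k+1) (by omega) ht
    rw [show a + (k+1) - 1 = a + k by omega] at hx'
    have hiff : BB x M (a + (k+1)) ↔ ¬ (k % 2 = 1) := by
      rw [← hk]
      tauto
    rw [hiff]
    omega

lemma chainT {x : ZMod m} {M : Set (Sym2 (ZMod m))} (a len : ℕ) (hanchor : BB x M a)
    (hx : ∀ t, 1 ≤ t → t ≤ len → (BB x M (a+t-1) ↔ ¬ BB x M (a+t))) :
    ∀ t, t ≤ len → (BB x M (a+t) ↔ t % 2 = 0) := by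
  intro t
  induction t with
  | zero =>
    intro _
    rw [Nat.add_zero]
    constructor
    · intro _; rfl
    · intro _; exact hanchor
  | succ k ih =>
    intro ht
    have hk := ih (by omega)
    have hx' := hx (k+1) (by omega) ht
    rw [show a + (k+1) - 1 = a + k by omega] at hx'
    have hiff : BB x M (a + (k+1)) ↔ ¬ (k % 2 = 0) := by
      rw [← hk]
      tauto
    rw [hiff]
    omega


theorem classify (hg : Good m D) {M : Set (Sym2 (ZMod m))} (hM : IsPM (HH x D) M) :
    M = MM1 x ∨ M = MM2 x ∨ M = MM3 x D ∨ M = MM4 x D := by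
  have hm6 := hg.1
  have hme := hg.2.1
  have hD2 := hg.2.2.1
  have hDm := hg.2.2.2.1
  have hDe := hg.2.2.2.2
  haveI : NeZero m := ⟨by omega⟩
  have hxlow : ∀ t, 1 ≤ t → t ≤ D - 1 → (BB x M (0+t-1) ↔ ¬ BB x M (0+t)) := by
    intro t h1 h2
    rw [show (0:ℕ) + t - 1 = t - 1 by omega, show (0:ℕ) + t = t by omega]
    exact xor_gen hg hM h1 (by omega) (by omega) (by omega) (by omega)
  have hxhigh : ∀ t, 1 ≤ t → t ≤ m - D - 3 → (BB x M (D+1+t-1) ↔ ¬ BB x M (D+1+t)) := by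
    intro t h1 h2
    exact xor_gen hg hM (by omega) (by omega) (by omega) (by omega) (by omega)
  by_cases hce : E0 x D ∈ M
  · have hex := ce_excl hg hM hce
    by_cases hcf : F0 x D ∈ M
    · exfalso
      have hfx := cf_excl hg hM hcf
      have hch := chainF 0 (D-1) hex.2.1 hxlow
      have hlast := (hch (D-1) (le_refl _)).mpr (by omega)
      rw [show (0:ℕ) + (D-1) = D - 1 by omega] at hlast
      exact hfx.1 hlast
    · right; right; left
      have hlow := chainF 0 (D-1) hex.2.1 hxlow
      have hhigh := chainF (D+1) (m - D - 3) hex.2.2.2 hxhigh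
      apply eq_Mphi hM
      intro v
      have hJ : q x v < m := q_lt x v
      have hw : pp x (q x v) = v := pp_q x v
      set J := q x v with hJd
      rw [← hw]
      by_cases h0 : J = 0
      · rw [h0, ph3_zero (by omega)]
        exact hce
      by_cases hD1 : J = D + 1
      · rw [hD1, ph3_D1 (by omega), Sym2.eq_swap]
        exact hce
      by_cases hle : J ≤ D
      · by_cases hpar : J % 2 = 1
        · rw [ph3_lo hJ (by omega) hle hpar]
          have hth := (hlow J (by omega)).mpr (by omega)
          rw [show (0:ℕ) + J = J by omega] at hth
          exact hth
        · rw [ph3_le hJ h0 hle (by omega),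
            pp_norm x (show J + (m-1) = (J-1) + m by omega), Sym2.eq_swap]
          have hth := (hlow (J-1) (by omega)).mpr (by omega)
          rw [show (0:ℕ) + (J-1) = J - 1 by omega] at hth
          have hth2 : s(pp x (J-1), pp x (J-1+1)) ∈ M := hth
          rw [show J - 1 + 1 = J by omega] at hth2
          exact hth2
      · by_cases hpar : J % 2 = 0
        · rw [ph3_he hJ (by omega) hpar]
          have hth := (hhigh (J - (D+1)) (by omega)).mpr (by omega)
          rw [show D + 1 + (J - (D+1)) = J by omega] at hth
          exact hth
        · rw [ph3_ho hJ (by omega) (by omega),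
            pp_norm x (show J + (m-1) = (J-1) + m by omega), Sym2.eq_swap]
          have hth := (hhigh (J - 1 - (D+1)) (by omega)).mpr (by omega)
          rw [show D + 1 + (J - 1 - (D+1)) = J - 1 by omega] at hth
          have hth2 : s(pp x (J-1), pp x (J-1+1)) ∈ M := hth
          rw [show J - 1 + 1 = J by omega] at hth2
          exact hth2
  · by_cases hcf : F0 x D ∈ M
    · right; right; right
      have hfx := cf_excl hg hM hcf
      have hb0 : BB x M 0 := by
        have hvc := vc hg hM (J := 0) (by omega)
        rcases hvc with h | h | ⟨hj, hj2⟩ | ⟨hj, hj2⟩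
        · exfalso
          apply hfx.2.2.2
          rwa [show (0:ℕ) + (m-1) = m - 1 by omega] at h
        · exact h
        · exact absurd hj2 hce
        · omega
      have hbD1 : BB x M (D+1) := by
        have hvc := vc hg hM (J := D+1) (by omega)
        rcases hvc with h | h | ⟨hj, hj2⟩ | ⟨hj, hj2⟩
        · exfalso
          apply hfx.2.1
          rwa [BB_norm x (show D + 1 + (m-1) = D + m by omega)] at h
        · exact h
        · exact absurd hj2 hce
        · omega
      have hlow := chainT 0 (D-1) hb0 hxlow
      have hhigh := chainT (D+1) (m - D - 3) hbD1 hxhigh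
      apply eq_Mphi hM
      intro v
      have hJ : q x v < m := q_lt x v
      have hw : pp x (q x v) = v := pp_q x v
      set J := q x v with hJd
      rw [← hw]
      by_cases hD0 : J = D
      · rw [hD0, ph4_D (by omega)]
        exact hcf
      by_cases hlast : J = m - 1
      · rw [hlast, ph4_l (by omega) (by omega), Sym2.eq_swap]
        exact hcf
      by_cases hlt : J < D
      · by_cases hpar : J % 2 = 0
        · rw [ph4_loe hJ (by omega) hlt hpar]
          have hth := (hlow J (by omega)).mpr (by omega)
          rw [show (0:ℕ) + J = J by omega] at hth
          exact hth
        · rw [ph4_loo hJ (by omega) hlt (by omega),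
            pp_norm x (show J + (m-1) = (J-1) + m by omega), Sym2.eq_swap]
          have hth := (hlow (J-1) (by omega)).mpr (by omega)
          rw [show (0:ℕ) + (J-1) = J - 1 by omega] at hth
          have hth2 : s(pp x (J-1), pp x (J-1+1)) ∈ M := hth
          rw [show J - 1 + 1 = J by omega] at hth2
          exact hth2
      · by_cases hpar : J % 2 = 1
        · rw [ph4_hio (by omega) (by omega) hpar]
          have hth := (hhigh (J - (D+1)) (by omega)).mpr (by omega)
          rw [show D + 1 + (J - (D+1)) = J by omega] at hth
          exact hth
        · rw [ph4_hie (by omega) (by omega) (by omega),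
            pp_norm x (show J + (m-1) = (J-1) + m by omega), Sym2.eq_swap]
          have hth := (hhigh (J - 1 - (D+1)) (by omega)).mpr (by omega)
          rw [show D + 1 + (J - 1 - (D+1)) = J - 1 by omega] at hth
          have hth2 : s(pp x (J-1), pp x (J-1+1)) ∈ M := hth
          rw [show J - 1 + 1 = J by omega] at hth2
          exact hth2
    · have hxall : ∀ t, 1 ≤ t → t ≤ m - 1 → (BB x M (0+t-1) ↔ ¬ BB x M (0+t)) := by
        intro t h1 h2
        rw [show (0:ℕ) + t - 1 = t - 1 by omega, show (0:ℕ) + t = t by omega]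
        exact xor_nc hg hM hce hcf h1 (by omega)
      by_cases hb0 : BB x M 0
      · left
        have hall := chainT 0 (m-1) hb0 hxall
        apply eq_Mphi hM
        intro v
        have hJ : q x v < m := q_lt x v
        have hw : pp x (q x v) = v := pp_q x v
        set J := q x v with hJd
        rw [← hw]
        by_cases hpar : J % 2 = 0
        · rw [ph1_ev hJ hpar]
          have hth := (hall J (by omega)).mpr (by omega)
          rw [show (0:ℕ) + J = J by omega] at hth
          exact hth
        · rw [ph1_od hJ (by omega),
            pp_norm x (show J + (m-1) = (J-1) + m by omega), Sym2.eq_swap]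
          have hth := (hall (J-1) (by omega)).mpr (by omega)
          rw [show (0:ℕ) + (J-1) = J - 1 by omega] at hth
          have hth2 : s(pp x (J-1), pp x (J-1+1)) ∈ M := hth
          rw [show J - 1 + 1 = J by omega] at hth2
          exact hth2
      · right; left
        have hall := chainF 0 (m-1) hb0 hxall
        apply eq_Mphi hM
        intro v
        have hJ : q x v < m := q_lt x v
        have hw : pp x (q x v) = v := pp_q x v
        set J := q x v with hJd
        rw [← hw]
        by_cases hpar : J % 2 = 0
        · by_cases h0 : J = 0
          · rw [h0, ph2_od (by omega) (by omega), show (0:ℕ) + (m-1) = m - 1 by omega,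
              Sym2.eq_swap]
            have hth := (hall (m-1) (le_refl _)).mpr (by omega)
            rw [show (0:ℕ) + (m-1) = m - 1 by omega] at hth
            have hth2 : s(pp x (m-1), pp x (m-1+1)) ∈ M := hth
            rw [pp_norm x (show m - 1 + 1 = 0 + m by omega)] at hth2
            exact hth2
          · rw [ph2_od hJ hpar,
              pp_norm x (show J + (m-1) = (J-1) + m by omega), Sym2.eq_swap]
            have hth := (hall (J-1) (by omega)).mpr (by omega)
            rw [show (0:ℕ) + (J-1) = J - 1 by omega] at hth
            have hth2 : s(pp x (J-1), pp x (J-1+1)) ∈ M := hth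
            rw [show J - 1 + 1 = J by omega] at hth2
            exact hth2
        · rw [ph2_ev hJ (by omega)]
          have hth := (hall J (by omega)).mpr (by omega)
          rw [show (0:ℕ) + J = J by omega] at hth
          exact hth


lemma two_ne_zero' (hm : 3 ≤ m) : (2 : ZMod m) ≠ 0 := by
  haveI : NeZero m := ⟨by omega⟩
  intro h
  have h2 : ((2:ℕ) : ZMod m) = (2 : ZMod m) := by norm_cast
  have := congrArg ZMod.val (h2.trans h)
  rw [ZMod.val_cast_of_lt (by omega), ZMod.val_zero] at this
  omega

lemma cyc_edgeSet (hm : 3 ≤ m) :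
    (cyc m).edgeSet = Set.range (fun i : ZMod m => s(i, i+1)) := by
  have hadj : ∀ i : ZMod m, (cyc m).Adj i (i+1) := by
    intro i
    refine ⟨?_, Or.inl (by ring)⟩
    intro h
    have : (1 : ZMod m) = 0 := by linear_combination -h
    exact one_ne_zero' (by omega) this
  ext g
  induction g using Sym2.ind with
  | _ a b =>
    rw [SimpleGraph.mem_edgeSet]
    constructor
    · rintro ⟨hne, h | h⟩
      · refine ⟨a, ?_⟩
        have : b = a + 1 := by linear_combination h
        rw [this]
      · refine ⟨b, ?_⟩
        have : a = b + 1 := by linear_combination h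
        rw [this, Sym2.eq_swap]
    · rintro ⟨i, hi⟩
      simp only at hi
      rw [← SimpleGraph.mem_edgeSet, ← hi, SimpleGraph.mem_edgeSet]
      exact hadj i

lemma cyc_edgeSet_ncard (hm : 3 ≤ m) : (cyc m).edgeSet.ncard = m := by
  haveI : NeZero m := ⟨by omega⟩
  rw [cyc_edgeSet hm, ← Set.image_univ]
  have hinj : Function.Injective (fun i : ZMod m => s(i, i+1)) := by
    intro i j h
    simp only [Sym2.eq_iff] at h
    rcases h with ⟨h1, -⟩ | ⟨h1, h2⟩
    · exact h1
    · exact absurd (by linear_combination h2 - h1 : (2 : ZMod m) = 0) (two_ne_zero' (by omega))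
  rw [Set.ncard_image_of_injective _ hinj, Set.ncard_univ, Nat.card_zmod]

lemma E0_notin_cyc (hg : Good m D) : E0 (m := m) x D ∉ (cyc m).edgeSet := by
  obtain ⟨hm6, hme, hD2, hDm, hDe⟩ := hg
  rw [cyc_edgeSet (by omega)]
  rintro ⟨i, hi⟩
  unfold E0 at hi
  simp only [Sym2.eq_iff] at hi
  rcases hi with ⟨h1, h2⟩ | ⟨h1, h2⟩
  · rw [h1, padd1, pp_inj (by omega) x (by omega) (by omega)] at h2
    omega
  · rw [h1, padd1, pp_inj (by omega) x (by omega) (by omega)] at h2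
    omega

lemma F0_notin_cyc (hg : Good m D) : F0 (m := m) x D ∉ (cyc m).edgeSet := by
  obtain ⟨hm6, hme, hD2, hDm, hDe⟩ := hg
  rw [cyc_edgeSet (by omega)]
  rintro ⟨i, hi⟩
  unfold F0 at hi
  simp only [Sym2.eq_iff] at hi
  rcases hi with ⟨h1, h2⟩ | ⟨h1, h2⟩
  · rw [h1, padd1, pp_inj (by omega) x (by omega) (by omega)] at h2
    omega
  · rw [h1, padd1, pp_norm x (show m - 1 + 1 = 0 + m by omega),
      pp_inj (by omega) x (by omega) (by omega)] at h2
    omega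

lemma E0_ne_F0 (hg : Good m D) : E0 (m := m) x D ≠ F0 x D := by
  obtain ⟨hm6, hme, hD2, hDm, hDe⟩ := hg
  show s(pp x 0, pp x (D+1)) ≠ s(pp x D, pp x (m-1))
  rw [Ne, sym2pp (by omega) x (by omega) (by omega) (by omega) (by omega)]
  omega

lemma edges_HH (hg : Good m D) : (HH x D).edgeSet.ncard = m + 2 := by
  obtain ⟨hm6, hme, hD2, hDm, hDe⟩ := hg
  haveI : NeZero m := ⟨by omega⟩
  have hset : (HH x D).edgeSet = (cyc m).edgeSet ∪ {E0 x D, F0 x D} := by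
    show (cyc m ⊔ SimpleGraph.fromEdgeSet _).edgeSet = _
    rw [SimpleGraph.edgeSet_sup, SimpleGraph.edgeSet_fromEdgeSet]
    congr 1
    ext g
    simp only [Set.mem_diff, Set.mem_setOf_eq, Set.mem_insert_iff, Set.mem_singleton_iff,
      and_iff_left_iff_imp]
    rintro (rfl | rfl)
    · rw [show E0 (m := m) x D = s(pp x 0, pp x (D+1)) from rfl, Sym2.mem_diagSet, Sym2.mk_isDiag_iff]
      exact pp_ne (by omega) x (by omega) (by omega) (by omega)
    · rw [show F0 (m := m) x D = s(pp x D, pp x (m-1)) from rfl, Sym2.mem_diagSet, Sym2.mk_isDiag_iff]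
      exact pp_ne (by omega) x (by omega) (by omega) (by omega)
  rw [hset, Set.ncard_union_eq ?_ (Set.toFinite _) (Set.toFinite _), cyc_edgeSet_ncard (by omega),
    Set.ncard_pair (E0_ne_F0 (x := x) ⟨hm6, hme, hD2, hDm, hDe⟩)]
  rw [Set.disjoint_right]
  rintro g (rfl | rfl)
  · exact E0_notin_cyc ⟨hm6, hme, hD2, hDm, hDe⟩
  · exact F0_notin_cyc ⟨hm6, hme, hD2, hDm, hDe⟩


section Counting

variable (hg : Good m D)
include hg

lemma edge_succ {a b : ℕ} (h : b = a + 1) : s(pp x a, pp x b) ∈ (HH x D).edgeSet := by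
  subst h
  rw [SimpleGraph.mem_edgeSet]
  exact adj_succ (by have := hg.1; omega) x D a

lemma MM_ne_12 : MM1 (m := m) x ≠ MM2 x :=
  ne_sets (g2_mem1 hg) (g2_nmem2 hg)

lemma MM_ne_13 : MM1 (m := m) x ≠ MM3 x D :=
  fun h => g1_nmem1 hg (h ▸ g1_mem3 hg)

lemma MM_ne_14 : MM1 (m := m) x ≠ MM4 x D :=
  ne_sets (g2_mem1 hg) (g2_nmem4 hg)

lemma MM_ne_23 : MM2 (m := m) x ≠ MM3 x D :=
  fun h => g2_nmem2 hg (h ▸ g2_mem3 hg)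

lemma MM_ne_24 : MM2 (m := m) x ≠ MM4 x D :=
  ne_sets (g1_mem2 hg) (g1_nmem4 hg)

lemma MM_ne_34 : MM3 (m := m) x D ≠ MM4 x D :=
  ne_sets (g2_mem3 hg) (g2_nmem4 hg)

lemma g1_ne_g2 : s(pp x 1, pp x 2) ≠ s(pp x (D+2), pp x (D+3)) := by
  obtain ⟨hm6, hme, hD2, hDm, hDe⟩ := hg
  rw [Ne, sym2pp (by omega) x (by omega) (by omega) (by omega) (by omega)]
  omega

theorem gf_HH : gf (HH x D) = 2 := by
  have hm6 := hg.1
  have hme := hg.2.1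
  have hD2 := hg.2.2.1
  have hDm := hg.2.2.2.1
  have hDe := hg.2.2.2.2
  haveI : NeZero m := ⟨by omega⟩
  set g1 := s(pp x 1, pp x 2) with hg1
  set g2 := s(pp x (D+2), pp x (D+3)) with hg2
  set S : Set (Sym2 (ZMod m)) := {g1, g2} with hSdef
  have hg1S : g1 ∈ S := Set.mem_insert _ _
  have hg2S : g2 ∈ S := Set.mem_insert_of_mem _ rfl
  have key : ∀ (A B : Set (Sym2 (ZMod m))) (g : Sym2 (ZMod m)),
      g ∈ S → g ∈ A → g ∉ B → S ∩ A ≠ S ∩ B := by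
    intro A B g hgS hgA hgB h
    exact hgB ((h ▸ (⟨hgS, hgA⟩ : g ∈ S ∩ A)) : g ∈ S ∩ B).2
  have hGFS : IsGlobalForcingSet (HH x D) S := by
    constructor
    · intro g hgS
      rcases hgS with rfl | rfl
      · exact edge_succ hg (by omega)
      · exact edge_succ hg (by omega)
    · intro M₁ M₂ h₁ h₂ hne
      rcases classify hg h₁ with rfl | rfl | rfl | rfl <;>
        rcases classify hg h₂ with rfl | rfl | rfl | rfl
      · exact absurd rfl hne
      · exact key _ _ g2 hg2S (g2_mem1 hg) (g2_nmem2 hg)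
      · exact (key _ _ g1 hg1S (g1_mem3 hg) (g1_nmem1 hg)).symm
      · exact key _ _ g2 hg2S (g2_mem1 hg) (g2_nmem4 hg)
      · exact (key _ _ g2 hg2S (g2_mem1 hg) (g2_nmem2 hg)).symm
      · exact absurd rfl hne
      · exact (key _ _ g2 hg2S (g2_mem3 hg) (g2_nmem2 hg)).symm
      · exact key _ _ g1 hg1S (g1_mem2 hg) (g1_nmem4 hg)
      · exact key _ _ g1 hg1S (g1_mem3 hg) (g1_nmem1 hg)
      · exact key _ _ g2 hg2S (g2_mem3 hg) (g2_nmem2 hg)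
      · exact absurd rfl hne
      · exact key _ _ g1 hg1S (g1_mem3 hg) (g1_nmem4 hg)
      · exact (key _ _ g2 hg2S (g2_mem1 hg) (g2_nmem4 hg)).symm
      · exact (key _ _ g1 hg1S (g1_mem2 hg) (g1_nmem4 hg)).symm
      · exact (key _ _ g1 hg1S (g1_mem3 hg) (g1_nmem4 hg)).symm
      · exact absurd rfl hne
  have hcard : S.ncard = 2 := Set.ncard_pair (g1_ne_g2 hg)
  apply le_antisymm
  · exact Nat.sInf_le ⟨S, hGFS, hcard⟩
  · have h2mem : 2 ∈ {n | ∃ S, IsGlobalForcingSet (HH x D) S ∧ S.ncard = n} :=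
      ⟨S, hGFS, hcard⟩
    apply le_csInf ⟨2, h2mem⟩
    rintro k ⟨S', hS', rfl⟩
    by_contra hcon
    push_neg at hcon
    interval_cases hcards : S'.ncard
    · have hempty : S' = ∅ := (Set.ncard_eq_zero (Set.toFinite S')).mp hcards
      apply hS'.2 (MM1 x) (MM2 x) (isPM_MM1 hg) (isPM_MM2 hg) (MM_ne_12 hg)
      rw [hempty, Set.empty_inter, Set.empty_inter]
    · obtain ⟨g, rfl⟩ := Set.ncard_eq_one.mp hcards
      have c12 := hS'.2 (MM1 x) (MM2 x) (isPM_MM1 hg) (isPM_MM2 hg) (MM_ne_12 hg)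
      have c13 := hS'.2 (MM1 x) (MM3 x D) (isPM_MM1 hg) (isPM_MM3 hg) (MM_ne_13 hg)
      have c23 := hS'.2 (MM2 x) (MM3 x D) (isPM_MM2 hg) (isPM_MM3 hg) (MM_ne_23 hg)
      have hc : ∀ A : Set (Sym2 (ZMod m)), g ∈ A → ({g} : Set (Sym2 (ZMod m))) ∩ A = {g} :=
        fun A hA => Set.inter_eq_left.mpr (Set.singleton_subset_iff.mpr hA)
      have hn : ∀ A : Set (Sym2 (ZMod m)), g ∉ A → ({g} : Set (Sym2 (ZMod m))) ∩ A = ∅ :=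
        fun A hA => Set.singleton_inter_eq_empty.mpr hA
      by_cases h1 : g ∈ MM1 x <;> by_cases h2 : g ∈ MM2 x <;> by_cases h3 : g ∈ MM3 x D
      · exact c12 (by rw [hc _ h1, hc _ h2])
      · exact c12 (by rw [hc _ h1, hc _ h2])
      · exact c13 (by rw [hc _ h1, hc _ h3])
      · exact c23 (by rw [hn _ h2, hn _ h3])
      · exact c23 (by rw [hc _ h2, hc _ h3])
      · exact c13 (by rw [hn _ h1, hn _ h3])
      · exact c12 (by rw [hn _ h1, hn _ h2])
      · exact c12 (by rw [hn _ h1, hn _ h2])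

lemma af_generic (Mi : Set (Sym2 (ZMod m))) (hMi : IsPM (HH x D) Mi)
    (gA gB : Sym2 (ZMod m)) (hAB : gA ≠ gB)
    (hAe : gA ∈ (HH x D).edgeSet) (hBe : gB ∈ (HH x D).edgeSet)
    (hAn : gA ∉ Mi) (hBn : gB ∉ Mi)
    (Mo : Set (Sym2 (ZMod m)) → Prop)
    (hclass : ∀ M, IsPM (HH x D) M → M = Mi ∨ Mo M)
    (hkill : ∀ M, Mo M → gA ∈ M ∨ gB ∈ M)
    (P1 P2 : Set (Sym2 (ZMod m))) (h1o : Mo P1) (h2o : Mo P2)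
    (h1pm : IsPM (HH x D) P1) (h2pm : IsPM (HH x D) P2)
    (h1ne : P1 ≠ Mi) (h2ne : P2 ≠ Mi) (h12d : P1 ∩ P2 = ∅) :
    af (HH x D) Mi = 2 := by
  have hm6 := hg.1
  haveI : NeZero m := ⟨by omega⟩
  set S : Set (Sym2 (ZMod m)) := {gA, gB} with hSdef
  have hdisj : S ∩ Mi = ∅ := by
    ext g
    simp only [Set.mem_inter_iff, Set.mem_insert_iff, Set.mem_singleton_iff,
      Set.mem_empty_iff_false, iff_false, not_and]
    rintro (rfl | rfl)
    · exact hAn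
    · exact hBn
  have hAFS : IsAntiForcingSet (HH x D) Mi S := by
    refine ⟨?_, hdisj, isPM_deleteEdges_of hMi hdisj, ?_⟩
    · intro g hgS
      rcases hgS with rfl | rfl
      · exact hAe
      · exact hBe
    · intro M' hM'
      have hM'' := isPM_of_deleteEdges hM'
      have hd := disj_of_isPM_deleteEdges hM'
      rcases hclass M' hM'' with rfl | ho
      · rfl
      · exfalso
        rcases hkill M' ho with hgm | hgm
        · have : gA ∈ M' ∩ S := ⟨hgm, Set.mem_insert _ _⟩
          rw [hd] at this
          exact this
        · have : gB ∈ M' ∩ S := ⟨hgm, Set.mem_insert_of_mem _ rfl⟩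
          rw [hd] at this
          exact this
  have hcard : S.ncard = 2 := Set.ncard_pair hAB
  apply le_antisymm
  · exact Nat.sInf_le ⟨S, hAFS, hcard⟩
  · have h2mem : 2 ∈ {n | ∃ S, IsAntiForcingSet (HH x D) Mi S ∧ S.ncard = n} :=
      ⟨S, hAFS, hcard⟩
    apply le_csInf ⟨2, h2mem⟩
    rintro k ⟨S', hS', rfl⟩
    by_contra hcon
    push_neg at hcon
    interval_cases hcards : S'.ncard
    · have hempty : S' = ∅ := (Set.ncard_eq_zero (Set.toFinite S')).mp hcards
      have := hS'.2.2.2 P1 (by rw [hempty, SimpleGraph.deleteEdges_empty]; exact h1pm)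
      exact h1ne this
    · obtain ⟨g, rfl⟩ := Set.ncard_eq_one.mp hcards
      have hkill1 : ∀ Mj, IsPM (HH x D) Mj → Mj ≠ Mi → g ∈ Mj := by
        intro Mj hMj hne
        by_contra hng
        have hdj : ({g} : Set (Sym2 (ZMod m))) ∩ Mj = ∅ := Set.singleton_inter_eq_empty.mpr hng
        exact hne (hS'.2.2.2 Mj (isPM_deleteEdges_of hMj hdj))
      have hp1 := hkill1 P1 h1pm h1ne
      have hp2 := hkill1 P2 h2pm h2ne
      have : g ∈ P1 ∩ P2 := ⟨hp1, hp2⟩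
      rw [h12d] at this
      exact this

lemma af_MM1 : af (HH x D) (MM1 x) = 2 := by
  have hD2 := hg.2.2.1
  refine af_generic hg (MM1 x) (isPM_MM1 hg) (s(pp x 1, pp x 2)) (s(pp x (D+1), pp x (D+2)))
    ?_ (edge_succ hg (by omega)) (edge_succ hg (by omega)) (g1_nmem1 hg) (h2_nmem1 hg)
    (fun M => M = MM2 x ∨ M = MM3 x D ∨ M = MM4 x D)
    (fun M hM => by rcases classify hg hM with h | h | h | h <;> tauto)
    (fun M hM => by
      rcases hM with rfl | rfl | rfl
      · exact Or.inl (g1_mem2 hg)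
      · exact Or.inl (g1_mem3 hg)
      · exact Or.inr (h2_mem4 hg))
    (MM3 x D) (MM4 x D) (by tauto) (by tauto) (isPM_MM3 hg) (isPM_MM4 hg)
    (fun h => MM_ne_13 hg h.symm) (fun h => MM_ne_14 hg h.symm) (MM34_disj hg)
  · obtain ⟨hm6, hme, hD2, hDm, hDe⟩ := hg
    rw [Ne, sym2pp (by omega) x (by omega) (by omega) (by omega) (by omega)]
    omega

lemma af_MM2 : af (HH x D) (MM2 x) = 2 := by
  have hD2 := hg.2.2.1
  refine af_generic hg (MM2 x) (isPM_MM2 hg) (s(pp x 0, pp x 1)) (s(pp x (D+2), pp x (D+3)))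
    ?_ (edge_succ hg (by omega)) (edge_succ hg (by omega)) (E01_nmem2 hg) (g2_nmem2 hg)
    (fun M => M = MM1 x ∨ M = MM3 x D ∨ M = MM4 x D)
    (fun M hM => by rcases classify hg hM with h | h | h | h <;> tauto)
    (fun M hM => by
      rcases hM with rfl | rfl | rfl
      · exact Or.inl (E01_mem1 hg)
      · exact Or.inr (g2_mem3 hg)
      · exact Or.inl (E01_mem4 hg))
    (MM3 x D) (MM4 x D) (by tauto) (by tauto) (isPM_MM3 hg) (isPM_MM4 hg)
    (fun h => MM_ne_23 hg h.symm) (fun h => MM_ne_24 hg h.symm) (MM34_disj hg)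
  · obtain ⟨hm6, hme, hD2, hDm, hDe⟩ := hg
    rw [Ne, sym2pp (by omega) x (by omega) (by omega) (by omega) (by omega)]
    omega

lemma af_MM3 : af (HH x D) (MM3 x D) = 2 := by
  have hD2 := hg.2.2.1
  refine af_generic hg (MM3 x D) (isPM_MM3 hg) (s(pp x 0, pp x 1)) (s(pp x (D+1), pp x (D+2)))
    ?_ (edge_succ hg (by omega)) (edge_succ hg (by omega)) (E01_nmem3 hg) (h2_nmem3 hg)
    (fun M => M = MM1 x ∨ M = MM2 x ∨ M = MM4 x D)
    (fun M hM => by rcases classify hg hM with h | h | h | h <;> tauto)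
    (fun M hM => by
      rcases hM with rfl | rfl | rfl
      · exact Or.inl (E01_mem1 hg)
      · exact Or.inr (h2_mem2 hg)
      · exact Or.inl (E01_mem4 hg))
    (MM1 x) (MM2 x) (by tauto) (by tauto) (isPM_MM1 hg) (isPM_MM2 hg)
    (MM_ne_13 hg) (MM_ne_23 hg) (MM12_disj hg)
  · obtain ⟨hm6, hme, hD2, hDm, hDe⟩ := hg
    rw [Ne, sym2pp (by omega) x (by omega) (by omega) (by omega) (by omega)]
    omega

lemma af_MM4 : af (HH x D) (MM4 x D) = 2 := by
  refine af_generic hg (MM4 x D) (isPM_MM4 hg) (s(pp x 1, pp x 2)) (s(pp x (D+2), pp x (D+3)))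
    (g1_ne_g2 hg) (edge_succ hg (by omega)) (edge_succ hg (by omega)) (g1_nmem4 hg)
    (g2_nmem4 hg)
    (fun M => M = MM1 x ∨ M = MM2 x ∨ M = MM3 x D)
    (fun M hM => by rcases classify hg hM with h | h | h | h <;> tauto)
    (fun M hM => by
      rcases hM with rfl | rfl | rfl
      · exact Or.inr (g2_mem1 hg)
      · exact Or.inl (g1_mem2 hg)
      · exact Or.inl (g1_mem3 hg))
    (MM1 x) (MM2 x) (by tauto) (by tauto) (isPM_MM1 hg) (isPM_MM2 hg)
    (MM_ne_14 hg) (MM_ne_24 hg) (MM12_disj hg)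

theorem Af_HH : Af (HH x D) = 2 := by
  have hall : ∀ M, IsPM (HH x D) M → af (HH x D) M = 2 := by
    intro M hM
    rcases classify hg hM with rfl | rfl | rfl | rfl
    exacts [af_MM1 hg, af_MM2 hg, af_MM3 hg, af_MM4 hg]
  have hset : {n | ∃ M, IsPM (HH x D) M ∧ af (HH x D) M = n} = {2} := by
    ext n
    simp only [Set.mem_setOf_eq, Set.mem_singleton_iff]
    constructor
    · rintro ⟨M, hM, rfl⟩
      exact hall M hM
    · rintro rfl
      exact ⟨MM1 x, isPM_MM1 hg, hall _ (isPM_MM1 hg)⟩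
  show sSup _ = 2
  rw [hset, csSup_singleton]

end Counting

end Core


end Aux

/-- Let `G` be a bipartite graph consisting of a Hamiltonian cycle of even length
together with exactly two chords, which are strongly crossed. Then
`gf(G) = Af(G) = 2`, while `c(G) = 3`. -/
theorem statement_17 {V : Type*} [Fintype V] (G : SimpleGraph V) (n : ℕ)
    (hn : 2 ≤ n) (e f : Sym2 (ZMod (2 * n))) (hef : e ≠ f)
    (he : IsChordOf (2 * n) e) (hf : IsChordOf (2 * n) f)
    (hsc : StronglyCrossedChords (2 * n) e f)
    (hbip : G.Colorable 2)
    (hiso : Nonempty (G ≃g cycleWithChords (2 * n) {e, f})) :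
    gf G = 2 ∧ Af G = 2 ∧ G.edgeSet.ncard + 1 - Fintype.card V = 3 := by
  obtain ⟨σ⟩ := hiso
  haveI : NeZero (2 * n) := ⟨by omega⟩
  haveI : Fact (1 < 2 * n) := ⟨by omega⟩
  obtain ⟨x₁, x₂, y₁, y₂, he', hf', hcol, hord, ha1, ha2⟩ := hsc
  set D := (y₁ - x₁).val with hDdef
  obtain ⟨hord1, hord2, hord3⟩ := hord
  have hDlt : D < 2 * n := ZMod.val_lt _
  have hd : (y₁ - x₁) = ((D : ℕ) : ZMod (2 * n)) := (ZMod.natCast_zmod_val _).symm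
  -- y₂ = x₁ - 1
  have hy2 : y₂ = Core.pp x₁ (2 * n - 1) := by
    rcases ha1.2 with h | h
    · exfalso
      have hv : (y₂ - x₁).val = 1 := by rw [h]; exact ZMod.val_one _
      omega
    · have hx : y₂ = x₁ - 1 := by linear_combination -h
      have h0 : x₁ - 1 = Core.pp x₁ (0 + (2 * n - 1)) := by
        rw [← Core.psub1 (by omega) x₁ 0, Core.pp_zero]
      rw [hx, h0, show 0 + (2 * n - 1) = 2 * n - 1 by omega]
  have hvy2 : (y₂ - x₁).val = 2 * n - 1 := by
    rw [hy2]
    show (Core.pp x₁ (2 * n - 1) - x₁).val = 2 * n - 1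
    unfold Core.pp
    rw [add_sub_cancel_left, ZMod.val_cast_of_lt (by omega)]
  -- x₂ = y₁ + 1
  have hx2 : x₂ = y₁ + 1 := by
    rcases ha2.2 with h | h
    · exfalso
      have hx2v : x₂ = y₁ - 1 := by linear_combination -h
      have hsub : x₂ - x₁ = ((D - 1 : ℕ) : ZMod (2 * n)) := by
        rw [Nat.cast_sub (by omega), Nat.cast_one, hx2v, ← hd]
        ring
      have hv : (x₂ - x₁).val = D - 1 := by
        rw [hsub, ZMod.val_cast_of_lt (by omega)]
      omega
    · linear_combination h
  have hx2x1 : x₂ - x₁ = ((D + 1 : ℕ) : ZMod (2 * n)) := by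
    rw [hx2]
    push_cast
    linear_combination hd
  have hvx2 : (x₂ - x₁).val = (D + 1) % (2 * n) := by rw [hx2x1, ZMod.val_natCast]
  have hD1 : D + 1 < 2 * n ∧ (x₂ - x₁).val = D + 1 := by
    rcases Nat.lt_or_ge (D + 1) (2 * n) with h | h
    · rw [Nat.mod_eq_of_lt h] at hvx2
      exact ⟨h, hvx2⟩
    · exfalso
      have hEq : D + 1 = 2 * n := by omega
      rw [hEq, Nat.mod_self] at hvx2
      omega
  have hDm3 : D + 1 < 2 * n - 1 := by omega
  -- parity of D
  have hpar : D % 2 = 0 := by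
    have hval : y₁.val = (x₁.val + D) % (2 * n) := by
      have hy : y₁ = x₁ + (y₁ - x₁) := by ring
      rw [hy, ZMod.val_add]
    have hc : x₁.val % 2 = 0 ↔ y₁.val % 2 = 0 := hcol
    have hx1 : x₁.val < 2 * n := ZMod.val_lt _
    rcases Nat.lt_or_ge (x₁.val + D) (2 * n) with h | h
    · rw [Nat.mod_eq_of_lt h] at hval
      omega
    · rw [Nat.mod_eq_sub_mod h, Nat.mod_eq_of_lt (by omega)] at hval
      omega
  have hGood : Core.Good (2 * n) D := ⟨by omega, by omega, by omega, by omega, hpar⟩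
  -- identify the chords
  have hx2p : x₂ = Core.pp x₁ (D + 1) := by
    show x₂ = x₁ + ((D + 1 : ℕ) : ZMod (2 * n))
    linear_combination hx2x1
  have hy1p : y₁ = Core.pp x₁ D := by
    show y₁ = x₁ + ((D : ℕ) : ZMod (2 * n))
    linear_combination hd
  have hEeq : e = Core.E0 x₁ D := by
    rw [he']
    show s(x₁, x₂) = s(Core.pp x₁ 0, Core.pp x₁ (D + 1))
    rw [Core.pp_zero, ← hx2p]
  have hFeq : f = Core.F0 x₁ D := by
    rw [hf']
    show s(y₁, y₂) = s(Core.pp x₁ D, Core.pp x₁ (2 * n - 1))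
    rw [← hy1p, ← hy2]
  have hHH : cycleWithChords (2 * n) {e, f} = Core.HH x₁ D := by
    rw [hEeq, hFeq]
    rfl
  rw [hHH] at σ
  refine ⟨?_, ?_, ?_⟩
  · rw [gf_map σ, Core.gf_HH hGood]
  · rw [Af_map σ, Core.Af_HH hGood]
  · have hcV : Fintype.card V = 2 * n := by
      rw [Fintype.card_congr σ.toEquiv, ZMod.card]
    have hEc : G.edgeSet.ncard = 2 * n + 2 := by
      rw [edgeSet_ncard_map σ, Core.edges_HH hGood]
    rw [hEc, hcV]
    omega
end
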